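/- arXiv:2004.02268 — 7 statements merged into one kernel-verified Lean document; each statement's English description precedes it below -/
import Mathlib

section
/- Let Γ_1, Γ_2, ... be events in a probability space such that for some constant c > 0 and all N ≥ M ≥ 1, ∑_{m,n=M}^N (P(Γ_m ∩ Γ_n) − P(Γ_m)P(Γ_n)) ≤ c ∑_{n=M}^N P(Γ_n). If ∑_{n=1}^∞ P(Γ_n) = ∞, then almost surely lim_{N→∞} (∑_{n=1}^N 1_{Γ_n}) / (∑_{n=1}^N P(Γ_n)) = 1. -/
open MeasureTheory Filter

section SBCAux

variable {Ω : Type*} [MeasurableSpace Ω] (μ : Measure Ω) [IsProbabilityMeasure μ]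

lemma sbc_prod_int {s t : Set Ω} (hs : MeasurableSet s) (ht : MeasurableSet t) :
    Integrable (fun ω => (s.indicator (fun _ => (1:ℝ)) ω - (μ s).toReal) *
      (t.indicator (fun _ => (1:ℝ)) ω - (μ t).toReal)) μ ∧
    ∫ ω, (s.indicator (fun _ => (1:ℝ)) ω - (μ s).toReal) *
      (t.indicator (fun _ => (1:ℝ)) ω - (μ t).toReal) ∂μ
      = (μ (s ∩ t)).toReal - (μ s).toReal * (μ t).toReal := by
  set a := (μ s).toReal with ha
  set b := (μ t).toReal with hb
  have h1 : Integrable (s.indicator (fun _ => (1:ℝ))) μ := (integrable_const 1).indicator hs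
  have h2 : Integrable (t.indicator (fun _ => (1:ℝ))) μ := (integrable_const 1).indicator ht
  have h12 : Integrable ((s ∩ t).indicator (fun _ => (1:ℝ))) μ :=
    (integrable_const 1).indicator (hs.inter ht)
  have heq : (fun ω => (s.indicator (fun _ => (1:ℝ)) ω - a) * (t.indicator (fun _ => (1:ℝ)) ω - b))
      = fun ω => ((s ∩ t).indicator (fun _ => (1:ℝ)) ω - b * s.indicator (fun _ => (1:ℝ)) ω
        - a * t.indicator (fun _ => (1:ℝ)) ω) + a * b := by
    funext ω
    have h : (s ∩ t).indicator (fun _ => (1:ℝ)) ω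
        = s.indicator (fun _ => (1:ℝ)) ω * t.indicator (fun _ => (1:ℝ)) ω := by
      simpa using Set.inter_indicator_mul (fun _ => (1:ℝ)) (fun _ => (1:ℝ)) ω
    rw [h]; ring
  have hind : ∀ (u : Set Ω), MeasurableSet u →
      ∫ ω, u.indicator (fun _ => (1:ℝ)) ω ∂μ = (μ u).toReal := fun u hu =>
    integral_indicator_one hu
  have hiA : Integrable (fun ω => b * s.indicator (fun _ => (1:ℝ)) ω) μ := h1.const_mul b
  have hiB : Integrable (fun ω => a * t.indicator (fun _ => (1:ℝ)) ω) μ := h2.const_mul a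
  have hiC : Integrable (fun ω => (s ∩ t).indicator (fun _ => (1:ℝ)) ω
      - b * s.indicator (fun _ => (1:ℝ)) ω) μ := h12.sub hiA
  have hiD : Integrable (fun ω => (s ∩ t).indicator (fun _ => (1:ℝ)) ω
      - b * s.indicator (fun _ => (1:ℝ)) ω - a * t.indicator (fun _ => (1:ℝ)) ω) μ := hiC.sub hiB
  constructor
  · rw [heq]
    exact hiD.add (integrable_const _)
  · rw [heq, integral_add hiD (integrable_const _),
      integral_sub hiC hiB,
      integral_sub h12 hiA, integral_const_mul, integral_const_mul,
      hind _ (hs.inter ht), hind _ hs, hind _ ht, integral_const]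
    simp only [measure_univ, probReal_univ, ENNReal.toReal_one, smul_eq_mul, one_mul, ← ha, ← hb]
    ring

lemma sbc_var (Γ : ℕ → Set Ω) (hΓ : ∀ n, MeasurableSet (Γ n)) (N : ℕ) :
    Integrable (fun ω => (∑ n ∈ Finset.Icc 1 N,
      ((Γ n).indicator (fun _ => (1:ℝ)) ω - (μ (Γ n)).toReal))^2) μ ∧
    ∫ ω, (∑ n ∈ Finset.Icc 1 N,
      ((Γ n).indicator (fun _ => (1:ℝ)) ω - (μ (Γ n)).toReal))^2 ∂μ
      = ∑ m ∈ Finset.Icc 1 N, ∑ n ∈ Finset.Icc 1 N,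
        ((μ (Γ m ∩ Γ n)).toReal - (μ (Γ m)).toReal * (μ (Γ n)).toReal) := by
  have hsq : (fun ω => (∑ n ∈ Finset.Icc 1 N,
      ((Γ n).indicator (fun _ => (1:ℝ)) ω - (μ (Γ n)).toReal))^2)
      = fun ω => ∑ m ∈ Finset.Icc 1 N, ∑ n ∈ Finset.Icc 1 N,
        ((Γ m).indicator (fun _ => (1:ℝ)) ω - (μ (Γ m)).toReal) *
        ((Γ n).indicator (fun _ => (1:ℝ)) ω - (μ (Γ n)).toReal) := by
    funext ω
    rw [sq, Finset.sum_mul_sum]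
  rw [hsq]
  constructor
  · exact integrable_finset_sum _ fun m _ => integrable_finset_sum _ fun n _ =>
      (sbc_prod_int μ (hΓ m) (hΓ n)).1
  · rw [integral_finset_sum _ fun m _ => integrable_finset_sum _ fun n _ =>
      (sbc_prod_int μ (hΓ m) (hΓ n)).1]
    refine Finset.sum_congr rfl fun m _ => ?_
    rw [integral_finset_sum _ fun n _ => (sbc_prod_int μ (hΓ m) (hΓ n)).1]
    exact Finset.sum_congr rfl fun n _ => (sbc_prod_int μ (hΓ m) (hΓ n)).2

end SBCAux

/-- the Schmidt–Philipp–Spitzer strong Borel–Cantelli lemma. -/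
theorem stmt2 {Ω : Type*} [MeasurableSpace Ω] (μ : Measure Ω) [IsProbabilityMeasure μ]
    (Γ : ℕ → Set Ω) (hΓ : ∀ n, MeasurableSet (Γ n))
    (c : ℝ) (hc : 0 < c)
    (hquasi : ∀ M N : ℕ, 1 ≤ M → M ≤ N →
      ∑ m ∈ Finset.Icc M N, ∑ n ∈ Finset.Icc M N,
        ((μ (Γ m ∩ Γ n)).toReal - (μ (Γ m)).toReal * (μ (Γ n)).toReal)
      ≤ c * ∑ n ∈ Finset.Icc M N, (μ (Γ n)).toReal)
    (hdiv : Tendsto (fun N : ℕ => ∑ n ∈ Finset.Icc 1 N, (μ (Γ n)).toReal) atTop atTop) :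
    ∀ᵐ ω ∂μ, Tendsto (fun N : ℕ =>
      (∑ n ∈ Finset.Icc 1 N, (Γ n).indicator (fun _ => (1 : ℝ)) ω) /
      (∑ n ∈ Finset.Icc 1 N, (μ (Γ n)).toReal)) atTop (nhds 1) := by
  classical
  obtain ⟨S, hS⟩ : ∃ S : ℕ → Ω → ℝ,
      S = fun N ω => ∑ n ∈ Finset.Icc 1 N, (Γ n).indicator (fun _ => (1:ℝ)) ω := ⟨_, rfl⟩
  obtain ⟨E, hE⟩ : ∃ E : ℕ → ℝ,
      E = fun N => ∑ n ∈ Finset.Icc 1 N, (μ (Γ n)).toReal := ⟨_, rfl⟩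
  -- basic facts
  have hf0 : ∀ n, (0:ℝ) ≤ (μ (Γ n)).toReal := fun n => ENNReal.toReal_nonneg
  have hf1 : ∀ n, (μ (Γ n)).toReal ≤ 1 := by
    intro n
    have := ENNReal.toReal_mono (by simp) (prob_le_one (μ := μ) (s := Γ n))
    simpa using this
  have hEmono : Monotone E := by
    intro i j hij
    rw [hE]
    exact Finset.sum_le_sum_of_subset_of_nonneg
      (Finset.Icc_subset_Icc_right hij) (fun n _ _ => hf0 n)
  have hE0 : E 0 = 0 := by simp [hE]
  have hSnn : ∀ N ω, 0 ≤ S N ω := by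
    intro N ω
    rw [hS]
    exact Finset.sum_nonneg fun n _ =>
      Set.indicator_nonneg (fun _ _ => zero_le_one) ω
  have hSmono : ∀ ω, Monotone fun N => S N ω := by
    intro ω i j hij
    simp only [hS]
    exact Finset.sum_le_sum_of_subset_of_nonneg (Finset.Icc_subset_Icc_right hij)
      (fun n _ _ => Set.indicator_nonneg (fun _ _ => zero_le_one) ω)
  have hSmeas : ∀ N, Measurable (S N) := by
    intro N
    rw [hS]
    exact Finset.measurable_sum _ fun n _ => measurable_const.indicator (hΓ n)
  -- variance bound
  have hkey : ∀ N, (fun ω => (S N ω - E N)^2) = fun ω => (∑ n ∈ Finset.Icc 1 N,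
      ((Γ n).indicator (fun _ => (1:ℝ)) ω - (μ (Γ n)).toReal))^2 := by
    intro N
    funext ω
    rw [hS, hE, Finset.sum_sub_distrib]
  have hvint : ∀ N, Integrable (fun ω => (S N ω - E N)^2) μ := by
    intro N
    rw [hkey N]
    exact (sbc_var μ Γ hΓ N).1
  have hvar : ∀ N, 1 ≤ N → ∫ ω, (S N ω - E N)^2 ∂μ ≤ c * E N := by
    intro N hN
    rw [hkey N, (sbc_var μ Γ hΓ N).2, hE]
    exact hquasi 1 N le_rfl hN
  -- the subsequence
  have hdiv' : Tendsto E atTop atTop := by rw [hE]; exact hdiv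
  have hex : ∀ k : ℕ, ∃ n, ((k:ℝ))^2 ≤ E n := fun k =>
    (hdiv'.eventually_ge_atTop ((k:ℝ)^2)).exists
  set T : ℕ → ℕ := fun k => Nat.find (hex k) with hT
  have hTE : ∀ k : ℕ, ((k:ℝ))^2 ≤ E (T k) := fun k => Nat.find_spec (hex k)
  have hTmin : ∀ k m, m < T k → E m < (k:ℝ)^2 := fun k m hm =>
    lt_of_not_ge (Nat.find_min (hex k) hm)
  have hTmono : Monotone T := by
    intro i j hij
    refine Nat.find_min' (hex i) (le_trans ?_ (hTE j))
    have : (i:ℝ) ≤ (j:ℝ) := by exact_mod_cast hij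
    nlinarith [Nat.cast_nonneg (α := ℝ) i]
  have hTpos : ∀ k, 1 ≤ k → 1 ≤ T k := by
    intro k hk
    by_contra h
    have hT0 : T k = 0 := by omega
    have := hTE k
    rw [hT0, hE0] at this
    have hk1 : (1:ℝ) ≤ (k:ℝ) := by exact_mod_cast hk
    nlinarith
  have hEleN : ∀ N : ℕ, E N ≤ N := by
    intro N
    rw [hE]
    calc ∑ n ∈ Finset.Icc 1 N, (μ (Γ n)).toReal ≤ ∑ n ∈ Finset.Icc 1 N, (1:ℝ) :=
          Finset.sum_le_sum fun n _ => hf1 n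
      _ = N := by simp
  have hTk2 : ∀ k, k^2 ≤ T k := by
    intro k
    have h1 : ((k:ℝ))^2 ≤ (T k : ℝ) := le_trans (hTE k) (hEleN (T k))
    exact_mod_cast h1
  have hEub : ∀ k, 1 ≤ k → E (T k) ≤ (k:ℝ)^2 + 1 := by
    intro k hk
    obtain ⟨m, hm⟩ : ∃ m, T k = m + 1 := ⟨T k - 1, by have := hTpos k hk; omega⟩
    have hstep : E (m + 1) = E m + (μ (Γ (m+1))).toReal := by
      rw [hE]
      exact Finset.sum_Icc_succ_top (by omega) _
    have hlt : E m < (k:ℝ)^2 := hTmin k m (by omega)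
    rw [hm, hstep]
    have := hf1 (m+1)
    linarith
  have hETpos : ∀ k, 1 ≤ k → 0 < E (T k) := by
    intro k hk
    have hk1 : (1:ℝ) ≤ (k:ℝ) := by exact_mod_cast hk
    nlinarith [hTE k]
  -- summable lintegral bound
  have hmeasg : ∀ k : ℕ, Measurable (fun ω =>
      ENNReal.ofReal ((S (T (k+1)) ω - E (T (k+1)))^2 / (E (T (k+1)))^2)) := fun k =>
    ENNReal.measurable_ofReal.comp ((((hSmeas _).sub measurable_const).pow_const 2).div_const _)
  have hint2 : ∀ k : ℕ, ∫⁻ ω, ENNReal.ofReal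
      ((S (T (k+1)) ω - E (T (k+1)))^2 / (E (T (k+1)))^2) ∂μ
      ≤ ENNReal.ofReal (c / ((k:ℝ)+1)^2) := by
    intro k
    have hN1 : 1 ≤ T (k+1) := hTpos _ (by omega)
    have hEpos : 0 < E (T (k+1)) := hETpos (k+1) (by omega)
    rw [← ofReal_integral_eq_lintegral_ofReal ((hvint (T (k+1))).div_const _)
      (Eventually.of_forall fun ω => by positivity)]
    apply ENNReal.ofReal_le_ofReal
    rw [integral_div]
    have h1 : ∫ ω, (S (T (k+1)) ω - E (T (k+1)))^2 ∂μ ≤ c * E (T (k+1)) :=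
      hvar _ hN1
    have h2 : ((k:ℝ)+1)^2 ≤ E (T (k+1)) := by
      have := hTE (k+1); push_cast at this; linarith
    calc (∫ ω, (S (T (k+1)) ω - E (T (k+1)))^2 ∂μ) / (E (T (k+1)))^2
        ≤ (c * E (T (k+1))) / (E (T (k+1)))^2 := by gcongr
      _ = c / E (T (k+1)) := by field_simp
      _ ≤ c / ((k:ℝ)+1)^2 := by gcongr
  have hsum : Summable (fun k : ℕ => c / ((k:ℝ)+1)^2) := by
    have h0 : Summable (fun n : ℕ => c / ((n:ℝ))^2) := by
      have := (Real.summable_one_div_nat_pow (p := 2)).mpr one_lt_two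
      exact (this.mul_left c).congr fun n => by rw [mul_one_div]
    exact ((summable_nat_add_iff 1).mpr h0).congr fun n => by push_cast; ring_nf
  have htop : ∑' k : ℕ, ∫⁻ ω, ENNReal.ofReal
      ((S (T (k+1)) ω - E (T (k+1)))^2 / (E (T (k+1)))^2) ∂μ ≠ ⊤ := by
    refine ne_top_of_le_ne_top ?_ (ENNReal.tsum_le_tsum hint2)
    rw [← ENNReal.ofReal_tsum_of_nonneg (fun n => by positivity) hsum]
    exact ENNReal.ofReal_ne_top
  have hae : ∀ᵐ ω ∂μ, ∑' k : ℕ, ENNReal.ofReal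
      ((S (T (k+1)) ω - E (T (k+1)))^2 / (E (T (k+1)))^2) < ⊤ := by
    refine ae_lt_top (Measurable.ennreal_tsum hmeasg) ?_
    rw [lintegral_tsum fun k => (hmeasg k).aemeasurable]
    exact htop
  -- b-ratio limit
  have hub' : Tendsto (fun k : ℕ => (((k:ℝ)+1)^2 + 1) / (k:ℝ)^2) atTop (nhds 1) := by
    have h1 : Tendsto (fun k : ℕ => 2/(k:ℝ)) atTop (nhds 0) :=
      tendsto_const_div_atTop_nhds_zero_nat 2
    have h2 : Tendsto (fun k : ℕ => 2/(k:ℝ)^2) atTop (nhds 0) := by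
      refine tendsto_of_tendsto_of_tendsto_of_le_of_le' tendsto_const_nhds h1 ?_ ?_
      · exact Eventually.of_forall fun k => by positivity
      · filter_upwards [eventually_ge_atTop 1] with k hk
        have hk1 : (1:ℝ) ≤ (k:ℝ) := by exact_mod_cast hk
        rw [div_le_div_iff₀ (by positivity) (by positivity)]
        nlinarith
    have hlim : Tendsto (fun k : ℕ => 1 + 2/(k:ℝ) + 2/(k:ℝ)^2) atTop (nhds 1) := by
      have := (tendsto_const_nhds (x := (1:ℝ)) (f := atTop (α := ℕ))).add h1 |>.add h2
      simpa using this
    refine hlim.congr' ?_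
    filter_upwards [eventually_ge_atTop 1] with k hk
    have hk0 : (k:ℝ) ≠ 0 := by positivity
    field_simp
    ring
  have hb : Tendsto (fun k : ℕ => E (T (k+1)) / E (T k)) atTop (nhds 1) := by
    refine tendsto_of_tendsto_of_tendsto_of_le_of_le' tendsto_const_nhds hub' ?_ ?_
    · filter_upwards [eventually_ge_atTop 1] with k hk
      rw [le_div_iff₀ (hETpos k hk), one_mul]
      exact hEmono (hTmono (by omega))
    · filter_upwards [eventually_ge_atTop 1] with k hk
      have h1 : E (T (k+1)) ≤ ((k:ℝ)+1)^2 + 1 := by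
        have := hEub (k+1) (by omega); push_cast at this; linarith
      have hk1 : (1:ℝ) ≤ (k:ℝ) := by exact_mod_cast hk
      refine div_le_div₀ (by positivity) h1 (by nlinarith) (hTE k)
  have hbinv : Tendsto (fun k : ℕ => E (T k) / E (T (k+1))) atTop (nhds 1) := by
    have := hb.inv₀ one_ne_zero
    rw [inv_one] at this
    refine this.congr fun k => ?_
    rw [inv_div]
  -- the index function K
  set K : ℕ → ℕ := fun N => Nat.findGreatest (fun k => T k ≤ N) N with hK
  have hKspec : ∀ N, T 1 ≤ N → T (K N) ≤ N ∧ 1 ≤ K N := by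
    intro N hN
    have h1N : 1 ≤ N := le_trans (hTpos 1 le_rfl) hN
    exact ⟨Nat.findGreatest_spec (P := fun k => T k ≤ N) h1N hN,
      Nat.le_findGreatest h1N hN⟩
  have hKsucc : ∀ N, N < T (K N + 1) := by
    intro N
    by_cases h : K N + 1 ≤ N
    · have h2 : ¬ T (K N + 1) ≤ N :=
        Nat.findGreatest_is_greatest (P := fun k => T k ≤ N) (n := N)
          (k := K N + 1) (by simp only [hK]; omega) h
      omega
    · have h2 := hTk2 (K N + 1)
      nlinarith
  have hKtend : Tendsto K atTop atTop := by
    refine tendsto_atTop_atTop.mpr fun b => ⟨max (T b) b, fun N hN => ?_⟩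
    exact Nat.le_findGreatest (le_trans (le_max_right _ _) hN)
      (le_trans (le_max_left _ _) hN)
  -- conclusion
  filter_upwards [hae] with ω hω
  have h1 : Tendsto (fun k : ℕ => ENNReal.ofReal
      ((S (T (k+1)) ω - E (T (k+1)))^2 / (E (T (k+1)))^2)) atTop (nhds 0) :=
    ENNReal.tendsto_atTop_zero_of_tsum_ne_top hω.ne
  have h2 : Tendsto (fun k : ℕ =>
      (S (T (k+1)) ω - E (T (k+1)))^2 / (E (T (k+1)))^2) atTop (nhds 0) := by
    have h' := (ENNReal.tendsto_toReal (a := (0:ENNReal)) (by simp)).comp h1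
    simp only [ENNReal.toReal_zero] at h'
    refine h'.congr fun k => ?_
    simp only [Function.comp_apply]
    exact ENNReal.toReal_ofReal (by positivity)
  have h3 : Tendsto (fun k : ℕ =>
      |(S (T (k+1)) ω - E (T (k+1))) / E (T (k+1))|) atTop (nhds 0) := by
    have h' := (Real.continuous_sqrt.tendsto 0).comp h2
    rw [Real.sqrt_zero] at h'
    refine h'.congr fun k => ?_
    simp only [Function.comp_apply]
    rw [← div_pow, Real.sqrt_sq_eq_abs]
  have h4 : Tendsto (fun k : ℕ =>
      (S (T (k+1)) ω - E (T (k+1))) / E (T (k+1))) atTop (nhds 0) := by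
    rw [tendsto_zero_iff_abs_tendsto_zero]
    exact h3
  have h5 : Tendsto (fun k : ℕ => S (T (k+1)) ω / E (T (k+1))) atTop (nhds 1) := by
    have h' := h4.add (tendsto_const_nhds (x := (1:ℝ)))
    rw [zero_add] at h'
    refine h'.congr fun k => ?_
    have hEk : E (T (k+1)) ≠ 0 := (hETpos (k+1) (by omega)).ne'
    field_simp
    ring
  have ha : Tendsto (fun k : ℕ => S (T k) ω / E (T k)) atTop (nhds 1) :=
    (tendsto_add_atTop_iff_nat 1).mp h5
  -- low and up sequences
  have hlowk : Tendsto (fun k : ℕ => S (T k) ω / E (T (k+1))) atTop (nhds 1) := by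
    have h' := ha.mul hbinv
    rw [mul_one] at h'
    refine h'.congr' ?_
    filter_upwards [eventually_ge_atTop 1] with k hk
    have hA : E (T k) ≠ 0 := (hETpos k hk).ne'
    have hB : E (T (k+1)) ≠ 0 := (hETpos (k+1) (by omega)).ne'
    field_simp
  have hupk : Tendsto (fun k : ℕ => S (T (k+1)) ω / E (T k)) atTop (nhds 1) := by
    have h' := h5.mul hb
    rw [mul_one] at h'
    refine h'.congr' ?_
    filter_upwards [eventually_ge_atTop 1] with k hk
    have hA : E (T k) ≠ 0 := (hETpos k hk).ne'
    have hB : E (T (k+1)) ≠ 0 := (hETpos (k+1) (by omega)).ne'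
    field_simp
  have hlowN := hlowk.comp hKtend
  have hupN := hupk.comp hKtend
  have hgoal : Tendsto (fun N : ℕ => S N ω / E N) atTop (nhds 1) := by
    refine tendsto_of_tendsto_of_tendsto_of_le_of_le' hlowN hupN ?_ ?_
    · filter_upwards [eventually_ge_atTop (T 1)] with N hN
      obtain ⟨hTK, hK1⟩ := hKspec N hN
      have hEpos : 0 < E N := lt_of_lt_of_le (hETpos (K N) hK1) (hEmono hTK)
      exact div_le_div₀ (hSnn N ω) (hSmono ω hTK) hEpos (hEmono (hKsucc N).le)
    · filter_upwards [eventually_ge_atTop (T 1)] with N hN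
      obtain ⟨hTK, hK1⟩ := hKspec N hN
      have hEpos : 0 < E N := lt_of_lt_of_le (hETpos (K N) hK1) (hEmono hTK)
      exact div_le_div₀ (hSnn _ ω) (hSmono ω (hKsucc N).le) (hETpos (K N) hK1)
        (hEmono hTK)
  simpa only [hS, hE] using hgoal
end

section
/- Let Γ_1, Γ_2, ... be events generating σ-algebras F_{m,n} = σ(Γ_m, ..., Γ_n), and let φ(k) = sup_m φ(F_{1,m}, F_{m+k,∞}) be the φ-mixing coefficient. Let q : ℕ → ℕ satisfy: for every integer k, the number of n with q(n) = k is at most K. If ∑_k φ(k) < ∞, then there is a constant c > 0 (independent of M, N) such that for all N ≥ M ≥ 1, ∑_{m,n=M}^N |P(Γ_{q(m)} ∩ Γ_{q(n)}) − P(Γ_{q(m)})P(Γ_{q(n)})| ≤ c ∑_{n=M}^N P(Γ_{q(n)}). -/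
open MeasureTheory Filter

/-- under summable φ-mixing for the σ-algebras generated by the events,
and a bound `K` on the number of solutions of `q(n) = k`, the pairwise
quasi-independence condition holds along the subsequence `q(n)`. -/
theorem stmt4 {Ω : Type*} [MeasurableSpace Ω] (μ : Measure Ω) [IsProbabilityMeasure μ]
    (Γ : ℕ → Set Ω) (hΓ : ∀ n, MeasurableSet (Γ n))
    (φ : ℕ → ℝ) (hφ : Summable φ)
    (hmix : ∀ (m k : ℕ) (A B : Set Ω),
      MeasurableSet[MeasurableSpace.generateFrom {S | ∃ j : ℕ, 1 ≤ j ∧ j ≤ m ∧ S = Γ j}] A →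
      MeasurableSet[MeasurableSpace.generateFrom {S | ∃ j : ℕ, m + k ≤ j ∧ S = Γ j}] B →
      μ A ≠ 0 →
      |(μ (A ∩ B)).toReal / (μ A).toReal - (μ B).toReal| ≤ φ k)
    (q : ℕ → ℕ) (K : ℕ)
    (hq : ∀ k : ℕ, {n : ℕ | q n = k}.Finite ∧ {n : ℕ | q n = k}.ncard ≤ K) :
    ∃ c : ℝ, 0 < c ∧ ∀ M N : ℕ, 1 ≤ M → M ≤ N →
      ∑ m ∈ Finset.Icc M N, ∑ n ∈ Finset.Icc M N,
        |(μ (Γ (q m) ∩ Γ (q n))).toReal - (μ (Γ (q m))).toReal * (μ (Γ (q n))).toReal|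
      ≤ c * ∑ n ∈ Finset.Icc M N, (μ (Γ (q n))).toReal := by
  classical
  set P : ℕ → ℝ := fun a => (μ (Γ a)).toReal with hP
  have hP0 : ∀ a, 0 ≤ P a := fun a => ENNReal.toReal_nonneg
  have hP1 : ∀ a, P a ≤ 1 := by
    intro a
    have := prob_le_one (μ := μ) (s := Γ a)
    simpa [hP] using ENNReal.toReal_le_of_le_ofReal (by norm_num) (by simpa using this)
  -- φ is nonnegative
  have hφ0 : ∀ k, 0 ≤ φ k := by
    intro k
    have h := hmix 1 k Set.univ Set.univ MeasurableSet.univ MeasurableSet.univ (by simp)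
    simpa using h
  set S : ℝ := ∑' k, φ k with hS
  have hS0 : 0 ≤ S := tsum_nonneg hφ0
  -- trivial bound
  have htriv : ∀ a b, |(μ (Γ a ∩ Γ b)).toReal - P a * P b| ≤ P b := by
    intro a b
    have h1 : (μ (Γ a ∩ Γ b)).toReal ≤ P b := by
      apply ENNReal.toReal_mono (measure_ne_top μ _)
      exact measure_mono Set.inter_subset_right
    have h2 : P a * P b ≤ P b := by
      calc P a * P b ≤ 1 * P b := by
            exact mul_le_mul_of_nonneg_right (hP1 a) (hP0 b)
        _ = P b := one_mul _
    rw [abs_sub_le_iff]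
    constructor
    · linarith [mul_nonneg (hP0 a) (hP0 b)]
    · linarith [ENNReal.toReal_nonneg (a := μ (Γ a ∩ Γ b))]
  -- mixing bound for 1 ≤ a ≤ b
  have hmix' : ∀ a b, 1 ≤ a → a ≤ b →
      |(μ (Γ a ∩ Γ b)).toReal - P a * P b| ≤ φ (b - a) * P a := by
    intro a b ha hab
    by_cases h0 : μ (Γ a) = 0
    · have hI : μ (Γ a ∩ Γ b) = 0 :=
        le_antisymm (le_trans (measure_mono Set.inter_subset_left) h0.le) zero_le
      simp [hP, hI, h0]
    · have mA : MeasurableSet[MeasurableSpace.generateFrom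
          {T | ∃ j : ℕ, 1 ≤ j ∧ j ≤ a ∧ T = Γ j}] (Γ a) :=
        MeasurableSpace.measurableSet_generateFrom ⟨a, ha, le_refl a, rfl⟩
      have mB : MeasurableSet[MeasurableSpace.generateFrom
          {T | ∃ j : ℕ, a + (b - a) ≤ j ∧ T = Γ j}] (Γ b) :=
        MeasurableSpace.measurableSet_generateFrom ⟨b, by omega, rfl⟩
      have h := hmix a (b - a) (Γ a) (Γ b) mA mB h0
      have hPa : 0 < P a := by
        have := ENNReal.toReal_pos h0 (measure_ne_top μ _)
        simpa [hP] using this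
      have key : (μ (Γ a ∩ Γ b)).toReal - P a * P b
          = P a * ((μ (Γ a ∩ Γ b)).toReal / P a - P b) := by
        field_simp
      rw [key, abs_mul, abs_of_pos hPa, mul_comm (φ (b - a)) (P a)]
      exact mul_le_mul_of_nonneg_left h hPa.le
  -- symmetric mixing bound
  have hkey : ∀ a b, 1 ≤ a → 1 ≤ b →
      |(μ (Γ a ∩ Γ b)).toReal - P a * P b| ≤ φ (Nat.dist a b) * (P a + P b) := by
    intro a b ha hb
    rcases le_total a b with hab | hab
    · rw [Nat.dist_eq_sub_of_le hab]
      calc |(μ (Γ a ∩ Γ b)).toReal - P a * P b| ≤ φ (b - a) * P a := hmix' a b ha hab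
        _ ≤ φ (b - a) * (P a + P b) :=
            mul_le_mul_of_nonneg_left (by linarith [hP0 b]) (hφ0 _)
    · rw [Nat.dist_eq_sub_of_le_right hab, Set.inter_comm, mul_comm (P a) (P b)]
      calc |(μ (Γ b ∩ Γ a)).toReal - P b * P a| ≤ φ (a - b) * P b := hmix' b a hb hab
        _ ≤ φ (a - b) * (P a + P b) :=
            mul_le_mul_of_nonneg_left (by linarith [hP0 a]) (hφ0 _)
  -- fiber card bound
  have hfiber : ∀ (s : Finset ℕ) (v : ℕ), (s.filter (fun n => q n = v)).card ≤ K := by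
    intro s v
    have hsub : ((s.filter (fun n => q n = v) : Finset ℕ) : Set ℕ) ⊆ {n | q n = v} := by
      intro x hx
      simp only [Finset.coe_filter, Set.mem_setOf_eq] at hx
      exact hx.2
    calc (s.filter (fun n => q n = v)).card
        = ((s.filter (fun n => q n = v) : Finset ℕ) : Set ℕ).ncard :=
          (Set.ncard_coe_finset _).symm
      _ ≤ {n | q n = v}.ncard := Set.ncard_le_ncard hsub (hq v).1
      _ ≤ K := (hq v).2
  have hfiber2 : ∀ (s : Finset ℕ) (a k : ℕ),
      (s.filter (fun n => Nat.dist a (q n) = k)).card ≤ 2 * K := by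
    intro s a k
    have hsub : s.filter (fun n => Nat.dist a (q n) = k)
        ⊆ s.filter (fun n => q n = a + k) ∪ s.filter (fun n => q n = a - k) := by
      intro x hx
      rcases Finset.mem_filter.mp hx with ⟨hxs, hd⟩
      rcases le_total a (q x) with h | h
      · rw [Nat.dist_eq_sub_of_le h] at hd
        exact Finset.mem_union_left _ (Finset.mem_filter.mpr ⟨hxs, by omega⟩)
      · rw [Nat.dist_eq_sub_of_le_right h] at hd
        exact Finset.mem_union_right _ (Finset.mem_filter.mpr ⟨hxs, by omega⟩)
    calc (s.filter (fun n => Nat.dist a (q n) = k)).card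
        ≤ (s.filter (fun n => q n = a + k) ∪ s.filter (fun n => q n = a - k)).card :=
          Finset.card_le_card hsub
      _ ≤ (s.filter (fun n => q n = a + k)).card + (s.filter (fun n => q n = a - k)).card :=
          Finset.card_union_le _ _
      _ ≤ K + K := add_le_add (hfiber _ _) (hfiber _ _)
      _ = 2 * K := by ring
  -- sum of φ over a row
  have hrow : ∀ (s : Finset ℕ) (a : ℕ), ∑ n ∈ s, φ (Nat.dist a (q n)) ≤ 2 * K * S := by
    intro s a
    set g : ℕ → ℕ := fun n => Nat.dist a (q n) with hg
    have hmap : ∀ x ∈ s, g x ∈ s.image g := fun x hx => Finset.mem_image_of_mem g hx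
    rw [← Finset.sum_fiberwise_of_maps_to hmap (fun n => φ (g n))]
    have step1 : ∀ k ∈ s.image g,
        ∑ n ∈ s.filter (fun n => g n = k), φ (g n) ≤ (2 * K : ℝ) * φ k := by
      intro k _
      have : ∑ n ∈ s.filter (fun n => g n = k), φ (g n)
          = ∑ n ∈ s.filter (fun n => g n = k), φ k := by
        apply Finset.sum_congr rfl
        intro x hx
        rw [(Finset.mem_filter.mp hx).2]
      rw [this, Finset.sum_const, nsmul_eq_mul]
      apply mul_le_mul_of_nonneg_right _ (hφ0 k)
      exact_mod_cast hfiber2 s a k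
    calc ∑ k ∈ s.image g, ∑ n ∈ s.filter (fun n => g n = k), φ (g n)
        ≤ ∑ k ∈ s.image g, (2 * K : ℝ) * φ k := Finset.sum_le_sum step1
      _ = 2 * K * ∑ k ∈ s.image g, φ k := by rw [Finset.mul_sum]
      _ ≤ 2 * K * S := by
          apply mul_le_mul_of_nonneg_left _ (by positivity)
          exact Summable.sum_le_tsum _ (fun k _ => hφ0 k) hφ
  refine ⟨4 * K * S + 2 * K + 1, by positivity, ?_⟩
  intro M N hM hMN
  set I := Finset.Icc M N with hI
  -- pointwise bound
  have hpt : ∀ m ∈ I, ∀ n ∈ I,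
      |(μ (Γ (q m) ∩ Γ (q n))).toReal - P (q m) * P (q n)|
      ≤ φ (Nat.dist (q m) (q n)) * (P (q m) + P (q n))
        + ((if q m = 0 then P (q n) else 0) + (if q n = 0 then P (q m) else 0)) := by
    intro m _ n _
    by_cases hm0 : q m = 0
    · have h := htriv (q m) (q n)
      have h1 : 0 ≤ φ (Nat.dist (q m) (q n)) * (P (q m) + P (q n)) :=
        mul_nonneg (hφ0 _) (by linarith [hP0 (q m), hP0 (q n)])
      have h2 : (0:ℝ) ≤ if q n = 0 then P (q m) else 0 := by
        split <;> simp [hP0]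
      rw [if_pos hm0]
      linarith
    · by_cases hn0 : q n = 0
      · have h : |(μ (Γ (q m) ∩ Γ (q n))).toReal - P (q m) * P (q n)| ≤ P (q m) := by
          rw [Set.inter_comm, mul_comm]
          exact htriv (q n) (q m)
        have h1 : 0 ≤ φ (Nat.dist (q m) (q n)) * (P (q m) + P (q n)) :=
          mul_nonneg (hφ0 _) (by linarith [hP0 (q m), hP0 (q n)])
        rw [if_pos hn0, if_neg hm0]
        linarith
      · have h := hkey (q m) (q n) (by omega) (by omega)
        have h2 : (0:ℝ) ≤ (if q m = 0 then P (q n) else 0) + (if q n = 0 then P (q m) else 0) := by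
          have ha : (0:ℝ) ≤ if q m = 0 then P (q n) else 0 := by split <;> simp [hP0]
          have hb : (0:ℝ) ≤ if q n = 0 then P (q m) else 0 := by split <;> simp [hP0]
          linarith
        linarith
  calc ∑ m ∈ I, ∑ n ∈ I, |(μ (Γ (q m) ∩ Γ (q n))).toReal - P (q m) * P (q n)|
      ≤ ∑ m ∈ I, ∑ n ∈ I, (φ (Nat.dist (q m) (q n)) * (P (q m) + P (q n))
        + ((if q m = 0 then P (q n) else 0) + (if q n = 0 then P (q m) else 0))) := by
        apply Finset.sum_le_sum
        intro m hm
        exact Finset.sum_le_sum (fun n hn => hpt m hm n hn)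
    _ = (∑ m ∈ I, ∑ n ∈ I, φ (Nat.dist (q m) (q n)) * P (q m))
        + (∑ m ∈ I, ∑ n ∈ I, φ (Nat.dist (q m) (q n)) * P (q n))
        + ((∑ m ∈ I, ∑ n ∈ I, (if q m = 0 then P (q n) else 0))
        + (∑ m ∈ I, ∑ n ∈ I, (if q n = 0 then P (q m) else 0))) := by
        simp only [← Finset.sum_add_distrib, mul_add]
    _ ≤ (2 * K * S) * ∑ n ∈ I, P (q n) + (2 * K * S) * ∑ n ∈ I, P (q n)
        + ((K : ℝ) * ∑ n ∈ I, P (q n) + (K : ℝ) * ∑ n ∈ I, P (q n)) := by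
        gcongr ?_ + ?_ + (?_ + ?_)
        · -- ∑ m ∑ n φ(d) P(q m) ≤ 2KS ∑ P
          calc ∑ m ∈ I, ∑ n ∈ I, φ (Nat.dist (q m) (q n)) * P (q m)
              = ∑ m ∈ I, (∑ n ∈ I, φ (Nat.dist (q m) (q n))) * P (q m) := by
                simp [Finset.sum_mul]
            _ ≤ ∑ m ∈ I, (2 * K * S) * P (q m) := by
                apply Finset.sum_le_sum
                intro m _
                exact mul_le_mul_of_nonneg_right (hrow I (q m)) (hP0 _)
            _ = (2 * K * S) * ∑ n ∈ I, P (q n) := by rw [← Finset.mul_sum]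
        · -- swap roles
          rw [Finset.sum_comm]
          calc ∑ n ∈ I, ∑ m ∈ I, φ (Nat.dist (q m) (q n)) * P (q n)
              = ∑ n ∈ I, (∑ m ∈ I, φ (Nat.dist (q n) (q m))) * P (q n) := by
                apply Finset.sum_congr rfl
                intro n _
                rw [Finset.sum_mul]
                apply Finset.sum_congr rfl
                intro m _
                rw [Nat.dist_comm]
            _ ≤ ∑ n ∈ I, (2 * K * S) * P (q n) := by
                apply Finset.sum_le_sum
                intro n _
                exact mul_le_mul_of_nonneg_right (hrow I (q n)) (hP0 _)
            _ = (2 * K * S) * ∑ n ∈ I, P (q n) := by rw [← Finset.mul_sum]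
        · -- zero rows
          calc ∑ m ∈ I, ∑ n ∈ I, (if q m = 0 then P (q n) else 0)
              = ∑ m ∈ I, (if q m = 0 then (1:ℝ) else 0) * ∑ n ∈ I, P (q n) := by
                apply Finset.sum_congr rfl
                intro m _
                split <;> simp
            _ = (∑ m ∈ I, (if q m = 0 then (1:ℝ) else 0)) * ∑ n ∈ I, P (q n) := by
                rw [Finset.sum_mul]
            _ ≤ (K : ℝ) * ∑ n ∈ I, P (q n) := by
                apply mul_le_mul_of_nonneg_right _
                  (Finset.sum_nonneg fun n _ => hP0 _)
                rw [Finset.sum_boole]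
                exact_mod_cast hfiber I 0
        · -- zero columns
          rw [Finset.sum_comm]
          calc ∑ n ∈ I, ∑ m ∈ I, (if q n = 0 then P (q m) else 0)
              = ∑ n ∈ I, (if q n = 0 then (1:ℝ) else 0) * ∑ m ∈ I, P (q m) := by
                apply Finset.sum_congr rfl
                intro n _
                split <;> simp
            _ = (∑ n ∈ I, (if q n = 0 then (1:ℝ) else 0)) * ∑ m ∈ I, P (q m) := by
                rw [Finset.sum_mul]
            _ ≤ (K : ℝ) * ∑ n ∈ I, P (q n) := by
                apply mul_le_mul_of_nonneg_right _
                  (Finset.sum_nonneg fun n _ => hP0 _)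
                rw [Finset.sum_boole]
                exact_mod_cast hfiber I 0
    _ ≤ (4 * K * S + 2 * K + 1) * ∑ n ∈ I, P (q n) := by
        have hPs : 0 ≤ ∑ n ∈ I, P (q n) := Finset.sum_nonneg fun n _ => hP0 _
        nlinarith
end

section
/- Let Γ_1, Γ_2, ... be events generating σ-algebras F_{m,n}, with φ-mixing coefficient φ(k) summable. Let q : ℕ → ℕ be such that for each integer k the equation q(n) = k has at most K solutions n. If ∑_{n=1}^N P(Γ_{q(n)}) → ∞ as N → ∞, then almost surely (∑_{n=1}^N 1_{Γ_{q(n)}}) / (∑_{n=1}^N P(Γ_{q(n)})) → 1. -/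
open MeasureTheory Filter

private lemma aux_ratio_tendsto :
    Tendsto (fun j : ℕ => (((j:ℝ)+2)^2 + 1) / ((j:ℝ)+1)^2) atTop (nhds 1) := by
  have h0 : Tendsto (fun n : ℕ => 1 / ((n:ℝ) + 1)) atTop (nhds 0) :=
    tendsto_one_div_add_atTop_nhds_zero_nat
  have h : Tendsto (fun j : ℕ => 1 + 2*(1/((j:ℝ)+1)) + 2*(1/((j:ℝ)+1))^2) atTop
      (nhds (1 + 2*0 + 2*0^2)) := by
    exact (tendsto_const_nhds.add ((h0.const_mul 2))).add (((h0.pow 2).const_mul 2))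
  norm_num at h
  refine h.congr fun j => ?_
  have hj : ((j:ℝ)+1) ≠ 0 := by positivity
  field_simp
  ring

private lemma aux_sandwich (S A : ℕ → ℝ) (T : ℕ → ℕ)
    (hS0 : ∀ n, 0 ≤ S n) (hS : Monotone S) (hA : Monotone A)
    (hT : Monotone T) (hTtop : Tendsto T atTop atTop)
    (hpos : ∀ j, 0 < A (T j))
    (hratio : Tendsto (fun j => A (T (j+1)) / A (T j)) atTop (nhds 1))
    (hconv : Tendsto (fun j => S (T j) / A (T j)) atTop (nhds 1)) :
    Tendsto (fun N => S N / A N) atTop (nhds 1) := by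
  classical
  have exJ : ∀ N : ℕ, ∃ j, N < T (j+1) := by
    intro N
    obtain ⟨j, hj⟩ := (hTtop.eventually_gt_atTop N).exists
    exact ⟨j, lt_of_lt_of_le hj (hT (Nat.le_succ j))⟩
  set J : ℕ → ℕ := fun N => Nat.find (exJ N) with hJdef
  have hJ2 : ∀ N, N < T (J N + 1) := fun N => Nat.find_spec (exJ N)
  have hJ1 : ∀ N, T 0 ≤ N → T (J N) ≤ N := by
    intro N hN
    rcases Nat.eq_zero_or_pos (J N) with h | h
    · rw [h]; exact hN
    · have h2 := Nat.find_min (exJ N) (Nat.sub_lt h Nat.one_pos : J N - 1 < J N)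
      simp only [not_lt] at h2
      have h3 : J N - 1 + 1 = J N := by omega
      rwa [h3] at h2
  have hJtop : Tendsto J atTop atTop := by
    rw [tendsto_atTop_atTop]
    intro M
    refine ⟨T M, fun N hN => ?_⟩
    rw [hJdef]
    rw [Nat.le_find_iff]
    intro m hm
    simp only [not_lt]
    exact le_trans (hT (by omega : m + 1 ≤ M)) hN
  have hg : Tendsto (fun j => S (T (j+1)) / A (T j)) atTop (nhds 1) := by
    have h1 : Tendsto (fun j => S (T (j+1)) / A (T (j+1))) atTop (nhds 1) :=
      hconv.comp (tendsto_add_atTop_nat 1)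
    have h2 := h1.mul hratio
    norm_num at h2
    refine h2.congr fun j => ?_
    rw [div_mul_div_comm, mul_comm (S _) _, mul_div_mul_left _ _ (ne_of_gt (hpos (j+1)))]
  have hh : Tendsto (fun j => S (T j) / A (T (j+1))) atTop (nhds 1) := by
    have h2 : Tendsto (fun j => A (T j) / A (T (j+1))) atTop (nhds 1) := by
      have h4 := hratio.inv₀ one_ne_zero
      norm_num at h4
      exact h4
    have h3 := hconv.mul h2
    norm_num at h3
    refine h3.congr fun j => ?_
    rw [div_mul_div_comm, mul_comm (S _) _, mul_div_mul_left _ _ (ne_of_gt (hpos j))]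
  refine tendsto_of_tendsto_of_tendsto_of_le_of_le' (hh.comp hJtop) (hg.comp hJtop) ?_ ?_
  · filter_upwards [eventually_ge_atTop (T 0)] with N hN
    exact div_le_div₀ (hS0 N) (hS (hJ1 N hN))
      (lt_of_lt_of_le (hpos (J N)) (hA (hJ1 N hN))) (hA (le_of_lt (hJ2 N)))
  · filter_upwards [eventually_ge_atTop (T 0)] with N hN
    exact div_le_div₀ (hS0 _) (hS (le_of_lt (hJ2 N))) (hpos _) (hA (hJ1 N hN))


private lemma aux_fiber_sum (q : ℕ → ℕ) (K : ℕ) (s : Finset ℕ) (g : ℕ → ℝ)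
    (hg : ∀ k, 0 ≤ g k)
    (hcard : ∀ k, (s.filter (fun m => q m = k)).card ≤ K)
    (B : ℝ) (hB : ∀ t : Finset ℕ, ∑ b ∈ t, g b ≤ B) :
    ∑ m ∈ s, g (q m) ≤ K * B := by
  classical
  rw [Finset.sum_comp g q]
  calc ∑ b ∈ s.image q, (s.filter (fun m => q m = b)).card • g b
      ≤ ∑ b ∈ s.image q, K * g b := by
        refine Finset.sum_le_sum fun b _ => ?_
        rw [nsmul_eq_mul]
        exact mul_le_mul_of_nonneg_right (by exact_mod_cast hcard b) (hg b)
    _ = K * ∑ b ∈ s.image q, g b := by rw [Finset.mul_sum]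
    _ ≤ K * B := mul_le_mul_of_nonneg_left (hB _) (Nat.cast_nonneg K)

private lemma aux_var {Ω : Type*} [MeasurableSpace Ω] (μ : Measure Ω) [IsProbabilityMeasure μ]
    (Γ : ℕ → Set Ω) (hΓ : ∀ n, MeasurableSet (Γ n))
    (φ : ℕ → ℝ) (hφ : Summable φ)
    (hmix : ∀ (m k : ℕ) (A B : Set Ω),
      MeasurableSet[MeasurableSpace.generateFrom {S | ∃ j : ℕ, 1 ≤ j ∧ j ≤ m ∧ S = Γ j}] A →
      MeasurableSet[MeasurableSpace.generateFrom {S | ∃ j : ℕ, m + k ≤ j ∧ S = Γ j}] B →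
      μ A ≠ 0 →
      |(μ (A ∩ B)).toReal / (μ A).toReal - (μ B).toReal| ≤ φ k)
    (q : ℕ → ℕ) (K : ℕ)
    (hq : ∀ k : ℕ, {n : ℕ | q n = k}.Finite ∧ {n : ℕ | q n = k}.ncard ≤ K) :
    ∀ N : ℕ, ∫ ω, ((∑ n ∈ Finset.Icc 1 N, (Γ (q n)).indicator (fun _ => (1:ℝ)) ω) -
        ∑ n ∈ Finset.Icc 1 N, (μ (Γ (q n))).toReal)^2 ∂μ ≤
        (4*K + 2*K*(∑' k, φ k)) * ∑ n ∈ Finset.Icc 1 N, (μ (Γ (q n))).toReal := by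
  classical
  have hφ0 : ∀ k, 0 ≤ φ k := by
    intro k
    have h := hmix 0 k Set.univ ∅
      (@MeasurableSet.univ Ω (MeasurableSpace.generateFrom {S | ∃ j : ℕ, 1 ≤ j ∧ j ≤ 0 ∧ S = Γ j}))
      (@MeasurableSet.empty Ω (MeasurableSpace.generateFrom {S | ∃ j : ℕ, 0 + k ≤ j ∧ S = Γ j}))
      (by simp)
    simpa using h
  intro N
  set s : Finset ℕ := Finset.Icc 1 N with hsdef
  set p : ℕ → ℝ := fun n => (μ (Γ (q n))).toReal with hpdef
  have hp0 : ∀ n, 0 ≤ p n := fun n => ENNReal.toReal_nonneg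
  have hA0 : 0 ≤ ∑ n ∈ s, p n := Finset.sum_nonneg fun n _ => hp0 n
  -- pointwise expansion
  have hpt : ∀ ω : Ω, ((∑ n ∈ s, (Γ (q n)).indicator (fun _ => (1:ℝ)) ω) - ∑ n ∈ s, p n)^2
      = (∑ n ∈ s, ∑ m ∈ s, (Γ (q n) ∩ Γ (q m)).indicator (fun _ => (1:ℝ)) ω)
        - 2 * (∑ n ∈ s, p n) * (∑ n ∈ s, (Γ (q n)).indicator (fun _ => (1:ℝ)) ω)
        + (∑ n ∈ s, p n)^2 := by
    intro ω
    have hsq : (∑ n ∈ s, (Γ (q n)).indicator (fun _ => (1:ℝ)) ω) *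
        (∑ m ∈ s, (Γ (q m)).indicator (fun _ => (1:ℝ)) ω)
        = ∑ n ∈ s, ∑ m ∈ s, (Γ (q n) ∩ Γ (q m)).indicator (fun _ => (1:ℝ)) ω := by
      rw [Finset.sum_mul_sum]
      refine Finset.sum_congr rfl fun n _ => Finset.sum_congr rfl fun m _ => ?_
      have h := Set.inter_indicator_mul (s := Γ (q n)) (t := Γ (q m))
        (fun _ : Ω => (1:ℝ)) (fun _ : Ω => (1:ℝ)) ω
      simpa using h.symm
    have hexp : ∀ a b : ℝ, (a - b)^2 = a*a - 2*b*a + b^2 := fun a b => by ring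
    rw [hexp, hsq]
  have hind : ∀ u : Set Ω, MeasurableSet u → Integrable (u.indicator fun _ => (1:ℝ)) μ := by
    intro u hu
    rw [integrable_indicator_iff hu]
    exact integrableOn_const (measure_ne_top μ u)
  have hSint : Integrable (fun ω => ∑ n ∈ s, (Γ (q n)).indicator (fun _ => (1:ℝ)) ω) μ :=
    integrable_finset_sum _ fun n _ => hind _ (hΓ _)
  have hXint : Integrable
      (fun ω => ∑ n ∈ s, ∑ m ∈ s, (Γ (q n) ∩ Γ (q m)).indicator (fun _ => (1:ℝ)) ω) μ :=
    integrable_finset_sum _ fun n _ => integrable_finset_sum _ fun m _ =>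
      hind _ ((hΓ _).inter (hΓ _))
  have hSint_eq : ∫ ω, (∑ n ∈ s, (Γ (q n)).indicator (fun _ => (1:ℝ)) ω) ∂μ
      = ∑ n ∈ s, p n := by
    rw [integral_finset_sum _ (fun n _ => hind _ (hΓ _))]
    refine Finset.sum_congr rfl fun n _ => ?_
    rw [integral_indicator_const (1:ℝ) (hΓ _)]
    simp [hpdef]
    rfl
  have hXint_eq : ∫ ω, (∑ n ∈ s, ∑ m ∈ s,
      (Γ (q n) ∩ Γ (q m)).indicator (fun _ => (1:ℝ)) ω) ∂μ
      = ∑ n ∈ s, ∑ m ∈ s, (μ (Γ (q n) ∩ Γ (q m))).toReal := by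
    rw [integral_finset_sum _ (fun n _ => integrable_finset_sum _ fun m _ =>
      hind _ ((hΓ _).inter (hΓ _)))]
    refine Finset.sum_congr rfl fun n _ => ?_
    rw [integral_finset_sum _ (fun m _ => hind _ ((hΓ _).inter (hΓ _)))]
    refine Finset.sum_congr rfl fun m _ => ?_
    rw [integral_indicator_const (1:ℝ) ((hΓ _).inter (hΓ _))]
    simp
    rfl
  have hInteq : ∫ ω, ((∑ n ∈ s, (Γ (q n)).indicator (fun _ => (1:ℝ)) ω) - ∑ n ∈ s, p n)^2 ∂μ
      = (∑ n ∈ s, ∑ m ∈ s, (μ (Γ (q n) ∩ Γ (q m))).toReal) - (∑ n ∈ s, p n)^2 := by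
    rw [show (fun ω => ((∑ n ∈ s, (Γ (q n)).indicator (fun _ => (1:ℝ)) ω) - ∑ n ∈ s, p n)^2)
        = fun ω => (∑ n ∈ s, ∑ m ∈ s, (Γ (q n) ∩ Γ (q m)).indicator (fun _ => (1:ℝ)) ω)
          - 2 * (∑ n ∈ s, p n) * (∑ n ∈ s, (Γ (q n)).indicator (fun _ => (1:ℝ)) ω)
          + (∑ n ∈ s, p n)^2 from funext hpt]
    have hint2 : Integrable (fun ω => 2 * (∑ n ∈ s, p n) *
        (∑ n ∈ s, (Γ (q n)).indicator (fun _ => (1:ℝ)) ω)) μ :=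
      hSint.const_mul (2 * ∑ n ∈ s, p n)
    have hint1 : Integrable (fun ω => (∑ n ∈ s, ∑ m ∈ s,
        (Γ (q n) ∩ Γ (q m)).indicator (fun _ => (1:ℝ)) ω) - 2 * (∑ n ∈ s, p n) *
        (∑ n ∈ s, (Γ (q n)).indicator (fun _ => (1:ℝ)) ω)) μ := hXint.sub hint2
    rw [integral_add hint1 (integrable_const ((∑ n ∈ s, p n)^2)),
      integral_sub hXint hint2, integral_const_mul, hSint_eq, hXint_eq, integral_const]
    simp [measure_univ]
    ring
  -- pair bound
  set d : ℕ → ℕ → ℝ := fun n m =>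
    (if q m = q n then p n else 0) + (if q n = 0 then p m else 0) +
      (if 0 < q n ∧ q n < q m then φ (q m - q n) * p n else 0) with hddef
  have hite : ∀ (c : Prop) [Decidable c] (x : ℝ), 0 ≤ x → 0 ≤ (if c then x else 0) := by
    intro c _ x hx; split_ifs <;> simp [hx]
  have hd0 : ∀ n m, 0 ≤ d n m := by
    intro n m
    have t1 := hite (q m = q n) (p n) (hp0 n)
    have t2 := hite (q n = 0) (p m) (hp0 m)
    have t3 := hite (0 < q n ∧ q n < q m) (φ (q m - q n) * p n)
      (mul_nonneg (hφ0 _) (hp0 n))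
    simp only [hddef]
    linarith
  have hpr : ∀ n, (μ (Γ (q n))).toReal = p n := fun n => rfl
  have hcore : ∀ n m, 0 < q n → q n < q m →
      (μ (Γ (q n) ∩ Γ (q m))).toReal ≤ p n * p m + φ (q m - q n) * p n := by
    intro n m h0 hlt
    by_cases hz : μ (Γ (q n)) = 0
    · have hsub : μ (Γ (q n) ∩ Γ (q m)) = 0 :=
        le_antisymm (le_trans (measure_mono Set.inter_subset_left) hz.le) (zero_le)
      have hpn : p n = 0 := by simp [hpdef, hz]
      rw [hsub, hpn]
      simp
    · have hA : MeasurableSet[MeasurableSpace.generateFrom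
          {S | ∃ j : ℕ, 1 ≤ j ∧ j ≤ q n ∧ S = Γ j}] (Γ (q n)) :=
        MeasurableSpace.measurableSet_generateFrom ⟨q n, h0, le_refl _, rfl⟩
      have hB : MeasurableSet[MeasurableSpace.generateFrom
          {S | ∃ j : ℕ, q n + (q m - q n) ≤ j ∧ S = Γ j}] (Γ (q m)) :=
        MeasurableSpace.measurableSet_generateFrom ⟨q m, by omega, rfl⟩
      have h := hmix (q n) (q m - q n) (Γ (q n)) (Γ (q m)) hA hB hz
      simp only [hpr] at h
      have hpn : 0 < p n := ENNReal.toReal_pos hz (measure_ne_top μ _)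
      have h2 := (abs_le.1 h).2
      have h3 : (μ (Γ (q n) ∩ Γ (q m))).toReal ≤ (p m + φ (q m - q n)) * p n := by
        rw [← div_le_iff₀ hpn]
        linarith
      calc (μ (Γ (q n) ∩ Γ (q m))).toReal ≤ (p m + φ (q m - q n)) * p n := h3
        _ = p n * p m + φ (q m - q n) * p n := by ring
  have hpair : ∀ n m, (μ (Γ (q n) ∩ Γ (q m))).toReal ≤ p n * p m + (d n m + d m n) := by
    intro n m
    have hr1 : (μ (Γ (q n) ∩ Γ (q m))).toReal ≤ p n :=
      ENNReal.toReal_mono (measure_ne_top μ _) (measure_mono Set.inter_subset_left)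
    have hr2 : (μ (Γ (q n) ∩ Γ (q m))).toReal ≤ p m :=
      ENNReal.toReal_mono (measure_ne_top μ _) (measure_mono Set.inter_subset_right)
    have hpp : 0 ≤ p n * p m := mul_nonneg (hp0 n) (hp0 m)
    by_cases he : q n = q m
    · have h1 : p n ≤ d n m := by
        simp only [hddef]
        rw [if_pos he.symm]
        have t2 := hite (q n = 0) (p m) (hp0 m)
        have t3 := hite (0 < q n ∧ q n < q m) (φ (q m - q n) * p n)
          (mul_nonneg (hφ0 _) (hp0 n))
        linarith
      linarith [hd0 m n]
    · by_cases hn0 : q n = 0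
      · have h1 : p m ≤ d n m := by
          simp only [hddef]
          rw [if_pos hn0]
          have t1 := hite (q m = q n) (p n) (hp0 n)
          have t3 := hite (0 < q n ∧ q n < q m) (φ (q m - q n) * p n)
            (mul_nonneg (hφ0 _) (hp0 n))
          linarith
        linarith [hd0 m n]
      · by_cases hm0 : q m = 0
        · have h1 : p n ≤ d m n := by
            simp only [hddef]
            rw [if_pos hm0]
            have t1 := hite (q n = q m) (p m) (hp0 m)
            have t3 := hite (0 < q m ∧ q m < q n) (φ (q n - q m) * p m)
              (mul_nonneg (hφ0 _) (hp0 m))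
            linarith
          linarith [hd0 n m]
        · rcases lt_or_gt_of_ne he with hlt | hgt
          · have h1 := hcore n m (Nat.pos_of_ne_zero hn0) hlt
            have h2 : φ (q m - q n) * p n ≤ d n m := by
              simp only [hddef]
              rw [if_pos (⟨Nat.pos_of_ne_zero hn0, hlt⟩ : 0 < q n ∧ q n < q m)]
              have t1 := hite (q m = q n) (p n) (hp0 n)
              have t2 := hite (q n = 0) (p m) (hp0 m)
              linarith
            linarith [hd0 m n]
          · have h1 := hcore m n (Nat.pos_of_ne_zero hm0) hgt
            rw [Set.inter_comm] at h1
            rw [mul_comm (p m) (p n)] at h1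
            have h2 : φ (q n - q m) * p m ≤ d m n := by
              simp only [hddef]
              rw [if_pos (⟨Nat.pos_of_ne_zero hm0, hgt⟩ : 0 < q m ∧ q m < q n)]
              have t1 := hite (q n = q m) (p m) (hp0 m)
              have t2 := hite (q m = 0) (p n) (hp0 n)
              linarith
            linarith [hd0 n m]
  -- summation
  have hcard : ∀ k, (s.filter (fun m => q m = k)).card ≤ K := by
    intro k
    calc (s.filter (fun m => q m = k)).card
        = ((s.filter (fun m => q m = k) : Finset ℕ) : Set ℕ).ncard :=
          (Set.ncard_coe_finset _).symm
      _ ≤ ({n : ℕ | q n = k}).ncard := by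
          refine Set.ncard_le_ncard ?_ (hq k).1
          intro x hx
          simp only [Finset.coe_filter, Set.mem_setOf_eq] at hx
          exact hx.2
      _ ≤ K := (hq k).2
  set Φ := ∑' k, φ k with hΦdef
  have hΦ0 : 0 ≤ Φ := tsum_nonneg hφ0
  have hb1 : ∀ n, ∑ m ∈ s, (if q m = q n then p n else 0) ≤ K * p n := by
    intro n
    rw [← Finset.sum_filter, Finset.sum_const, nsmul_eq_mul]
    exact mul_le_mul_of_nonneg_right (by exact_mod_cast hcard (q n)) (hp0 n)
  have hb2 : ∀ n, ∑ m ∈ s, (if q n = 0 then p m else 0)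
      = (if q n = 0 then ∑ m ∈ s, p m else 0) := by
    intro n; split_ifs <;> simp
  have hb3 : ∀ n, ∑ m ∈ s, (if 0 < q n ∧ q n < q m then φ (q m - q n) * p n else 0)
      ≤ K * Φ * p n := by
    intro n
    by_cases h0 : 0 < q n
    · have heq : ∀ m, (if 0 < q n ∧ q n < q m then φ (q m - q n) * p n else 0)
          = (if q n < q m then φ (q m - q n) else 0) * p n := by
        intro m
        by_cases h : q n < q m
        · rw [if_pos ⟨h0, h⟩, if_pos h]
        · rw [if_neg (fun hc => h hc.2), if_neg h, zero_mul]
      rw [Finset.sum_congr rfl fun m _ => heq m, ← Finset.sum_mul]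
      refine mul_le_mul_of_nonneg_right ?_ (hp0 n)
      have hB : ∀ t : Finset ℕ, ∑ b ∈ t, (if q n < b then φ (b - q n) else 0) ≤ Φ := by
        intro t
        rw [← Finset.sum_filter]
        have hinj : ∀ x ∈ t.filter (fun b => q n < b), ∀ y ∈ t.filter (fun b => q n < b),
            x - q n = y - q n → x = y := by
          intro x hx y hy hxy
          simp only [Finset.mem_filter] at hx hy
          omega
        rw [← Finset.sum_image (f := φ) (g := fun b => b - q n) hinj]
        exact Summable.sum_le_tsum _ (fun i _ => hφ0 i) hφ
      exact aux_fiber_sum q K s _ (fun k => hite _ _ (hφ0 _)) hcard Φ hB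
    · have hz : ∀ m ∈ s, (if 0 < q n ∧ q n < q m then φ (q m - q n) * p n else 0) = 0 :=
        fun m _ => if_neg (fun hc => h0 hc.1)
      rw [Finset.sum_eq_zero hz]
      positivity
  have hper : ∑ n ∈ s, ∑ m ∈ s, d n m ≤ (2*K + K*Φ) * ∑ n ∈ s, p n := by
    have h1 : ∀ n ∈ s, ∑ m ∈ s, d n m
        ≤ K * p n + (if q n = 0 then ∑ m ∈ s, p m else 0) + K * Φ * p n := by
      intro n _
      simp only [hddef]
      rw [Finset.sum_add_distrib, Finset.sum_add_distrib]
      linarith [hb1 n, (hb2 n).le, (hb2 n).ge, hb3 n]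
    calc ∑ n ∈ s, ∑ m ∈ s, d n m
        ≤ ∑ n ∈ s, (K * p n + (if q n = 0 then ∑ m ∈ s, p m else 0) + K * Φ * p n) :=
          Finset.sum_le_sum h1
      _ = K * (∑ n ∈ s, p n) + (∑ n ∈ s, (if q n = 0 then ∑ m ∈ s, p m else 0))
          + K * Φ * (∑ n ∈ s, p n) := by
          rw [Finset.sum_add_distrib, Finset.sum_add_distrib, ← Finset.mul_sum, ← Finset.mul_sum]
      _ ≤ K * (∑ n ∈ s, p n) + K * (∑ n ∈ s, p n) + K * Φ * (∑ n ∈ s, p n) := by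
          have h2 : ∑ n ∈ s, (if q n = 0 then ∑ m ∈ s, p m else 0) ≤ K * ∑ m ∈ s, p m := by
            rw [← Finset.sum_filter, Finset.sum_const, nsmul_eq_mul]
            exact mul_le_mul_of_nonneg_right (by exact_mod_cast hcard 0) hA0
          linarith
      _ = (2*K + K*Φ) * ∑ n ∈ s, p n := by ring
  have hsymm : ∑ n ∈ s, ∑ m ∈ s, d m n = ∑ n ∈ s, ∑ m ∈ s, d n m := Finset.sum_comm
  have hrsum : ∑ n ∈ s, ∑ m ∈ s, (μ (Γ (q n) ∩ Γ (q m))).toReal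
      ≤ (∑ n ∈ s, p n)^2 + 2 * ∑ n ∈ s, ∑ m ∈ s, d n m := by
    have h1 : ∑ n ∈ s, ∑ m ∈ s, (μ (Γ (q n) ∩ Γ (q m))).toReal
        ≤ ∑ n ∈ s, ∑ m ∈ s, (p n * p m + (d n m + d m n)) :=
      Finset.sum_le_sum fun n _ => Finset.sum_le_sum fun m _ => hpair n m
    have h2 : ∑ n ∈ s, ∑ m ∈ s, (p n * p m + (d n m + d m n))
        = (∑ n ∈ s, p n)^2 + ((∑ n ∈ s, ∑ m ∈ s, d n m) + ∑ n ∈ s, ∑ m ∈ s, d m n) := by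
      simp only [Finset.sum_add_distrib]
      rw [sq, Finset.sum_mul_sum]
    linarith [h1, h2.le, h2.ge, hsymm.le, hsymm.ge]
  rw [hInteq]
  calc (∑ n ∈ s, ∑ m ∈ s, (μ (Γ (q n) ∩ Γ (q m))).toReal) - (∑ n ∈ s, p n)^2
      ≤ 2 * ∑ n ∈ s, ∑ m ∈ s, d n m := by linarith [hrsum]
    _ ≤ 2 * ((2*K + K*Φ) * ∑ n ∈ s, p n) := by linarith [hper]
    _ = (4*K + 2*K*Φ) * ∑ n ∈ s, p n := by ring


private lemma aux_int {Ω : Type*} [MeasurableSpace Ω] (μ : Measure Ω) [IsProbabilityMeasure μ]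
    (G : ℕ → Set Ω) (hG : ∀ n, MeasurableSet (G n)) :
    ∀ N : ℕ, Integrable (fun ω =>
      ((∑ n ∈ Finset.Icc 1 N, (G n).indicator (fun _ => (1:ℝ)) ω) -
        ∑ n ∈ Finset.Icc 1 N, (μ (G n)).toReal)^2) μ := by
  classical
  intro N
  set s : Finset ℕ := Finset.Icc 1 N with hsdef
  set p : ℕ → ℝ := fun n => (μ (G n)).toReal with hpdef
  have hind : ∀ u : Set Ω, MeasurableSet u → Integrable (u.indicator fun _ => (1:ℝ)) μ := by
    intro u hu
    rw [integrable_indicator_iff hu]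
    exact integrableOn_const (measure_ne_top μ u)
  have hpt : ∀ ω : Ω, ((∑ n ∈ s, (G n).indicator (fun _ => (1:ℝ)) ω) - ∑ n ∈ s, p n)^2
      = (∑ n ∈ s, ∑ m ∈ s, (G n ∩ G m).indicator (fun _ => (1:ℝ)) ω)
        - 2 * (∑ n ∈ s, p n) * (∑ n ∈ s, (G n).indicator (fun _ => (1:ℝ)) ω)
        + (∑ n ∈ s, p n)^2 := by
    intro ω
    have hsq : (∑ n ∈ s, (G n).indicator (fun _ => (1:ℝ)) ω) *
        (∑ m ∈ s, (G m).indicator (fun _ => (1:ℝ)) ω)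
        = ∑ n ∈ s, ∑ m ∈ s, (G n ∩ G m).indicator (fun _ => (1:ℝ)) ω := by
      rw [Finset.sum_mul_sum]
      refine Finset.sum_congr rfl fun n _ => Finset.sum_congr rfl fun m _ => ?_
      have h := Set.inter_indicator_mul (s := G n) (t := G m)
        (fun _ : Ω => (1:ℝ)) (fun _ : Ω => (1:ℝ)) ω
      simpa using h.symm
    have hexp : ∀ a b : ℝ, (a - b)^2 = a*a - 2*b*a + b^2 := fun a b => by ring
    rw [hexp, hsq]
  have hSint : Integrable (fun ω => ∑ n ∈ s, (G n).indicator (fun _ => (1:ℝ)) ω) μ :=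
    integrable_finset_sum _ fun n _ => hind _ (hG _)
  have hXint : Integrable
      (fun ω => ∑ n ∈ s, ∑ m ∈ s, (G n ∩ G m).indicator (fun _ => (1:ℝ)) ω) μ :=
    integrable_finset_sum _ fun n _ => integrable_finset_sum _ fun m _ =>
      hind _ ((hG _).inter (hG _))
  have hint2 : Integrable (fun ω => 2 * (∑ n ∈ s, p n) *
      (∑ n ∈ s, (G n).indicator (fun _ => (1:ℝ)) ω)) μ :=
    hSint.const_mul (2 * ∑ n ∈ s, p n)
  rw [show (fun ω => ((∑ n ∈ s, (G n).indicator (fun _ => (1:ℝ)) ω) - ∑ n ∈ s, p n)^2)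
      = fun ω => (∑ n ∈ s, ∑ m ∈ s, (G n ∩ G m).indicator (fun _ => (1:ℝ)) ω)
        - 2 * (∑ n ∈ s, p n) * (∑ n ∈ s, (G n).indicator (fun _ => (1:ℝ)) ω)
        + (∑ n ∈ s, p n)^2 from funext hpt]
  exact (hXint.sub hint2).add (integrable_const _)

private lemma aux_conv {Ω : Type*} [MeasurableSpace Ω] (μ : Measure Ω) [IsProbabilityMeasure μ]
    (G : ℕ → Set Ω) (hG : ∀ n, MeasurableSet (G n))
    (C : ℝ)
    (hgint : ∀ N : ℕ, Integrable (fun ω =>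
      ((∑ n ∈ Finset.Icc 1 N, (G n).indicator (fun _ => (1:ℝ)) ω) -
        ∑ n ∈ Finset.Icc 1 N, (μ (G n)).toReal)^2) μ)
    (hvar : ∀ N : ℕ, ∫ ω, ((∑ n ∈ Finset.Icc 1 N, (G n).indicator (fun _ => (1:ℝ)) ω) -
        ∑ n ∈ Finset.Icc 1 N, (μ (G n)).toReal)^2 ∂μ ≤
        C * ∑ n ∈ Finset.Icc 1 N, (μ (G n)).toReal)
    (hdiv : Tendsto (fun N : ℕ => ∑ n ∈ Finset.Icc 1 N, (μ (G n)).toReal) atTop atTop) :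
    ∀ᵐ ω ∂μ, Tendsto (fun N : ℕ =>
      (∑ n ∈ Finset.Icc 1 N, (G n).indicator (fun _ => (1 : ℝ)) ω) /
      (∑ n ∈ Finset.Icc 1 N, (μ (G n)).toReal)) atTop (nhds 1) := by
  classical
  set A : ℕ → ℝ := fun N => ∑ n ∈ Finset.Icc 1 N, (μ (G n)).toReal with hAdef
  set S : ℕ → Ω → ℝ := fun N ω => ∑ n ∈ Finset.Icc 1 N, (G n).indicator (fun _ => (1:ℝ)) ω
    with hSdef
  have hp0 : ∀ n, (0:ℝ) ≤ (μ (G n)).toReal := fun n => ENNReal.toReal_nonneg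
  have hp1 : ∀ n, (μ (G n)).toReal ≤ 1 := by
    intro n
    have h := ENNReal.toReal_mono (by simp) (prob_le_one (μ := μ) (s := G n))
    simpa using h
  have hAmono : Monotone A := by
    intro N M h
    exact Finset.sum_le_sum_of_subset_of_nonneg
      (Finset.Icc_subset_Icc_right h) (fun n _ _ => hp0 n)
  have hC0 : 0 ≤ C := by
    by_contra hneg
    push_neg at hneg
    obtain ⟨N, hN⟩ := (hdiv.eventually_ge_atTop 1).exists
    have h1 := hvar N
    have h2 : (0:ℝ) ≤ ∫ ω, (S N ω - A N)^2 ∂μ :=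
      integral_nonneg fun ω => sq_nonneg _
    nlinarith [hN, h1, h2]
  have hex : ∀ j : ℕ, ∃ N : ℕ, ((j:ℝ)+1)^2 ≤ A N := fun j =>
    (hdiv.eventually_ge_atTop _).exists
  set T : ℕ → ℕ := fun j => Nat.find (hex j) with hTdef
  have hT1 : ∀ j : ℕ, ((j:ℝ)+1)^2 ≤ A (T j) := fun j => Nat.find_spec (hex j)
  have hTpos : ∀ j, 0 < A (T j) := fun j => lt_of_lt_of_le (by positivity) (hT1 j)
  have hA0 : A 0 = 0 := by simp [hAdef]
  have hT2 : ∀ j, A (T j) ≤ ((j:ℝ)+1)^2 + 1 := by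
    intro j
    have hne : T j ≠ 0 := by
      intro h0
      have h1 := hT1 j
      rw [h0, hA0] at h1
      have h2 : (0:ℝ) < ((j:ℝ)+1)^2 := by positivity
      linarith
    obtain ⟨M, hM⟩ := Nat.exists_eq_succ_of_ne_zero hne
    have hmin := Nat.find_min (hex j) (show M < T j by omega)
    push_neg at hmin
    have hstep : A (M+1) = A M + (μ (G (M+1))).toReal :=
      Finset.sum_Icc_succ_top (by omega) _
    rw [hM, hstep]
    have := hp1 (M+1)
    linarith
  have hTmono : Monotone T := by
    refine monotone_nat_of_le_succ fun j => ?_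
    refine Nat.find_min' (hex j) (le_trans ?_ (hT1 (j+1)))
    push_cast
    nlinarith [Nat.cast_nonneg (α := ℝ) j]
  have hTtop : Tendsto T atTop atTop := by
    refine tendsto_atTop_mono (fun j => ?_) tendsto_id
    have hAleN : ∀ N : ℕ, A N ≤ N := by
      intro N
      calc A N ≤ ∑ n ∈ Finset.Icc 1 N, (1:ℝ) := Finset.sum_le_sum fun n _ => hp1 n
        _ = N := by simp
    have h1 : ((j:ℕ):ℝ) ≤ ((T j : ℕ):ℝ) := by
      calc ((j:ℕ):ℝ) ≤ ((j:ℝ)+1)^2 := by nlinarith [Nat.cast_nonneg (α := ℝ) j]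
        _ ≤ A (T j) := hT1 j
        _ ≤ T j := hAleN _
    exact_mod_cast h1
  have hSmono : ∀ ω, Monotone fun N => S N ω := by
    intro ω N M h
    exact Finset.sum_le_sum_of_subset_of_nonneg (Finset.Icc_subset_Icc_right h)
      (fun n _ _ => Set.indicator_nonneg (fun _ _ => zero_le_one) ω)
  have hS0 : ∀ N ω, 0 ≤ S N ω := fun N ω =>
    Finset.sum_nonneg fun n _ => Set.indicator_nonneg (fun _ _ => zero_le_one) ω
  -- Chebyshev bound
  set E : ℝ → ℕ → Set Ω := fun ε j =>
    {ω | (ε * A (T j))^2 ≤ (S (T j) ω - A (T j))^2} with hEdef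
  have hcheb : ∀ ε : ℝ, 0 < ε → ∀ j, μ (E ε j) ≤
      ENNReal.ofReal (C / (ε^2 * ((j:ℝ)+1)^2)) := by
    intro ε hε j
    have hEb := mul_meas_ge_le_integral_of_nonneg (μ := μ)
      (f := fun ω => (S (T j) ω - A (T j))^2)
      (ae_of_all _ fun ω => sq_nonneg _) (hgint (T j)) ((ε * A (T j))^2)
    have h2 : (ε * A (T j))^2 * (μ (E ε j)).toReal ≤ C * A (T j) :=
      le_trans hEb (hvar (T j))
    have hApos := hTpos j
    have hpos2 : (0:ℝ) < (ε * A (T j))^2 := by positivity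
    have h3 : (μ (E ε j)).toReal ≤ C * A (T j) / (ε * A (T j))^2 := by
      rw [le_div_iff₀ hpos2]
      linarith [h2]
    have h4 : C * A (T j) / (ε * A (T j))^2 = C / (ε^2 * A (T j)) := by
      field_simp
    have h5 : C / (ε^2 * A (T j)) ≤ C / (ε^2 * ((j:ℝ)+1)^2) := by
      apply div_le_div_of_nonneg_left hC0 (by positivity)
      exact mul_le_mul_of_nonneg_left (hT1 j) (by positivity)
    calc μ (E ε j) = ENNReal.ofReal ((μ (E ε j)).toReal) :=
          (ENNReal.ofReal_toReal (measure_ne_top μ _)).symm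
      _ ≤ ENNReal.ofReal (C / (ε^2 * ((j:ℝ)+1)^2)) := by
          apply ENNReal.ofReal_le_ofReal
          rw [← h4] at h5
          exact le_trans h3 h5
  have hsummable : ∀ ε : ℝ, 0 < ε → Summable (fun j : ℕ => C / (ε^2 * ((j:ℝ)+1)^2)) := by
    intro ε hε
    have hs1 : Summable (fun n : ℕ => 1/((n:ℝ))^2) := Real.summable_one_div_nat_pow.mpr one_lt_two
    have hs2 : Summable (fun j : ℕ => 1/((j:ℝ)+1)^2) := by
      have := (summable_nat_add_iff 1).2 hs1
      refine this.congr fun j => ?_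
      push_cast
      ring
    refine (hs2.mul_left (C/ε^2)).congr fun j => ?_
    rw [div_mul_div_comm, mul_one]
  have hBC : ∀ ε : ℝ, 0 < ε → (∑' j, μ (E ε j)) ≠ ⊤ := by
    intro ε hε
    have h1 : (∑' j, μ (E ε j)) ≤ ∑' j : ℕ, ENNReal.ofReal (C / (ε^2 * ((j:ℝ)+1)^2)) :=
      ENNReal.tsum_le_tsum (hcheb ε hε)
    rw [← ENNReal.ofReal_tsum_of_nonneg (fun j => by positivity) (hsummable ε hε)] at h1
    exact ne_top_of_le_ne_top ENNReal.ofReal_ne_top h1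
  have key : ∀ᵐ ω ∂μ, ∀ t : ℕ, ∀ᶠ j in atTop, ω ∉ E (1/((t:ℝ)+1)) j :=
    ae_all_iff.2 fun t => ae_eventually_notMem (hBC _ (by positivity))
  filter_upwards [key] with ω hω
  have hconv : Tendsto (fun j => S (T j) ω / A (T j)) atTop (nhds 1) := by
    rw [Metric.tendsto_atTop]
    intro ε hε
    obtain ⟨t, ht⟩ := exists_nat_one_div_lt hε
    obtain ⟨J0, hJ0⟩ := eventually_atTop.1 (hω t)
    refine ⟨J0, fun j hj => ?_⟩
    have h1 : ¬ ((1/((t:ℝ)+1) * A (T j))^2 ≤ (S (T j) ω - A (T j))^2) := hJ0 j hj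
    push_neg at h1
    have hApos := hTpos j
    have habs : |S (T j) ω - A (T j)| < 1/((t:ℝ)+1) * A (T j) := by
      have h2 : |S (T j) ω - A (T j)|^2 < (1/((t:ℝ)+1) * A (T j))^2 := by rwa [sq_abs]
      by_contra hcon
      push_neg at hcon
      exact absurd (pow_le_pow_left₀ (by positivity) hcon 2) (not_le.2 h2)
    rw [Real.dist_eq]
    have heq : S (T j) ω / A (T j) - 1 = (S (T j) ω - A (T j)) / A (T j) := by
      field_simp
    rw [heq, abs_div, abs_of_pos hApos]
    calc |S (T j) ω - A (T j)| / A (T j) < (1/((t:ℝ)+1) * A (T j)) / A (T j) :=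
          (div_lt_div_iff_of_pos_right hApos).2 habs
      _ = 1/((t:ℝ)+1) := by field_simp
      _ < ε := ht
  have hratio : Tendsto (fun j => A (T (j+1)) / A (T j)) atTop (nhds 1) := by
    refine tendsto_of_tendsto_of_tendsto_of_le_of_le' tendsto_const_nhds aux_ratio_tendsto ?_ ?_
    · filter_upwards with j
      exact (one_le_div (hTpos j)).2 (hAmono (hTmono (Nat.le_succ j)))
    · filter_upwards with j
      have h1 : A (T (j+1)) ≤ ((j:ℝ)+2)^2 + 1 := by
        have h := hT2 (j+1)
        push_cast at h
        nlinarith [h]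
      exact div_le_div₀ (by positivity) h1 (by positivity) (hT1 j)
  exact aux_sandwich (fun N => S N ω) A T (fun N => hS0 N ω) (hSmono ω) hAmono hTmono hTtop
    hTpos hratio hconv


/-- strong Borel–Cantelli property along a subsequence `q(n)` under
summable φ-mixing. -/
theorem stmt5 {Ω : Type*} [MeasurableSpace Ω] (μ : Measure Ω) [IsProbabilityMeasure μ]
    (Γ : ℕ → Set Ω) (hΓ : ∀ n, MeasurableSet (Γ n))
    (φ : ℕ → ℝ) (hφ : Summable φ)
    (hmix : ∀ (m k : ℕ) (A B : Set Ω),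
      MeasurableSet[MeasurableSpace.generateFrom {S | ∃ j : ℕ, 1 ≤ j ∧ j ≤ m ∧ S = Γ j}] A →
      MeasurableSet[MeasurableSpace.generateFrom {S | ∃ j : ℕ, m + k ≤ j ∧ S = Γ j}] B →
      μ A ≠ 0 →
      |(μ (A ∩ B)).toReal / (μ A).toReal - (μ B).toReal| ≤ φ k)
    (q : ℕ → ℕ) (K : ℕ)
    (hq : ∀ k : ℕ, {n : ℕ | q n = k}.Finite ∧ {n : ℕ | q n = k}.ncard ≤ K)
    (hdiv : Tendsto (fun N : ℕ => ∑ n ∈ Finset.Icc 1 N, (μ (Γ (q n))).toReal) atTop atTop) :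
    ∀ᵐ ω ∂μ, Tendsto (fun N : ℕ =>
      (∑ n ∈ Finset.Icc 1 N, (Γ (q n)).indicator (fun _ => (1 : ℝ)) ω) /
      (∑ n ∈ Finset.Icc 1 N, (μ (Γ (q n))).toReal)) atTop (nhds 1) := by
  exact aux_conv μ (fun n => Γ (q n)) (fun n => hΓ (q n)) (4*K + 2*K*(∑' k, φ k))
    (aux_int μ (fun n => Γ (q n)) (fun n => hΓ (q n)))
    (aux_var μ Γ hΓ φ hφ hmix q K hq) hdiv
end

section
/- Under the conditions of the nonconventional strong Borel–Cantelli theorem (ψ-mixing with summable coefficient, Assumption 2.1(i)), the difference |∑_{n=1}^N P(⋂_{i=1}^ℓ Γ_{q_i(n)}) − ∑_{n=1}^N ∏_{i=1}^ℓ P(Γ_{q_i(n)})| is bounded by a constant C < ∞ uniformly in N; consequently if ∑_{n=1}^N ∏_{i=1}^ℓ P(Γ_{q_i(n)}) → ∞ then the ratio of the two sums tends to 1. -/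
open MeasureTheory Filter

section aux

private lemma aux_ratio (a b : ℕ → ℝ) (C : ℝ) (hC : ∀ N, |a N - b N| ≤ C)
    (hb : Tendsto b atTop atTop) :
    Tendsto (fun N => a N / b N) atTop (nhds 1) := by
  have hb1 : ∀ᶠ N in atTop, 1 ≤ b N := hb.eventually_ge_atTop 1
  have habs : ∀ᶠ N in atTop, |(a N - b N) / b N| ≤ C / b N := by
    filter_upwards [hb1] with N hN
    have hbp : (0:ℝ) < b N := by linarith
    rw [abs_div, abs_of_pos hbp]
    gcongr
    exact hC N
  have hdn : Tendsto (fun N => C / b N) atTop (nhds 0) :=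
    Tendsto.div_atTop tendsto_const_nhds hb
  have hup : Tendsto (fun N => -(C / b N)) atTop (nhds 0) := by
    simpa using hdn.neg
  have h0 : Tendsto (fun N => (a N - b N) / b N) atTop (nhds 0) := by
    apply tendsto_of_tendsto_of_tendsto_of_le_of_le' hup hdn
    · filter_upwards [habs] with N hN
      linarith [(abs_le.mp hN).1]
    · filter_upwards [habs] with N hN
      exact (abs_le.mp hN).2
  have h1 := h0.add (tendsto_const_nhds (x := (1:ℝ)))
  rw [zero_add] at h1
  apply h1.congr'
  filter_upwards [hb1] with N hN
  have : b N ≠ 0 := by linarith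
  field_simp
  ring

private lemma aux_pow (m : ℕ) (x S : ℝ) (hx : 0 ≤ x) (hxS : x ≤ S) :
    (1 + x) ^ m - 1 ≤ m * (1 + S) ^ m * x := by
  induction m with
  | zero => simp
  | succ n ih =>
    have hS : (0:ℝ) ≤ S := hx.trans hxS
    have h1 : (1:ℝ) ≤ (1 + S) ^ n := one_le_pow₀ (by linarith)
    have h2 : (1 + x) ^ n ≤ (1 + S) ^ n := pow_le_pow_left₀ (by linarith) (by linarith) n
    have h3 : (1 + S) ^ (n+1) = (1 + S) ^ n * (1 + S) := by ring
    have h4 : (1 + x) ^ (n+1) = (1 + x) ^ n * (1 + x) := by ring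
    have hA : ((1+x)^n - 1) * (1+x) ≤ (n*(1+S)^n*x) * (1+x) :=
      mul_le_mul_of_nonneg_right ih (by linarith)
    have hB : (n*(1+S)^n*x) * (1+x) ≤ (n*(1+S)^n*x) * (1+S) := by
      have hn0 : (0:ℝ) ≤ n*(1+S)^n*x := by positivity
      exact mul_le_mul_of_nonneg_left (by linarith) hn0
    have hC : x ≤ (1+S)^(n+1) * x := le_mul_of_one_le_left hx (one_le_pow₀ (by linarith))
    have hD : (n:ℝ)*(1+S)^n*x*(1+S) = n*(1+S)^(n+1)*x := by rw [h3]; ring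
    have hE : ((1+x)^n - 1)*(1+x) + x = (1+x)^(n+1) - 1 := by ring
    push_cast
    linarith [hA, hB, hC, hD, hE]

private lemma aux_count (f : ℕ → ℕ) (D : ℕ → ℝ) (hD : ∀ k, 0 ≤ D k) (hsum : Summable D)
    (M : ℕ) (T : Finset ℕ) (hM : ∀ k, (T.filter (fun n => f n = k)).card ≤ M) :
    ∑ n ∈ T, D (f n) ≤ M * ∑' k, D k := by
  rw [Finset.sum_comp]
  calc ∑ k ∈ T.image f, (T.filter (fun n => f n = k)).card • D k
      ≤ ∑ k ∈ T.image f, (M : ℝ) * D k := by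
        refine Finset.sum_le_sum fun k _ => ?_
        rw [nsmul_eq_mul]
        exact mul_le_mul_of_nonneg_right (by exact_mod_cast hM k) (hD k)
    _ = M * ∑ k ∈ T.image f, D k := by rw [Finset.mul_sum]
    _ ≤ M * ∑' k, D k :=
        mul_le_mul_of_nonneg_left (Summable.sum_le_tsum _ (fun k _ => hD k) hsum) (by positivity)

private lemma aux_chain {Ω : Type*} [MeasurableSpace Ω] (μ : Measure Ω) [IsProbabilityMeasure μ]
    (Γ : ℕ → Set Ω)
    (ψ : ℕ → ℝ)
    (hmix : ∀ (m k : ℕ) (A B : Set Ω),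
      MeasurableSet[MeasurableSpace.generateFrom {S | ∃ j : ℕ, 1 ≤ j ∧ j ≤ m ∧ S = Γ j}] A →
      MeasurableSet[MeasurableSpace.generateFrom {S | ∃ j : ℕ, m + k ≤ j ∧ S = Γ j}] B →
      μ A ≠ 0 → μ B ≠ 0 →
      |(μ (A ∩ B)).toReal / ((μ A).toReal * (μ B).toReal) - 1| ≤ ψ k)
    {ℓ : ℕ} (v : Fin ℓ → ℕ) (hv : ∀ i, 1 ≤ v i) (k : ℕ)
    (hsep : ∀ i j, i ≠ j → v i + k ≤ v j ∨ v j + k ≤ v i) :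
    ∀ (m : ℕ) (s : Finset (Fin ℓ)), s.card = m →
    |(μ (⋂ i ∈ s, Γ (v i))).toReal - ∏ i ∈ s, (μ (Γ (v i))).toReal| ≤
      ((1 + max (ψ k) 0) ^ m - 1) * ∏ i ∈ s, (μ (Γ (v i))).toReal := by
  set ψ0 := max (ψ k) 0 with hψ0def
  have hψ0 : 0 ≤ ψ0 := le_max_right _ _
  intro m
  induction m with
  | zero =>
    intro s hs
    rw [Finset.card_eq_zero] at hs
    subst hs
    simp
  | succ n ih =>
    intro s hs
    have hne : s.Nonempty := Finset.card_pos.mp (by omega)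
    obtain ⟨i0, hi0, hmin⟩ := s.exists_min_image v hne
    set t := s.erase i0 with htdef
    have hts : s = insert i0 t := by rw [htdef, Finset.insert_erase hi0]
    have htc : t.card = n := by rw [htdef, Finset.card_erase_of_mem hi0, hs]; rfl
    have hgap : ∀ i ∈ t, v i0 + k ≤ v i := by
      intro i hi
      have hne' : i ≠ i0 := Finset.ne_of_mem_erase hi
      have hmem : i ∈ s := Finset.mem_of_mem_erase hi
      rcases hsep i0 i (fun h => hne' h.symm) with h | h
      · exact h
      · have := hmin i hmem; omega
    set a0 := (μ (Γ (v i0))).toReal with ha0def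
    set B := ⋂ i ∈ t, Γ (v i) with hBdef
    set pB := (μ B).toReal with hpBdef
    set pt := ∏ i ∈ t, (μ (Γ (v i))).toReal with hptdef
    have hset : (⋂ i ∈ s, Γ (v i)) = Γ (v i0) ∩ B := by
      rw [hts, Finset.set_biInter_insert]
    have hprod : ∏ i ∈ s, (μ (Γ (v i))).toReal = a0 * pt := by
      rw [hts, Finset.prod_insert (Finset.notMem_erase i0 s)]
    rw [hset, hprod]
    have ihB := ih t htc
    rw [← hBdef, ← hpBdef, ← hptdef] at ihB
    have ha0nn : 0 ≤ a0 := ENNReal.toReal_nonneg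
    have hptnn : 0 ≤ pt := Finset.prod_nonneg fun i _ => ENNReal.toReal_nonneg
    have hpBnn : 0 ≤ pB := ENNReal.toReal_nonneg
    have hpow1 : (1:ℝ) ≤ (1 + ψ0) ^ n := one_le_pow₀ (by linarith)
    have hpowle : (1 + ψ0) ^ n ≤ (1 + ψ0) ^ (n + 1) :=
      pow_le_pow_right₀ (by linarith) (by omega)
    by_cases ha0 : μ (Γ (v i0)) = 0
    · have h1 : μ (Γ (v i0) ∩ B) = 0 :=
        measure_mono_null Set.inter_subset_left ha0
      have h2 : a0 = 0 := by rw [ha0def, ha0]; simp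
      rw [h1, h2]
      simp only [zero_mul, sub_zero, ENNReal.toReal_zero, abs_zero, mul_zero]
      exact le_refl 0
    by_cases hB0 : μ B = 0
    · have h1 : μ (Γ (v i0) ∩ B) = 0 :=
        measure_mono_null Set.inter_subset_right hB0
      have h1' : (μ (Γ (v i0) ∩ B)).toReal = 0 := by rw [h1]; simp
      have h2 : pB = 0 := by rw [hpBdef, hB0]; simp
      have hpt : pt ≤ ((1 + ψ0) ^ n - 1) * pt := by
        rw [h2, zero_sub, abs_neg, abs_of_nonneg hptnn] at ihB
        exact ihB
      rw [h1', zero_sub, abs_neg, abs_of_nonneg (mul_nonneg ha0nn hptnn)]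
      have hc1 := mul_le_mul_of_nonneg_left hpt ha0nn
      have hc2 : a0 * (((1 + ψ0) ^ n - 1) * pt) ≤ ((1 + ψ0) ^ (n+1) - 1) * (a0 * pt) := by
        have := mul_le_mul_of_nonneg_right (sub_le_sub_right hpowle 1)
          (mul_nonneg ha0nn hptnn)
        nlinarith
      linarith
    · have hmeasA : MeasurableSet[MeasurableSpace.generateFrom
          {S | ∃ j : ℕ, 1 ≤ j ∧ j ≤ v i0 ∧ S = Γ j}] (Γ (v i0)) :=
        MeasurableSpace.measurableSet_generateFrom ⟨v i0, hv i0, le_refl _, rfl⟩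
      have hmeasB : MeasurableSet[MeasurableSpace.generateFrom
          {S | ∃ j : ℕ, v i0 + k ≤ j ∧ S = Γ j}] B := by
        rw [hBdef]
        exact MeasurableSet.biInter (t : Finset (Fin ℓ)).countable_toSet
          fun i hi => MeasurableSpace.measurableSet_generateFrom ⟨v i, hgap i hi, rfl⟩
      have hmx := hmix (v i0) k (Γ (v i0)) B hmeasA hmeasB ha0 hB0
      have ha0pos : 0 < a0 := ENNReal.toReal_pos ha0 (measure_ne_top μ _)
      have hpBpos : 0 < pB := ENNReal.toReal_pos hB0 (measure_ne_top μ _)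
      set x := (μ (Γ (v i0) ∩ B)).toReal with hxdef
      have hmx' : |x - a0 * pB| ≤ ψ0 * (a0 * pB) := by
        have hc : (0:ℝ) < a0 * pB := by positivity
        have h := hmx.trans (le_max_left (ψ k) 0)
        rw [div_sub_one (ne_of_gt hc), abs_div, abs_of_pos hc, div_le_iff₀ hc] at h
        linarith [h]
      have hpBle : pB ≤ (1 + ψ0) ^ n * pt := by
        have h := (abs_le.mp ihB).2
        linarith
      have hIH2 : |pB - pt| ≤ ((1 + ψ0) ^ n - 1) * pt := ihB
      calc |x - a0 * pt| ≤ |x - a0 * pB| + |a0 * pB - a0 * pt| := abs_sub_le _ _ _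
        _ = |x - a0 * pB| + a0 * |pB - pt| := by
            rw [← mul_sub, abs_mul, abs_of_nonneg ha0nn]
        _ ≤ ψ0 * (a0 * pB) + a0 * (((1 + ψ0) ^ n - 1) * pt) := by
            have := mul_le_mul_of_nonneg_left hIH2 ha0nn
            linarith
        _ ≤ ψ0 * (a0 * ((1 + ψ0) ^ n * pt)) + a0 * (((1 + ψ0) ^ n - 1) * pt) := by
            have h5 : a0 * pB ≤ a0 * ((1 + ψ0) ^ n * pt) :=
              mul_le_mul_of_nonneg_left hpBle ha0nn
            nlinarith
        _ = ((1 + ψ0) ^ (n + 1) - 1) * (a0 * pt) := by ring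

end aux

/-- under summable ψ-mixing and Assumption 2.1(i), the difference
`|∑_{n≤N} P(⋂_i Γ_{q_i(n)}) − ∑_{n≤N} ∏_i P(Γ_{q_i(n)})|` is bounded uniformly in `N`;
consequently, if the second sum tends to infinity then the ratio of the two sums
tends to 1. -/
theorem stmt11 {Ω : Type*} [MeasurableSpace Ω] (μ : Measure Ω) [IsProbabilityMeasure μ]
    (Γ : ℕ → Set Ω) (hΓ : ∀ n, MeasurableSet (Γ n))
    (ψ : ℕ → ℝ) (hψ : Summable ψ)
    (hmix : ∀ (m k : ℕ) (A B : Set Ω),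
      MeasurableSet[MeasurableSpace.generateFrom {S | ∃ j : ℕ, 1 ≤ j ∧ j ≤ m ∧ S = Γ j}] A →
      MeasurableSet[MeasurableSpace.generateFrom {S | ∃ j : ℕ, m + k ≤ j ∧ S = Γ j}] B →
      μ A ≠ 0 → μ B ≠ 0 →
      |(μ (A ∩ B)).toReal / ((μ A).toReal * (μ B).toReal) - 1| ≤ ψ k)
    (ℓ : ℕ) (hℓ : 1 ≤ ℓ) (q : Fin ℓ → ℕ → ℕ) (K : ℕ) (hK : 0 < K)
    (hq1 : ∀ i j : Fin ℓ, i ≠ j → ∀ k : ℤ,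
      {n : ℕ | (q i n : ℤ) - (q j n : ℤ) = k}.Finite ∧
      {n : ℕ | (q i n : ℤ) - (q j n : ℤ) = k}.ncard ≤ K)
    (hq2 : ∀ (i : Fin ℓ) (k : ℕ),
      {n : ℕ | q i n = k}.Finite ∧ {n : ℕ | q i n = k}.ncard ≤ K) :
    (∃ C : ℝ, ∀ N : ℕ,
      |(∑ n ∈ Finset.Icc 1 N, (μ (⋂ i : Fin ℓ, Γ (q i n))).toReal) -
        (∑ n ∈ Finset.Icc 1 N, ∏ i : Fin ℓ, (μ (Γ (q i n))).toReal)| ≤ C) ∧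
    (Tendsto (fun N : ℕ =>
        ∑ n ∈ Finset.Icc 1 N, ∏ i : Fin ℓ, (μ (Γ (q i n))).toReal) atTop atTop →
      Tendsto (fun N : ℕ =>
        (∑ n ∈ Finset.Icc 1 N, (μ (⋂ i : Fin ℓ, Γ (q i n))).toReal) /
        (∑ n ∈ Finset.Icc 1 N, ∏ i : Fin ℓ, (μ (Γ (q i n))).toReal)) atTop (nhds 1)) := by
  have part1 : ∃ C : ℝ, ∀ N : ℕ,
      |(∑ n ∈ Finset.Icc 1 N, (μ (⋂ i : Fin ℓ, Γ (q i n))).toReal) -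
        (∑ n ∈ Finset.Icc 1 N, ∏ i : Fin ℓ, (μ (Γ (q i n))).toReal)| ≤ C := by
    classical
    rcases Nat.lt_or_ge ℓ 2 with h2 | h2
    · -- ℓ = 1 : the two sums are equal
      have hℓ1 : ℓ = 1 := by omega
      subst hℓ1
      refine ⟨0, fun N => ?_⟩
      have heq : ∀ n, (μ (⋂ i : Fin 1, Γ (q i n))).toReal
          = ∏ i : Fin 1, (μ (Γ (q i n))).toReal := by
        intro n
        have h1 : (⋂ i : Fin 1, Γ (q i n)) = Γ (q 0 n) := by
          apply Set.eq_of_subset_of_subset (Set.iInter_subset _ 0)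
          intro x hx
          refine Set.mem_iInter.2 fun i => ?_
          have : i = 0 := Subsingleton.elim _ _
          rw [this]; exact hx
        rw [h1, Fin.prod_univ_one]
      simp only [heq, sub_self, abs_zero, le_refl]
    · -- main case ℓ ≥ 2
      set ψ' : ℕ → ℝ := fun k => max (ψ k) 0 with hψ'def
      have hψ'nn : ∀ k, 0 ≤ ψ' k := fun k => le_max_right _ _
      have hψ'sum : Summable ψ' :=
        hψ.abs.of_nonneg_of_le hψ'nn (fun k => max_le (le_abs_self _) (abs_nonneg _))
      set S := ∑' k, ψ' k with hSdef
      have hSk : ∀ k, ψ' k ≤ S := fun k => Summable.le_tsum hψ'sum k (fun j _ => hψ'nn j)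
      set E : ℕ → ℝ := fun k => (1 + ψ' k) ^ ℓ - 1 with hEdef
      have hEnn : ∀ k, 0 ≤ E k := fun k => by
        have : (1:ℝ) ≤ (1 + ψ' k) ^ ℓ := one_le_pow₀ (by linarith [hψ'nn k])
        simp only [hEdef]; linarith
      have hEle : ∀ k, E k ≤ (ℓ * (1 + S) ^ ℓ) * ψ' k := fun k => by
        have := aux_pow ℓ (ψ' k) S (hψ'nn k) (hSk k)
        simp only [hEdef]
        linarith
      have hEsum : Summable E :=
        Summable.of_nonneg_of_le hEnn hEle (hψ'sum.mul_left _)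
      -- the minimal-gap function
      set Pr : Finset (Fin ℓ × Fin ℓ) := Finset.univ.filter (fun p => p.1 ≠ p.2) with hPrdef
      have hPrne : Pr.Nonempty := by
        refine ⟨(⟨0, by omega⟩, ⟨1, by omega⟩), Finset.mem_filter.2 ⟨Finset.mem_univ _, ?_⟩⟩
        intro h
        have := Fin.mk.inj_iff.mp h
        omega
      set g : ℕ → ℕ := fun n => Pr.inf' hPrne (fun p => ((q p.1 n : ℤ) - q p.2 n).natAbs)
        with hgdef
      have hgle : ∀ (n : ℕ) (i j : Fin ℓ), i ≠ j →
          g n ≤ ((q i n : ℤ) - q j n).natAbs := by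
        intro n i j hij
        have hmem : (i, j) ∈ Pr := Finset.mem_filter.2 ⟨Finset.mem_univ _, hij⟩
        exact Finset.inf'_le _ hmem
      -- pointwise bound on good n
      have hle1 : ∀ A : Set Ω, (μ A).toReal ≤ 1 := fun A => by
        simpa using ENNReal.toReal_mono ENNReal.one_ne_top prob_le_one
      have hprodle1 : ∀ n, ∏ i, (μ (Γ (q i n))).toReal ≤ 1 := by
        intro n
        exact Finset.prod_le_one (fun i _ => ENNReal.toReal_nonneg) (fun i _ => hle1 _)
      have hItoReal_le1 : ∀ n, (μ (⋂ i, Γ (q i n))).toReal ≤ 1 := fun n => hle1 _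
      have hgood : ∀ n, (∀ i, 1 ≤ q i n) →
          |(μ (⋂ i, Γ (q i n))).toReal - ∏ i, (μ (Γ (q i n))).toReal| ≤ E (g n) := by
        intro n hn
        have hsep : ∀ i j : Fin ℓ, i ≠ j → q i n + g n ≤ q j n ∨ q j n + g n ≤ q i n := by
          intro i j hij
          have := hgle n i j hij
          omega
        have hch := aux_chain μ Γ ψ hmix (fun i => q i n) hn (g n) hsep ℓ Finset.univ
          (by simp)
        have hbi : (⋂ i ∈ (Finset.univ : Finset (Fin ℓ)), Γ (q i n)) = ⋂ i, Γ (q i n) := by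
          simp
        rw [hbi] at hch
        have hb0 : (0:ℝ) ≤ (1 + max (ψ (g n)) 0) ^ ℓ - 1 := hEnn (g n)
        calc |(μ (⋂ i, Γ (q i n))).toReal - ∏ i, (μ (Γ (q i n))).toReal|
            ≤ ((1 + max (ψ (g n)) 0) ^ ℓ - 1) * ∏ i, (μ (Γ (q i n))).toReal := hch
          _ ≤ ((1 + max (ψ (g n)) 0) ^ ℓ - 1) * 1 :=
              mul_le_mul_of_nonneg_left (hprodle1 n) hb0
          _ = E (g n) := by rw [mul_one]
      -- cardinality of fibers of g
      have hcK : ∀ (T : Finset ℕ) (i j : Fin ℓ), i ≠ j → ∀ c : ℤ,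
          (T.filter (fun n => (q i n : ℤ) - q j n = c)).card ≤ K := by
        intro T i j hij c
        have h1 := hq1 i j hij c
        have hsub : ((T.filter (fun n => (q i n : ℤ) - q j n = c)) : Set ℕ) ⊆
            {n : ℕ | (q i n : ℤ) - (q j n : ℤ) = c} := by
          intro n hn
          simp only [Finset.coe_filter, Set.mem_setOf_eq] at hn ⊢
          exact hn.2
        calc (T.filter (fun n => (q i n : ℤ) - q j n = c)).card
            = ((T.filter (fun n => (q i n : ℤ) - q j n = c)) : Set ℕ).ncard :=
              (Set.ncard_coe_finset _).symm
          _ ≤ {n : ℕ | (q i n : ℤ) - (q j n : ℤ) = c}.ncard :=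
              Set.ncard_le_ncard hsub h1.1
          _ ≤ K := h1.2
      have hfiber : ∀ (T : Finset ℕ) (k : ℕ),
          (T.filter (fun n => g n = k)).card ≤ Pr.card * (2 * K) := by
        intro T k
        have hsub : T.filter (fun n => g n = k) ⊆
            Pr.biUnion (fun p => T.filter
              (fun n => ((q p.1 n : ℤ) - q p.2 n).natAbs = k)) := by
          intro n hn
          rw [Finset.mem_filter] at hn
          obtain ⟨p, hp, hpeq⟩ := Finset.exists_mem_eq_inf' hPrne
            (fun p => ((q p.1 n : ℤ) - q p.2 n).natAbs)
          refine Finset.mem_biUnion.2 ⟨p, hp, Finset.mem_filter.2 ⟨hn.1, ?_⟩⟩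
          have hgn : g n = ((q p.1 n : ℤ) - q p.2 n).natAbs := hpeq
          rw [← hgn]
          exact hn.2
        calc (T.filter (fun n => g n = k)).card
            ≤ (Pr.biUnion (fun p => T.filter
              (fun n => ((q p.1 n : ℤ) - q p.2 n).natAbs = k))).card :=
              Finset.card_le_card hsub
          _ ≤ ∑ p ∈ Pr, (T.filter
              (fun n => ((q p.1 n : ℤ) - q p.2 n).natAbs = k)).card :=
              Finset.card_biUnion_le
          _ ≤ ∑ _p ∈ Pr, 2 * K := by
              refine Finset.sum_le_sum (fun p hp => ?_)
              have hij : p.1 ≠ p.2 := (Finset.mem_filter.mp hp).2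
              have hsub2 : T.filter (fun n => ((q p.1 n : ℤ) - q p.2 n).natAbs = k) ⊆
                  (T.filter (fun n => (q p.1 n : ℤ) - q p.2 n = (k : ℤ))) ∪
                  (T.filter (fun n => (q p.1 n : ℤ) - q p.2 n = -(k : ℤ))) := by
                intro n hn
                rw [Finset.mem_filter] at hn
                rcases Int.natAbs_eq_iff.mp hn.2 with h | h
                · exact Finset.mem_union_left _ (Finset.mem_filter.2 ⟨hn.1, h⟩)
                · exact Finset.mem_union_right _ (Finset.mem_filter.2 ⟨hn.1, h⟩)
              calc (T.filter (fun n => ((q p.1 n : ℤ) - q p.2 n).natAbs = k)).card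
                  ≤ ((T.filter (fun n => (q p.1 n : ℤ) - q p.2 n = (k : ℤ))) ∪
                    (T.filter (fun n => (q p.1 n : ℤ) - q p.2 n = -(k : ℤ)))).card :=
                    Finset.card_le_card hsub2
                _ ≤ (T.filter (fun n => (q p.1 n : ℤ) - q p.2 n = (k : ℤ))).card +
                    (T.filter (fun n => (q p.1 n : ℤ) - q p.2 n = -(k : ℤ))).card :=
                    Finset.card_union_le _ _
                _ ≤ K + K := add_le_add (hcK T p.1 p.2 hij _) (hcK T p.1 p.2 hij _)
                _ = 2 * K := by ring
          _ = Pr.card * (2 * K) := by rw [Finset.sum_const, smul_eq_mul]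
      -- the constant
      refine ⟨(ℓ * K : ℕ) + (Pr.card * (2 * K) : ℕ) * ∑' k, E k, fun N => ?_⟩
      set T := Finset.Icc 1 N with hTdef
      have habs : |(∑ n ∈ T, (μ (⋂ i : Fin ℓ, Γ (q i n))).toReal) -
          (∑ n ∈ T, ∏ i : Fin ℓ, (μ (Γ (q i n))).toReal)| ≤
          ∑ n ∈ T, |(μ (⋂ i, Γ (q i n))).toReal - ∏ i, (μ (Γ (q i n))).toReal| := by
        rw [← Finset.sum_sub_distrib]
        exact Finset.abs_sum_le_sum_abs _ _
      set d : ℕ → ℝ := fun n =>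
        |(μ (⋂ i, Γ (q i n))).toReal - ∏ i, (μ (Γ (q i n))).toReal| with hddef
      have hsplit : ∑ n ∈ T, d n =
          (∑ n ∈ T.filter (fun n => ∀ i, 1 ≤ q i n), d n) +
          (∑ n ∈ T.filter (fun n => ¬ ∀ i, 1 ≤ q i n), d n) :=
        (Finset.sum_filter_add_sum_filter_not T _ d).symm
      -- good part
      have hgoodsum : ∑ n ∈ T.filter (fun n => ∀ i, 1 ≤ q i n), d n ≤
          (Pr.card * (2 * K) : ℕ) * ∑' k, E k := by
        calc ∑ n ∈ T.filter (fun n => ∀ i, 1 ≤ q i n), d n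
            ≤ ∑ n ∈ T.filter (fun n => ∀ i, 1 ≤ q i n), E (g n) := by
              refine Finset.sum_le_sum (fun n hn => ?_)
              exact hgood n (Finset.mem_filter.mp hn).2
          _ ≤ ∑ n ∈ T, E (g n) :=
              Finset.sum_le_sum_of_subset_of_nonneg (Finset.filter_subset _ _)
                (fun n _ _ => hEnn (g n))
          _ ≤ (Pr.card * (2 * K) : ℕ) * ∑' k, E k :=
              aux_count g E hEnn hEsum _ T (hfiber T)
      -- bad part
      have hbadcard : (T.filter (fun n => ¬ ∀ i, 1 ≤ q i n)).card ≤ ℓ * K := by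
        have hsub : T.filter (fun n => ¬ ∀ i, 1 ≤ q i n) ⊆
            Finset.univ.biUnion (fun i : Fin ℓ => T.filter (fun n => q i n = 0)) := by
          intro n hn
          rw [Finset.mem_filter] at hn
          push_neg at hn
          obtain ⟨i, hi⟩ := hn.2
          exact Finset.mem_biUnion.2 ⟨i, Finset.mem_univ _,
            Finset.mem_filter.2 ⟨hn.1, by omega⟩⟩
        calc (T.filter (fun n => ¬ ∀ i, 1 ≤ q i n)).card
            ≤ (Finset.univ.biUnion
                (fun i : Fin ℓ => T.filter (fun n => q i n = 0))).card :=
              Finset.card_le_card hsub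
          _ ≤ ∑ i : Fin ℓ, (T.filter (fun n => q i n = 0)).card :=
              Finset.card_biUnion_le
          _ ≤ ∑ _i : Fin ℓ, K := by
              refine Finset.sum_le_sum (fun i _ => ?_)
              have h1 := hq2 i 0
              have hsub2 : ((T.filter (fun n => q i n = 0)) : Set ℕ) ⊆
                  {n : ℕ | q i n = 0} := by
                intro n hn
                simp only [Finset.coe_filter, Set.mem_setOf_eq] at hn ⊢
                exact hn.2
              calc (T.filter (fun n => q i n = 0)).card
                  = ((T.filter (fun n => q i n = 0)) : Set ℕ).ncard :=
                    (Set.ncard_coe_finset _).symm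
                _ ≤ {n : ℕ | q i n = 0}.ncard := Set.ncard_le_ncard hsub2 h1.1
                _ ≤ K := h1.2
          _ = ℓ * K := by simp [Finset.sum_const, mul_comm]
      have hbadsum : ∑ n ∈ T.filter (fun n => ¬ ∀ i, 1 ≤ q i n), d n ≤ (ℓ * K : ℕ) := by
        calc ∑ n ∈ T.filter (fun n => ¬ ∀ i, 1 ≤ q i n), d n
            ≤ ∑ _n ∈ T.filter (fun n => ¬ ∀ i, 1 ≤ q i n), (1:ℝ) := by
              refine Finset.sum_le_sum (fun n _ => ?_)
              have h1 := hItoReal_le1 n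
              have h2 := hprodle1 n
              have h3 : (0:ℝ) ≤ (μ (⋂ i, Γ (q i n))).toReal := ENNReal.toReal_nonneg
              have h4 : (0:ℝ) ≤ ∏ i, (μ (Γ (q i n))).toReal :=
                Finset.prod_nonneg fun i _ => ENNReal.toReal_nonneg
              rw [hddef]
              rw [abs_sub_le_iff]
              constructor <;> linarith
          _ = ((T.filter (fun n => ¬ ∀ i, 1 ≤ q i n)).card : ℝ) := by
              rw [Finset.sum_const, nsmul_eq_mul, mul_one]
          _ ≤ (ℓ * K : ℕ) := by exact_mod_cast hbadcard
      calc |(∑ n ∈ T, (μ (⋂ i : Fin ℓ, Γ (q i n))).toReal) -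
          (∑ n ∈ T, ∏ i : Fin ℓ, (μ (Γ (q i n))).toReal)| ≤ ∑ n ∈ T, d n := habs
        _ = _ + _ := hsplit
        _ ≤ (Pr.card * (2 * K) : ℕ) * ∑' k, E k + (ℓ * K : ℕ) :=
            add_le_add hgoodsum hbadsum
        _ = (ℓ * K : ℕ) + (Pr.card * (2 * K) : ℕ) * ∑' k, E k := by ring
  obtain ⟨C, hC⟩ := part1
  exact ⟨⟨C, hC⟩, fun hb => aux_ratio
    (fun N => ∑ n ∈ Finset.Icc 1 N, (μ (⋂ i : Fin ℓ, Γ (q i n))).toReal)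
    (fun N => ∑ n ∈ Finset.Icc 1 N, ∏ i : Fin ℓ, (μ (Γ (q i n))).toReal) C hC hb⟩
end

section
/- Let Ω = A^ℤ be a sequence space over a finite or countable alphabet A which is not a singleton, with T the left shift and P a T-invariant ψ-mixing (or φ-mixing) probability measure with P([a]) > 0 for each letter a. Then there exists α > 0 such that every cylinder set C defined on an interval of integers [l, r] satisfies P(C) ≤ e^{−α(r−l)}. -/
open MeasureTheory Filter

/-- The left shift on a two-sided sequence space. -/
def shf {𝒜 : Type*} (ω : ℤ → 𝒜) : ℤ → 𝒜 := fun i => ω (i + 1)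

/-- The cylinder set fixing coordinates on the interval `[l, r]` to agree with `f`. -/
def cylEvent {𝒜 : Type*} (l r : ℤ) (f : ℤ → 𝒜) : Set (ℤ → 𝒜) :=
  {ω | ∀ i : ℤ, l ≤ i → i ≤ r → ω i = f i}

/-- The σ-algebra generated by cylinder sets on intervals `[l, m]`, `l ≤ m`
(the "past up to time m"). -/
def pastAlg {𝒜 : Type*} (m : ℤ) : MeasurableSpace (ℤ → 𝒜) :=
  MeasurableSpace.generateFrom {S | ∃ (l : ℤ) (f : ℤ → 𝒜), S = cylEvent l m f}

/-- The σ-algebra generated by cylinder sets on intervals `[m, r]`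
(the "future from time m"). -/
def futureAlg {𝒜 : Type*} (m : ℤ) : MeasurableSpace (ℤ → 𝒜) :=
  MeasurableSpace.generateFrom {S | ∃ (r : ℤ) (f : ℤ → 𝒜), S = cylEvent m r f}

/-- for a shift-invariant φ-mixing probability measure on a sequence
space over a non-singleton countable alphabet with all 1-cylinders of positive
measure, cylinder measures decay exponentially in the length of the base interval. -/
theorem stmt12 {𝒜 : Type*} [MeasurableSpace 𝒜] [MeasurableSingletonClass 𝒜]
    [Countable 𝒜] [Nontrivial 𝒜]
    (μ : Measure (ℤ → 𝒜)) [IsProbabilityMeasure μ]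
    (hT : MeasurePreserving (shf (𝒜 := 𝒜)) μ μ)
    (ha : ∀ a : 𝒜, 0 < μ {ω | ω 0 = a})
    (φ : ℕ → ℝ) (hφ0 : Tendsto φ atTop (nhds 0))
    (hmix : ∀ (m : ℤ) (k : ℕ) (A B : Set (ℤ → 𝒜)),
      MeasurableSet[pastAlg m] A → MeasurableSet[futureAlg (m + k)] B → μ A ≠ 0 →
      |(μ (A ∩ B)).toReal / (μ A).toReal - (μ B).toReal| ≤ φ k) :
    ∃ α : ℝ, 0 < α ∧ ∀ (l r : ℤ) (f : ℤ → 𝒜), l ≤ r →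
      (μ (cylEvent l r f)).toReal ≤ Real.exp (-α * (r - l)) := by
  obtain ⟨a, b, hab⟩ := exists_pair_ne 𝒜
  have hme : ∀ (i : ℤ) (x : 𝒜), MeasurableSet {ω : ℤ → 𝒜 | ω i = x} := fun i x =>
    show MeasurableSet ((fun ω : ℤ → 𝒜 => ω i) ⁻¹' {x}) from
      (measurable_pi_apply i) (measurableSet_singleton x)
  -- shift invariance of one-coordinate events
  have hstep : ∀ (i : ℤ) (x : 𝒜), μ {ω | ω (i + 1) = x} = μ {ω | ω i = x} := by
    intro i x
    have h : {ω : ℤ → 𝒜 | ω (i + 1) = x} = shf ⁻¹' {ω | ω i = x} := rfl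
    rw [h, hT.measure_preimage (hme i x).nullMeasurableSet]
  have hshift : ∀ (i : ℤ) (x : 𝒜), μ {ω | ω i = x} = μ {ω | ω 0 = x} := by
    intro i x
    induction i using Int.induction_on with
    | zero => rfl
    | succ n ih => rw [hstep, ih]
    | pred n ih => rw [← ih, ← hstep (-(n : ℤ) - 1) x]; norm_num
  set pa := (μ {ω | ω 0 = a}).toReal with hpa_def
  set pb := (μ {ω | ω 0 = b}).toReal with hpb_def
  have hpa : 0 < pa := ENNReal.toReal_pos (ha a).ne' (measure_ne_top _ _)
  have hpb : 0 < pb := ENNReal.toReal_pos (ha b).ne' (measure_ne_top _ _)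
  have hpa1 : pa ≤ 1 := by
    have := prob_le_one (μ := μ) (s := {ω | ω 0 = a})
    simpa [hpa_def] using ENNReal.toReal_mono ENNReal.one_ne_top this
  have hpb1 : pb ≤ 1 := by
    have := prob_le_one (μ := μ) (s := {ω | ω 0 = b})
    simpa [hpb_def] using ENNReal.toReal_mono ENNReal.one_ne_top this
  set c := max (1 - pa) (1 - pb) with hc_def
  have hc1 : c < 1 := max_lt (by linarith) (by linarith)
  have hc0 : 0 ≤ c := le_trans (by linarith) (le_max_left _ _)
  -- every single-coordinate event has measure at most c
  have hsingle : ∀ (i : ℤ) (x : 𝒜), (μ {ω | ω i = x}).toReal ≤ c := by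
    have haux : ∀ (i : ℤ) (x y : 𝒜), x ≠ y →
        (μ {ω | ω i = x}).toReal ≤ 1 - (μ {ω | ω 0 = y}).toReal := by
      intro i x y hxy
      have hdisj : Disjoint {ω : ℤ → 𝒜 | ω i = x} {ω | ω i = y} := by
        rw [Set.disjoint_left]
        intro ω h1 h2
        exact hxy (h1 ▸ h2 ▸ rfl)
      have hU := measure_union (μ := μ) hdisj (hme i y)
      have hle : μ {ω : ℤ → 𝒜 | ω i = x} + μ {ω | ω i = y} ≤ 1 := by
        rw [← hU]; exact prob_le_one
      have := ENNReal.toReal_mono ENNReal.one_ne_top hle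
      rw [ENNReal.toReal_add (measure_ne_top _ _) (measure_ne_top _ _),
        ENNReal.toReal_one] at this
      rw [hshift i y] at this
      linarith
    intro i x
    rcases ne_or_eq x a with h | h
    · exact le_trans (haux i x a h) (le_max_left _ _)
    · subst h
      exact le_trans (haux i x b hab) (le_max_right _ _)
  set θ := (1 + c) / 2 with hθ_def
  have hθ0 : 0 < θ := by positivity
  have hθ1 : θ < 1 := by rw [hθ_def]; linarith
  have hcθ : c ≤ θ := by rw [hθ_def]; linarith
  -- choose a mixing gap k ≥ 1 with φ k ≤ (1-c)/2
  have hev : ∀ᶠ n in atTop, |φ n| < (1 - c) / 2 := by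
    have := hφ0 (Metric.ball_mem_nhds 0 (by linarith : (0:ℝ) < (1 - c) / 2))
    filter_upwards [this] with n hn
    simpa [Real.dist_eq] using hn
  obtain ⟨N, hN⟩ := eventually_atTop.1 hev
  set k := max N 1 with hk_def
  have hk1 : 1 ≤ k := le_max_right _ _
  have hφk : φ k ≤ (1 - c) / 2 :=
    le_of_lt (lt_of_le_of_lt (le_abs_self _) (hN k (le_max_left _ _)))
  -- the key recursion
  have key : ∀ n : ℕ, ∀ l r : ℤ, ∀ f : ℤ → 𝒜, r - l = n →
      (μ (cylEvent l r f)).toReal ≤ θ ^ (n / k + 1) := by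
    intro n
    induction n using Nat.strong_induction_on with
    | _ n ih =>
      intro l r f hn
      by_cases hnk : n < k
      · have hsub : cylEvent l r f ⊆ {ω | ω l = f l} := fun ω hω => hω l le_rfl (by omega)
        have h1 : (μ (cylEvent l r f)).toReal ≤ (μ {ω | ω l = f l}).toReal :=
          ENNReal.toReal_mono (measure_ne_top _ _) (measure_mono hsub)
        rw [Nat.div_eq_of_lt hnk, pow_one]
        exact le_trans h1 (le_trans (hsingle l (f l)) hcθ)
      · push_neg at hnk
        set m := r - (k : ℤ) with hm_def
        have hlm : l ≤ m := by omega
        have hBeq : cylEvent r r f = {ω : ℤ → 𝒜 | ω r = f r} := by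
          ext ω
          constructor
          · exact fun h => h r le_rfl le_rfl
          · intro h i hi1 hi2
            have : i = r := le_antisymm hi2 hi1
            rw [this]; exact h
        have hsub : cylEvent l r f ⊆ cylEvent l m f ∩ {ω | ω r = f r} := by
          intro ω hω
          exact ⟨fun i hi1 hi2 => hω i hi1 (by omega), hω r (by omega) le_rfl⟩
        by_cases hA : μ (cylEvent l m f) = 0
        · have h0 : μ (cylEvent l r f) = 0 :=
            le_antisymm (le_trans (measure_mono (fun ω hω => (hsub hω).1)) hA.le) zero_le
          rw [h0]
          simp only [ENNReal.toReal_zero]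
          positivity
        · have genA : MeasurableSet[pastAlg m] (cylEvent l m f) :=
            MeasurableSpace.measurableSet_generateFrom ⟨l, f, rfl⟩
          have genB : MeasurableSet[futureAlg (m + k)] {ω : ℤ → 𝒜 | ω r = f r} := by
            have hmk : m + (k : ℤ) = r := by omega
            rw [hmk]
            exact MeasurableSpace.measurableSet_generateFrom ⟨r, f, hBeq.symm⟩
          have hAB := hmix m k (cylEvent l m f) {ω | ω r = f r} genA genB hA
          set p := (μ (cylEvent l m f)).toReal with hp_def
          set q := (μ {ω : ℤ → 𝒜 | ω r = f r}).toReal with hq_def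
          have hp0 : 0 < p := ENNReal.toReal_pos hA (measure_ne_top _ _)
          have hx : (μ (cylEvent l m f ∩ {ω | ω r = f r})).toReal ≤ p * (q + φ k) := by
            have h1 := (abs_le.1 hAB).2
            rw [mul_comm]
            exact (div_le_iff₀ hp0).1 (by linarith)
          have hqc : q ≤ c := hsingle r (f r)
          have hqθ : q + φ k ≤ θ := by rw [hθ_def]; linarith
          have hih : p ≤ θ ^ ((n - k) / k + 1) := by
            apply ih (n - k) (by omega) l m f
            omega
          have hchain : (μ (cylEvent l r f)).toReal ≤ θ ^ ((n - k) / k + 1) * θ := by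
            calc (μ (cylEvent l r f)).toReal
                ≤ (μ (cylEvent l m f ∩ {ω | ω r = f r})).toReal :=
                  ENNReal.toReal_mono (measure_ne_top _ _) (measure_mono hsub)
              _ ≤ p * (q + φ k) := hx
              _ ≤ p * θ := by nlinarith
              _ ≤ θ ^ ((n - k) / k + 1) * θ := by nlinarith [pow_pos hθ0 ((n - k) / k + 1)]
          have hexp : (n - k) / k + 2 = n / k + 1 := by
            have := Nat.div_eq_sub_div (lt_of_lt_of_le one_pos hk1) hnk
            omega
          calc (μ (cylEvent l r f)).toReal ≤ θ ^ ((n - k) / k + 1) * θ := hchain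
            _ = θ ^ ((n - k) / k + 2) := by ring
            _ = θ ^ (n / k + 1) := by rw [hexp]
  -- conclude with α = -log θ / k
  refine ⟨-Real.log θ / k, ?_, ?_⟩
  · have hlog : Real.log θ < 0 := Real.log_neg hθ0 hθ1
    have hk' : (0:ℝ) < (k:ℝ) := by exact_mod_cast lt_of_lt_of_le one_pos hk1
    exact div_pos (neg_pos.2 hlog) hk'
  · intro l r f hlr
    set n := (r - l).toNat with hn_def
    have hrl : r - l = (n : ℤ) := by omega
    have hkey := key n l r f hrl
    have hlog : Real.log θ < 0 := Real.log_neg hθ0 hθ1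
    have hkpos : (0:ℝ) < (k:ℝ) := by exact_mod_cast lt_of_lt_of_le one_pos hk1
    have hbound : θ ^ (n / k + 1) ≤ Real.exp (-(-Real.log θ / k) * (r - l)) := by
      have h1 : θ ^ (n / k + 1) = Real.exp ((↑(n / k + 1)) * Real.log θ) := by
        rw [Real.exp_nat_mul, Real.exp_log hθ0]
      rw [h1]
      apply Real.exp_le_exp.2
      have hdiv : ((n : ℝ)) / (k : ℝ) ≤ (↑(n / k + 1) : ℝ) := by
        rw [div_le_iff₀ hkpos]
        have h2 := Nat.div_add_mod n k
        have h3 := Nat.mod_lt n (lt_of_lt_of_le one_pos hk1)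
        push_cast
        nlinarith [Nat.mod_lt n (lt_of_lt_of_le one_pos hk1),
          (by exact_mod_cast congrArg (Nat.cast : ℕ → ℝ) (Nat.div_add_mod n k) :
            (k:ℝ) * ↑(n / k) + ↑(n % k) = (n:ℝ)),
          (by exact_mod_cast h3 : ((n % k : ℕ) : ℝ) < (k:ℝ))]
      have hrln : ((r : ℝ) - l) = (n : ℝ) := by exact_mod_cast hrl
      rw [hrln]
      have : -(-Real.log θ / ↑k) * ↑n = ((n:ℝ) / k) * Real.log θ := by ring
      rw [this]
      exact mul_le_mul_of_nonpos_right hdiv hlog.le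
    exact le_trans hkey hbound
end

section
/- Let Ω = A^ℤ with left shift T and T-invariant probability P with summable φ-mixing coefficient. Let q : ℕ → ℕ satisfy Assumption 2.1 (finitely many solutions to q(n) = k for each k, and only finitely many pairs m < n with q(n) ≤ q(m)). Let C_n be cylinders on intervals Λ_n = [l_n, r_n] such that Λ_m is right D-nested in Λ_n for all m < n (i.e. r_m < r_n + D). If ∑_{n=1}^N P(C_n) → ∞, then almost surely (∑_{n=1}^N 1_{C_n} ∘ T^{q(n)}) / (∑_{n=1}^N P(C_n)) → 1 as N → ∞. -/
open MeasureTheory Filter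

lemma shf_iterate {𝒜 : Type*} (k : ℕ) (ω : ℤ → 𝒜) (i : ℤ) : shf^[k] ω i = ω (i + k) := by
  induction k generalizing ω with
  | zero => simp
  | succ k ih =>
    rw [Function.iterate_succ_apply, ih]
    simp only [shf]
    congr 1
    push_cast
    ring

lemma preimage_cyl {𝒜 : Type*} (k : ℕ) (l r : ℤ) (f : ℤ → 𝒜) :
    (shf^[k]) ⁻¹' (cylEvent l r f) = cylEvent (l + k) (r + k) (fun j => f (j - k)) := by
  ext ω
  simp only [Set.mem_preimage, cylEvent, Set.mem_setOf_eq, shf_iterate]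
  constructor
  · intro h j hj1 hj2
    have := h (j - k) (by omega) (by omega)
    simpa using this
  · intro h i hi1 hi2
    have := h (i + k) (by omega) (by omega)
    simpa using this

lemma measurableSet_cyl {𝒜 : Type*} [MeasurableSpace 𝒜] [MeasurableSingletonClass 𝒜]
    (l r : ℤ) (f : ℤ → 𝒜) : MeasurableSet (cylEvent l r f) := by
  have : cylEvent l r f = ⋂ i : ℤ, {ω : ℤ → 𝒜 | l ≤ i → i ≤ r → ω i = f i} := by
    ext ω; simp [cylEvent]
  rw [this]
  refine MeasurableSet.iInter fun i => ?_
  by_cases h1 : l ≤ i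
  · by_cases h2 : i ≤ r
    · have : {ω : ℤ → 𝒜 | l ≤ i → i ≤ r → ω i = f i} = (fun ω : ℤ → 𝒜 => ω i) ⁻¹' {f i} := by
        ext ω; simp [h1, h2]
      rw [this]
      exact measurable_pi_apply i (measurableSet_singleton _)
    · have : {ω : ℤ → 𝒜 | l ≤ i → i ≤ r → ω i = f i} = Set.univ := by ext ω; simp [h2]
      rw [this]; exact MeasurableSet.univ
  · have : {ω : ℤ → 𝒜 | l ≤ i → i ≤ r → ω i = f i} = Set.univ := by ext ω; simp [h1]
    rw [this]; exact MeasurableSet.univ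

lemma cyl_mem_future {𝒜 : Type*} [Countable 𝒜] (m₀ l r : ℤ) (h : m₀ ≤ l) (f : ℤ → 𝒜) :
    MeasurableSet[futureAlg m₀] (cylEvent l r f) := by
  by_cases hlr : r < l
  · have : cylEvent l r f = cylEvent m₀ (m₀ - 1) f := by
      ext ω; constructor <;> intro _ i h1 h2 <;> omega
    rw [this]
    exact MeasurableSpace.measurableSet_generateFrom ⟨m₀ - 1, f, rfl⟩
  push_neg at hlr
  classical
  have : cylEvent l r f = ⋃ v : {x // x ∈ Finset.Icc m₀ (l - 1)} → 𝒜,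
      cylEvent m₀ r (fun i => if hi : i ∈ Finset.Icc m₀ (l - 1) then v ⟨i, hi⟩ else f i) := by
    ext ω
    simp only [Set.mem_iUnion, cylEvent, Set.mem_setOf_eq]
    constructor
    · intro hω
      refine ⟨fun x => ω x.1, fun i h1 h2 => ?_⟩
      split
      · rfl
      · next hni => exact hω i (by simp at hni; omega) h2
    · rintro ⟨v, hv⟩ i h1 h2
      have := hv i (by omega) h2
      rwa [dif_neg (by simp; omega)] at this
  rw [this]
  exact MeasurableSet.iUnion fun v =>
    MeasurableSpace.measurableSet_generateFrom ⟨r, _, rfl⟩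

lemma sum_comp_le_of_fiber_card_le {f : ℕ → ℝ} (hf : Summable f) (h0 : ∀ n, 0 ≤ f n)
    {u : ℕ → ℕ} {κ : ℕ}
    (hu : ∀ v : ℕ, ∀ s : Finset ℕ, (s.filter (fun t => u t = v)).card ≤ κ)
    (s : Finset ℕ) : ∑ t ∈ s, f (u t) ≤ κ * ∑' n, f n := by
  classical
  rw [Finset.sum_comp]
  calc ∑ b ∈ s.image u, (s.filter (fun a => u a = b)).card • f b
      ≤ ∑ b ∈ s.image u, κ * f b := by
        refine Finset.sum_le_sum fun b _ => ?_
        rw [nsmul_eq_mul]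
        exact mul_le_mul_of_nonneg_right (by exact_mod_cast hu b s) (h0 b)
    _ = κ * ∑ b ∈ s.image u, f b := by rw [Finset.mul_sum]
    _ ≤ κ * ∑' n, f n :=
        mul_le_mul_of_nonneg_left (hf.sum_le_tsum _ (fun i _ => h0 i)) (by positivity)

lemma summable_comp_of_fiber_card_le {f : ℕ → ℝ} (hf : Summable f) (h0 : ∀ n, 0 ≤ f n)
    {u : ℕ → ℕ} {κ : ℕ}
    (hu : ∀ v : ℕ, ∀ s : Finset ℕ, (s.filter (fun t => u t = v)).card ≤ κ) :
    Summable (fun t => f (u t)) :=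
  summable_of_sum_le (fun t => h0 (u t)) (sum_comp_le_of_fiber_card_le hf h0 hu)

lemma fiber_card_div {d c : ℕ} (hc : 0 < c) (v : ℕ) (s : Finset ℕ) :
    (s.filter (fun t => (t - d) / c = v)).card ≤ d + c := by
  classical
  have hsub : s.filter (fun t => (t - d) / c = v) ⊆ Finset.Icc (c * v) (c * v + d + c - 1) := by
    intro t ht
    simp only [Finset.mem_filter] at ht
    obtain ⟨-, ht⟩ := ht
    have h1 := Nat.div_add_mod (t - d) c
    have h2 := Nat.mod_lt (t - d) hc
    rw [ht] at h1
    simp only [Finset.mem_Icc]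
    omega
  calc (s.filter (fun t => (t - d) / c = v)).card
      ≤ (Finset.Icc (c * v) (c * v + d + c - 1)).card := Finset.card_le_card hsub
    _ = d + c := by rw [Nat.card_Icc]; omega

lemma mix_upper {𝒜 : Type*} [MeasurableSpace 𝒜] (μ : Measure (ℤ → 𝒜)) [IsProbabilityMeasure μ]
    (φk : ℝ) (A B : Set (ℤ → 𝒜))
    (h : μ A ≠ 0 → |(μ (A ∩ B)).toReal / (μ A).toReal - (μ B).toReal| ≤ φk) :
    (μ (A ∩ B)).toReal ≤ (μ A).toReal * ((μ B).toReal + φk) := by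
  by_cases hA : μ A = 0
  · have : μ (A ∩ B) = 0 := measure_mono_null Set.inter_subset_left hA
    simp [this, hA]
  · have hA' : 0 < (μ A).toReal := ENNReal.toReal_pos hA (measure_ne_top μ A)
    have h2 := h hA
    have h3 : (μ (A ∩ B)).toReal / (μ A).toReal ≤ (μ B).toReal + φk := by
      have := abs_le.1 h2
      linarith [this.2]
    calc (μ (A ∩ B)).toReal = ((μ (A ∩ B)).toReal / (μ A).toReal) * (μ A).toReal := by
          field_simp
      _ ≤ ((μ B).toReal + φk) * (μ A).toReal := mul_le_mul_of_nonneg_right h3 hA'.le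
      _ = (μ A).toReal * ((μ B).toReal + φk) := mul_comm _ _

lemma decay_lemma {𝒜 : Type*} [MeasurableSpace 𝒜] (μ : Measure (ℤ → 𝒜)) [IsProbabilityMeasure μ]
    (β' : ℝ) (hβ' : 0 ≤ β') (s : ℕ) (hs : 0 < s)
    (hstep : ∀ (l r : ℤ) (f : ℤ → 𝒜), l + s ≤ r →
      (μ (cylEvent l r f)).toReal ≤ β' * (μ (cylEvent l (r - s) f)).toReal) :
    ∀ (j : ℕ) (l r : ℤ) (f : ℤ → 𝒜), l + j * s ≤ r → (μ (cylEvent l r f)).toReal ≤ β' ^ j := by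
  intro j
  induction j with
  | zero =>
    intro l r f _
    simpa using ENNReal.toReal_le_of_le_ofReal zero_le_one (by simp [prob_le_one])
  | succ j ih =>
    intro l r f hle
    have h1 : l + (s : ℤ) ≤ r := by
      push_cast at hle ⊢
      nlinarith [Nat.cast_nonneg (α := ℤ) j, (by exact_mod_cast hs : (0:ℤ) < s)]
    calc (μ (cylEvent l r f)).toReal ≤ β' * (μ (cylEvent l (r - s) f)).toReal := hstep l r f h1
      _ ≤ β' * β' ^ j := by
          refine mul_le_mul_of_nonneg_left (ih l (r - s) f ?_) hβ'
          push_cast at hle ⊢; linarith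
      _ = β' ^ (j + 1) := by ring

set_option maxHeartbeats 2000000 in
/-- conventional (ℓ = 1) dynamical strong Borel–Cantelli property for
shifts with summable φ-mixing coefficient, along a sequence `q(n)` satisfying
Assumption 2.1, for cylinders `C_n` on right `D`-nested intervals. -/
theorem stmt13 {𝒜 : Type*} [MeasurableSpace 𝒜] [MeasurableSingletonClass 𝒜]
    [Countable 𝒜] [Nontrivial 𝒜]
    (μ : Measure (ℤ → 𝒜)) [IsProbabilityMeasure μ]
    (hT : MeasurePreserving (shf (𝒜 := 𝒜)) μ μ)
    (ha : ∀ a : 𝒜, 0 < μ {ω | ω 0 = a})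
    (φ : ℕ → ℝ) (hφ : Summable φ)
    (hmix : ∀ (m : ℤ) (k : ℕ) (A B : Set (ℤ → 𝒜)),
      MeasurableSet[pastAlg m] A → MeasurableSet[futureAlg (m + k)] B → μ A ≠ 0 →
      |(μ (A ∩ B)).toReal / (μ A).toReal - (μ B).toReal| ≤ φ k)
    (q : ℕ → ℕ) (K : ℕ) (hK : 0 < K)
    (hq1 : ∀ k : ℕ, {n : ℕ | q n = k}.Finite ∧ {n : ℕ | q n = k}.ncard ≤ K)
    (hq2 : {p : ℕ × ℕ | p.1 < p.2 ∧ q p.2 ≤ q p.1}.Finite ∧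
      {p : ℕ × ℕ | p.1 < p.2 ∧ q p.2 ≤ q p.1}.ncard ≤ K)
    (D : ℤ) (hD : 0 < D)
    (l r : ℕ → ℤ) (f : ℕ → ℤ → 𝒜) (hlr : ∀ n, l n ≤ r n)
    (hnest : ∀ m n : ℕ, m < n → r m < r n + D)
    (hdiv : Tendsto (fun N : ℕ =>
      ∑ n ∈ Finset.Icc 1 N, (μ (cylEvent (l n) (r n) (f n))).toReal) atTop atTop) :
    ∀ᵐ ω ∂μ, Tendsto (fun N : ℕ =>
      (∑ n ∈ Finset.Icc 1 N,
        (cylEvent (l n) (r n) (f n)).indicator (fun _ => (1 : ℝ)) (shf^[q n] ω)) /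
      (∑ n ∈ Finset.Icc 1 N, (μ (cylEvent (l n) (r n) (f n))).toReal))
      atTop (nhds 1) := by
  classical
  set C : ℕ → Set (ℤ → 𝒜) := fun n => cylEvent (l n) (r n) (f n) with hCdef
  set E : ℕ → Set (ℤ → 𝒜) := fun n => (shf^[q n]) ⁻¹' (C n) with hEdef
  have hEeq : ∀ n, E n = cylEvent (l n + q n) (r n + q n) (fun j => f n (j - q n)) :=
    fun n => preimage_cyl (q n) (l n) (r n) (f n)
  have hCmeas : ∀ n, MeasurableSet (C n) := fun n => measurableSet_cyl _ _ _
  have hEmeas : ∀ n, MeasurableSet (E n) :=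
    fun n => (hT.iterate (q n)).measurable (hCmeas n)
  have hmuE : ∀ n, μ (E n) = μ (C n) :=
    fun n => (hT.iterate (q n)).measure_preimage (hCmeas n).nullMeasurableSet
  set a : ℕ → ℝ := fun n => (μ (C n)).toReal with hadef
  have ha0 : ∀ n, 0 ≤ a n := fun n => ENNReal.toReal_nonneg
  have ha1 : ∀ n, a n ≤ 1 := fun n => by
    have : μ (C n) ≤ 1 := prob_le_one
    simpa using ENNReal.toReal_mono (by simp) this
  set A : ℕ → ℝ := fun N => ∑ n ∈ Finset.Icc 1 N, a n with hAdef
  set Y : ℕ → (ℤ → 𝒜) → ℝ := fun n => (E n).indicator (fun _ => (1:ℝ)) with hYdef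
  set S : ℕ → (ℤ → 𝒜) → ℝ := fun N ω => ∑ n ∈ Finset.Icc 1 N, Y n ω with hSdef
  have hY0 : ∀ n ω, 0 ≤ Y n ω := fun n ω => Set.indicator_nonneg (fun _ _ => zero_le_one) ω
  have hY1 : ∀ n ω, Y n ω ≤ 1 := fun n ω => Set.indicator_le_self' (fun _ _ => zero_le_one) ω
  have hdivA : Tendsto A atTop atTop := by
    simpa only [hAdef, hadef, hCdef] using hdiv
  -- reduce the goal
  suffices hmain : ∀ᵐ ω ∂μ, Tendsto (fun N => S N ω / A N) atTop (nhds 1) by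
    filter_upwards [hmain] with ω hω
    have heq : (fun N : ℕ =>
        (∑ n ∈ Finset.Icc 1 N,
          (cylEvent (l n) (r n) (f n)).indicator (fun _ => (1 : ℝ)) (shf^[q n] ω)) /
        (∑ n ∈ Finset.Icc 1 N, (μ (cylEvent (l n) (r n) (f n))).toReal))
        = fun N => S N ω / A N := by
      funext N
      have h1 : (∑ n ∈ Finset.Icc 1 N,
          (cylEvent (l n) (r n) (f n)).indicator (fun _ => (1 : ℝ)) (shf^[q n] ω)) = S N ω :=
        Finset.sum_congr rfl fun n _ => by
          simp [hSdef, hYdef, hEdef, hCdef, Set.indicator_apply, Set.mem_preimage]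
      have h2 : (∑ n ∈ Finset.Icc 1 N, (μ (cylEvent (l n) (r n) (f n))).toReal) = A N := by
        simp [hAdef, hadef, hCdef]
      rw [h1, h2]
    rw [heq]
    exact hω
  -- constants
  obtain ⟨a0, b0, hab⟩ := exists_pair_ne 𝒜
  have hcoordmeas : ∀ (c : ℤ) (aa : 𝒜), MeasurableSet {ω : ℤ → 𝒜 | ω c = aa} := by
    intro c aa
    have : {ω : ℤ → 𝒜 | ω c = aa} = (fun ω : ℤ → 𝒜 => ω c) ⁻¹' {aa} := by
      ext ω; simp
    rw [this]
    exact measurable_pi_apply c (measurableSet_singleton aa)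
  have hpre : ∀ (k : ℕ) (c : ℤ) (aa : 𝒜),
      (shf^[k]) ⁻¹' {ω : ℤ → 𝒜 | ω c = aa} = {ω : ℤ → 𝒜 | ω (c + k) = aa} := by
    intro k c aa
    ext ω
    simp [shf_iterate]
  have hcoord : ∀ (c : ℤ) (aa : 𝒜), μ {ω : ℤ → 𝒜 | ω c = aa} = μ {ω : ℤ → 𝒜 | ω 0 = aa} := by
    intro c aa
    rcases le_or_gt 0 c with hc | hc
    · have h := (hT.iterate c.toNat).measure_preimage (hcoordmeas 0 aa).nullMeasurableSet
      rw [hpre c.toNat 0 aa] at h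
      have hc' : (0 : ℤ) + (c.toNat : ℤ) = c := by omega
      rw [hc'] at h
      exact h
    · have h := (hT.iterate (-c).toNat).measure_preimage (hcoordmeas c aa).nullMeasurableSet
      rw [hpre (-c).toNat c aa] at h
      have hc' : c + ((-c).toNat : ℤ) = 0 := by omega
      rw [hc'] at h
      exact h.symm
  set β : ℝ := 1 - min (μ {ω : ℤ → 𝒜 | ω 0 = a0}).toReal (μ {ω : ℤ → 𝒜 | ω 0 = b0}).toReal
    with hβdef
  have htoReal_le_one : ∀ s : Set (ℤ → 𝒜), (μ s).toReal ≤ 1 := fun s => by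
    have : μ s ≤ 1 := prob_le_one
    simpa using ENNReal.toReal_mono (by simp) this
  have hβ1 : β < 1 := by
    have h1 : 0 < (μ {ω : ℤ → 𝒜 | ω 0 = a0}).toReal :=
      ENNReal.toReal_pos (ha a0).ne' (measure_ne_top _ _)
    have h2 : 0 < (μ {ω : ℤ → 𝒜 | ω 0 = b0}).toReal :=
      ENNReal.toReal_pos (ha b0).ne' (measure_ne_top _ _)
    rw [hβdef]
    have := lt_min h1 h2
    linarith
  have hβ0 : 0 ≤ β := by
    have := min_le_left (μ {ω : ℤ → 𝒜 | ω 0 = a0}).toReal (μ {ω : ℤ → 𝒜 | ω 0 = b0}).toReal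
    have := htoReal_le_one {ω : ℤ → 𝒜 | ω 0 = a0}
    rw [hβdef]
    linarith
  have hdisj : ∀ (c : ℤ) (x y : 𝒜), x ≠ y →
      (μ {ω : ℤ → 𝒜 | ω c = x}).toReal + (μ {ω : ℤ → 𝒜 | ω c = y}).toReal ≤ 1 := by
    intro c x y hxy
    have hd : Disjoint {ω : ℤ → 𝒜 | ω c = x} {ω : ℤ → 𝒜 | ω c = y} := by
      rw [Set.disjoint_left]
      intro ω h1 h2
      exact hxy (h1.symm.trans h2)
    have hu := measure_union (μ := μ) hd (hcoordmeas c y)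
    have hle : μ {ω : ℤ → 𝒜 | ω c = x} + μ {ω : ℤ → 𝒜 | ω c = y} ≤ 1 := by
      rw [← hu]; exact prob_le_one
    have := ENNReal.toReal_mono (by simp) hle
    rwa [ENNReal.toReal_add (measure_ne_top _ _) (measure_ne_top _ _), ENNReal.toReal_one] at this
  have hletter : ∀ (c : ℤ) (aa : 𝒜), (μ {ω : ℤ → 𝒜 | ω c = aa}).toReal ≤ β := by
    intro c aa
    rw [hcoord c aa]
    rcases eq_or_ne aa a0 with h | h
    · subst h
      have h2 := hdisj 0 aa b0 hab
      have hm := min_le_right (μ {ω : ℤ → 𝒜 | ω 0 = aa}).toReal (μ {ω : ℤ → 𝒜 | ω 0 = b0}).toReal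
      rw [hβdef]
      linarith
    · have h2 := hdisj 0 aa a0 h
      have hm := min_le_left (μ {ω : ℤ → 𝒜 | ω 0 = a0}).toReal (μ {ω : ℤ → 𝒜 | ω 0 = b0}).toReal
      rw [hβdef]
      linarith
  -- φ is nonnegative
  have huniv_past : ∀ m : ℤ, MeasurableSet[pastAlg (𝒜 := 𝒜) m] Set.univ := by
    intro m
    have : (Set.univ : Set (ℤ → 𝒜)) = cylEvent (m + 1) m (fun _ => a0) := by
      ext ω; constructor <;> intro h
      · intro i h1 h2; omega
      · trivial
    rw [this]
    exact MeasurableSpace.measurableSet_generateFrom ⟨m + 1, _, rfl⟩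
  have hφ0 : ∀ k, 0 ≤ φ k := by
    intro k
    have h := hmix 0 k Set.univ ∅ (huniv_past 0) (@MeasurableSet.empty _ (futureAlg ((0:ℤ) + (k:ℕ)))) (by simp)
    simpa using le_trans (abs_nonneg _) h
  -- choose spacing s₀ with φ s₀ small
  obtain ⟨s₀, hs₀pos, hφs₀⟩ : ∃ s₀ : ℕ, 0 < s₀ ∧ φ s₀ ≤ (1 - β) / 2 := by
    have h0 := hφ.tendsto_atTop_zero
    have hev := h0.eventually (gt_mem_nhds (show (0:ℝ) < (1 - β) / 2 by linarith))
    obtain ⟨k0, hk0⟩ := hev.exists_forall_of_atTop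
    exact ⟨k0 + 1, Nat.succ_pos _, (hk0 (k0 + 1) (Nat.le_succ _)).le⟩
  set β' : ℝ := β + (1 - β) / 2 with hβ'def
  have hβ'0 : 0 ≤ β' := by rw [hβ'def]; linarith
  have hβ'1 : β' < 1 := by rw [hβ'def]; linarith
  -- one-step decay
  have hsingle : ∀ (c : ℤ) (g : ℤ → 𝒜), cylEvent c c g = {ω : ℤ → 𝒜 | ω c = g c} := by
    intro c g
    ext ω
    constructor
    · intro h; exact h c le_rfl le_rfl
    · intro h i h1 h2
      have : i = c := le_antisymm h2 h1
      rw [this]; exact h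
  have hstep : ∀ (l' r' : ℤ) (g : ℤ → 𝒜), l' + s₀ ≤ r' →
      (μ (cylEvent l' r' g)).toReal ≤ β' * (μ (cylEvent l' (r' - s₀) g)).toReal := by
    intro l' r' g hlr'
    have hsub : cylEvent l' r' g ⊆ cylEvent l' (r' - s₀) g ∩ cylEvent r' r' g := by
      intro ω hω
      constructor
      · intro i h1 h2
        exact hω i h1 (by omega)
      · intro i h1 h2
        exact hω i (by omega) h2
    have hApast : MeasurableSet[pastAlg (𝒜 := 𝒜) (r' - s₀)] (cylEvent l' (r' - s₀) g) :=
      MeasurableSpace.measurableSet_generateFrom ⟨l', g, rfl⟩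
    have hBfut : MeasurableSet[futureAlg (𝒜 := 𝒜) ((r' - s₀) + (s₀:ℕ))] (cylEvent r' r' g) := by
      have : ((r' - s₀) + (s₀:ℕ) : ℤ) = r' := by push_cast; ring
      rw [this]
      exact MeasurableSpace.measurableSet_generateFrom ⟨r', g, rfl⟩
    have hmu := mix_upper μ (φ s₀) (cylEvent l' (r' - s₀) g) (cylEvent r' r' g)
      (fun hA => hmix (r' - s₀) s₀ _ _ hApast hBfut hA)
    have hmono : (μ (cylEvent l' r' g)).toReal
        ≤ (μ (cylEvent l' (r' - s₀) g ∩ cylEvent r' r' g)).toReal :=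
      ENNReal.toReal_mono (measure_ne_top _ _) (measure_mono hsub)
    have hBle : (μ (cylEvent r' r' g)).toReal ≤ β := by
      rw [hsingle r' g]; exact hletter r' (g r')
    calc (μ (cylEvent l' r' g)).toReal
        ≤ (μ (cylEvent l' (r' - s₀) g)).toReal * ((μ (cylEvent r' r' g)).toReal + φ s₀) :=
          le_trans hmono hmu
      _ ≤ (μ (cylEvent l' (r' - s₀) g)).toReal * β' := by
          refine mul_le_mul_of_nonneg_left ?_ ENNReal.toReal_nonneg
          rw [hβ'def]; linarith
      _ = β' * (μ (cylEvent l' (r' - s₀) g)).toReal := mul_comm _ _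
  have hdecay := decay_lemma μ β' hβ'0 s₀ hs₀pos hstep
  -- the summable majorant Φ
  set Dn : ℕ := D.toNat with hDndef
  have hDn1 : 1 ≤ Dn := by omega
  have hDcast : (Dn : ℤ) = D := by omega
  set Φ : ℕ → ℝ := fun t =>
    if t < Dn then 1 else φ ((t - Dn) / 2 + 1) + β' ^ ((t - Dn) / (2 * s₀)) with hΦdef
  have hΦ0 : ∀ t, 0 ≤ Φ t := by
    intro t
    rw [hΦdef]
    dsimp only
    split
    · exact zero_le_one
    · have := hφ0 ((t - Dn) / 2 + 1)
      positivity
  have hΦsum : Summable Φ := by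
    have h1 : Summable (fun t : ℕ => if t < Dn then (1:ℝ) else 0) := by
      apply summable_of_ne_finset_zero (s := Finset.range Dn)
      intro t ht
      simp only [Finset.mem_range] at ht
      simp [ht]
    have h2 : Summable (fun t : ℕ => φ ((t - Dn) / 2 + 1)) := by
      refine summable_comp_of_fiber_card_le hφ hφ0 (κ := Dn + 2) ?_
      intro v sfin
      rcases Nat.eq_zero_or_pos v with hv | hv
      · subst hv
        have : sfin.filter (fun t => (t - Dn) / 2 + 1 = 0) = ∅ := by
          apply Finset.filter_false_of_mem
          intro t _
          omega
        simp [this]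
      · obtain ⟨w, rfl⟩ := Nat.exists_eq_succ_of_ne_zero hv.ne'
        have : sfin.filter (fun t => (t - Dn) / 2 + 1 = w + 1)
            = sfin.filter (fun t => (t - Dn) / 2 = w) := by
          apply Finset.filter_congr
          intro t _
          omega
        rw [this]
        exact fiber_card_div (by norm_num) w sfin
    have h3 : Summable (fun t : ℕ => β' ^ ((t - Dn) / (2 * s₀))) := by
      refine summable_comp_of_fiber_card_le (summable_geometric_of_lt_one hβ'0 hβ'1)
        (fun n => pow_nonneg hβ'0 n) (κ := Dn + 2 * s₀) ?_
      intro v sfin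
      exact fiber_card_div (by omega) v sfin
    refine Summable.of_nonneg_of_le hΦ0 (f := fun t =>
      (if t < Dn then (1:ℝ) else 0) + (φ ((t - Dn) / 2 + 1) + β' ^ ((t - Dn) / (2 * s₀))))
      ?_ (h1.add (h2.add h3))
    intro t
    rw [hΦdef]
    dsimp only
    have hb := pow_nonneg hβ'0 ((t - Dn) / (2 * s₀))
    have hp := hφ0 ((t - Dn) / 2 + 1)
    split
    · linarith
    · simp
  set CΦ : ℝ := ∑' t, Φ t with hCΦdef
  have hCΦ0 : 0 ≤ CΦ := tsum_nonneg hΦ0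
  -- per-pair correlation bound
  have hpair : ∀ m n : ℕ, m < n → q m < q n →
      (μ (E m ∩ E n)).toReal ≤ a m * (a n + Φ (q n - q m)) := by
    intro m n hmn hqmn
    set t : ℕ := q n - q m with htdef
    have ht1 : 1 ≤ t := by omega
    have hqcast : (q n : ℤ) = q m + t := by omega
    have hamE : (μ (E m)).toReal = a m := by rw [hmuE m]
    by_cases hc : t < Dn
    · have hΦt : Φ t = 1 := by rw [hΦdef]; simp [hc]
      have hle : (μ (E m ∩ E n)).toReal ≤ a m := by
        rw [← hamE]
        exact ENNReal.toReal_mono (measure_ne_top _ _)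
          (measure_mono Set.inter_subset_left)
      rw [hΦt]
      nlinarith [ha0 m, ha0 n, hle]
    · push_neg at hc
      set u : ℕ := t - Dn with hudef
      set G : ℕ := u / 2 + 1 with hGdef
      set m₀ : ℤ := r m + q m with hm₀def
      set cc : ℤ := max (l n + q n) (m₀ + G) with hccdef
      set B : Set (ℤ → 𝒜) := cylEvent cc (r n + q n) (fun j => f n (j - q n)) with hBdef
      have hEnB : E n ⊆ B := by
        rw [hEeq n, hBdef]
        intro ω hω i h1 h2
        exact hω i (le_trans (le_max_left _ _) h1) h2
      have hBfut : MeasurableSet[futureAlg (𝒜 := 𝒜) (m₀ + (G:ℕ))] B :=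
        cyl_mem_future (m₀ + G) cc (r n + q n) (le_max_right _ _) _
      have hApast : MeasurableSet[pastAlg (𝒜 := 𝒜) m₀] (E m) := by
        rw [hEeq m, hm₀def]
        exact MeasurableSpace.measurableSet_generateFrom ⟨l m + q m, _, rfl⟩
      have h1 : (μ (E m ∩ E n)).toReal ≤ (μ (E m ∩ B)).toReal :=
        ENNReal.toReal_mono (measure_ne_top _ _)
          (measure_mono (Set.inter_subset_inter_right _ hEnB))
      have h2 : (μ (E m ∩ B)).toReal ≤ a m * ((μ B).toReal + φ G) := by
        rw [← hamE]
        exact mix_upper μ (φ G) (E m) B (fun hA => hmix m₀ G (E m) B hApast hBfut hA)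
      have h3 : (μ B).toReal ≤ a n + β' ^ (u / (2 * s₀)) := by
        rcases le_or_gt (m₀ + G) (l n + q n) with hcase | hcase
        · have hcc : cc = l n + q n := max_eq_left hcase
          have : B = E n := by rw [hBdef, hcc, hEeq n]
          rw [this, hmuE n]
          have : (0:ℝ) ≤ β' ^ (u / (2 * s₀)) := pow_nonneg hβ'0 _
          linarith
        · have hcc : cc = m₀ + G := max_eq_right hcase.le
          have hnat1 : (u / (2 * s₀)) * s₀ ≤ u / 2 := by
            rw [← Nat.div_div_eq_div_mul]
            exact Nat.div_mul_le_self _ _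
          have hnat2 : u / 2 + u / 2 ≤ u := by omega
          have hrr : r m < r n + D := hnest m n hmn
          have hwidth : cc + ((u / (2 * s₀)) : ℕ) * (s₀ : ℕ) ≤ r n + q n := by
            rw [hcc, hm₀def, hGdef]
            have hc1 : ((u / (2 * s₀) * s₀ : ℕ) : ℤ) ≤ ((u / 2 : ℕ) : ℤ) := by
              exact_mod_cast hnat1
            have hc2 : ((u / 2 : ℕ) : ℤ) + ((u / 2 : ℕ) : ℤ) ≤ (u : ℤ) := by
              exact_mod_cast hnat2
            have hucast : (u : ℤ) = (t : ℤ) - Dn := by omega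
            push_cast at hc1 hc2 ⊢
            omega
          have := hdecay (u / (2 * s₀)) cc (r n + q n) (fun j => f n (j - q n)) (by
            push_cast at hwidth ⊢
            linarith)
          rw [hBdef]
          have han : 0 ≤ a n := ha0 n
          linarith
      have hΦt : Φ t = φ G + β' ^ (u / (2 * s₀)) := by
        rw [hΦdef]
        dsimp only
        rw [if_neg (not_lt.2 hc), hGdef, hudef]
      calc (μ (E m ∩ E n)).toReal ≤ a m * ((μ B).toReal + φ G) := le_trans h1 h2
        _ ≤ a m * (a n + Φ t) := by
            refine mul_le_mul_of_nonneg_left ?_ (ha0 m)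
            rw [hΦt]
            linarith
  -- per-m sum of Φ over good n is bounded
  have hsumΦ : ∀ (m : ℕ) (sfin : Finset ℕ), (∀ n ∈ sfin, q m < q n) →
      ∑ n ∈ sfin, Φ (q n - q m) ≤ (K : ℝ) * CΦ := by
    intro m sfin hgood
    rw [Finset.sum_comp (fun v => Φ v) (fun n => q n - q m)]
    have hcard : ∀ v, (sfin.filter (fun n => q n - q m = v)).card ≤ K := by
      intro v
      have hsub : (sfin.filter (fun n => q n - q m = v)) ⊆ (hq1 (q m + v)).1.toFinset := by
        intro n hn
        simp only [Finset.mem_filter] at hn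
        have := hgood n hn.1
        simp only [Set.Finite.mem_toFinset, Set.mem_setOf_eq]
        omega
      calc (sfin.filter (fun n => q n - q m = v)).card ≤ (hq1 (q m + v)).1.toFinset.card :=
            Finset.card_le_card hsub
        _ ≤ K := by
            rw [← Set.ncard_eq_toFinset_card _ (hq1 (q m + v)).1]
            exact (hq1 (q m + v)).2
    calc ∑ v ∈ sfin.image (fun n => q n - q m), (sfin.filter fun n => q n - q m = v).card • Φ v
        ≤ ∑ v ∈ sfin.image (fun n => q n - q m), (K : ℝ) * Φ v := by
          refine Finset.sum_le_sum fun v _ => ?_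
          rw [nsmul_eq_mul]
          exact mul_le_mul_of_nonneg_right (by exact_mod_cast hcard v) (hΦ0 v)
      _ = (K : ℝ) * ∑ v ∈ sfin.image (fun n => q n - q m), Φ v := by rw [Finset.mul_sum]
      _ ≤ (K : ℝ) * CΦ := by
          rw [hCΦdef]
          exact mul_le_mul_of_nonneg_left (hΦsum.sum_le_tsum _ (fun i _ => hΦ0 i))
            (by positivity)
  -- correlation sums
  set p : ℕ → ℕ → ℝ := fun m n => (μ (E m ∩ E n)).toReal with hpdef
  have hp0 : ∀ m n, 0 ≤ p m n := fun m n => ENNReal.toReal_nonneg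
  have hp1 : ∀ m n, p m n ≤ 1 := fun m n => htoReal_le_one _
  have hpsymm : ∀ m n, p m n = p n m := fun m n => by
    rw [hpdef]; dsimp only; rw [Set.inter_comm]
  have hpdiag : ∀ m, p m m = a m := fun m => by
    rw [hpdef]; dsimp only; rw [Set.inter_self]
    rw [hadef]; dsimp only; rw [hmuE]
  set C1 : ℝ := 1 + 2 * ((K : ℝ) * CΦ) with hC1def
  set C2 : ℝ := 2 * (K : ℝ) with hC2def
  have hC10 : 0 ≤ C1 := by rw [hC1def]; positivity
  have hC20 : 0 ≤ C2 := by rw [hC2def]; positivity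
  have hA0 : ∀ N, 0 ≤ A N := fun N => by
    rw [hAdef]; exact Finset.sum_nonneg fun n _ => ha0 n
  have hVbound : ∀ N, ∑ m ∈ Finset.Icc 1 N, ∑ n ∈ Finset.Icc 1 N, (p m n - a m * a n)
      ≤ C1 * A N + C2 := by
    intro N
    set I := Finset.Icc 1 N with hIdef
    set F : ℕ × ℕ → ℝ := fun pr => p pr.1 pr.2 - a pr.1 * a pr.2 with hFdef
    have hsum1 : ∑ m ∈ I, ∑ n ∈ I, (p m n - a m * a n) = ∑ pr ∈ I ×ˢ I, F pr :=
      (Finset.sum_product' I I (fun m n => p m n - a m * a n)).symm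
    have hsplit : ∑ pr ∈ I ×ˢ I, F pr
        = ∑ pr ∈ (I ×ˢ I).filter (fun pr => pr.1 < pr.2), F pr
        + (∑ pr ∈ (I ×ˢ I).filter (fun pr => pr.2 < pr.1), F pr
        + ∑ pr ∈ (I ×ˢ I).filter (fun pr => pr.1 = pr.2), F pr) := by
      rw [← Finset.sum_filter_add_sum_filter_not (I ×ˢ I) (fun pr => pr.1 < pr.2) F]
      congr 1
      rw [← Finset.sum_filter_add_sum_filter_not
        ((I ×ˢ I).filter (fun pr => ¬ pr.1 < pr.2)) (fun pr => pr.2 < pr.1) F]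
      rw [Finset.filter_filter, Finset.filter_filter]
      congr 1
      · apply Finset.sum_congr _ (fun _ _ => rfl)
        apply Finset.filter_congr
        intro x _
        constructor
        · intro h; exact h.2
        · intro h; exact ⟨by omega, h⟩
      · apply Finset.sum_congr _ (fun _ _ => rfl)
        apply Finset.filter_congr
        intro x _
        constructor
        · intro h; omega
        · intro h; omega
    have hswap : ∑ pr ∈ (I ×ˢ I).filter (fun pr => pr.2 < pr.1), F pr
        = ∑ pr ∈ (I ×ˢ I).filter (fun pr => pr.1 < pr.2), F pr := by
      refine Finset.sum_nbij' (fun pr => (pr.2, pr.1)) (fun pr => (pr.2, pr.1))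
        ?_ ?_ ?_ ?_ ?_
      · intro pr hpr
        simp only [Finset.mem_filter, Finset.mem_product] at hpr ⊢
        exact ⟨⟨hpr.1.2, hpr.1.1⟩, hpr.2⟩
      · intro pr hpr
        simp only [Finset.mem_filter, Finset.mem_product] at hpr ⊢
        exact ⟨⟨hpr.1.2, hpr.1.1⟩, hpr.2⟩
      · intro pr _; rfl
      · intro pr _; rfl
      · intro pr _
        rw [hFdef]; dsimp only
        rw [hpsymm]; ring
    have hdiagle : ∑ pr ∈ (I ×ˢ I).filter (fun pr => pr.1 = pr.2), F pr ≤ A N := by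
      have h1 : ∑ pr ∈ (I ×ˢ I).filter (fun pr => pr.1 = pr.2), F pr
          ≤ ∑ pr ∈ (I ×ˢ I).filter (fun pr => pr.1 = pr.2), a pr.1 := by
        refine Finset.sum_le_sum fun pr hpr => ?_
        simp only [Finset.mem_filter, Finset.mem_product] at hpr
        rw [hFdef]; dsimp only
        rw [← hpr.2, hpdiag]
        nlinarith [ha0 pr.1, ha1 pr.1]
      have h2 : ∑ pr ∈ (I ×ˢ I).filter (fun pr => pr.1 = pr.2), a pr.1 = A N := by
        rw [hAdef]; dsimp only
        refine Finset.sum_nbij' (fun pr => pr.1) (fun m => (m, m)) ?_ ?_ ?_ ?_ ?_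
        · intro pr hpr
          simp only [Finset.mem_filter, Finset.mem_product] at hpr
          exact hpr.1.1
        · intro m hm
          simp [Finset.mem_filter, Finset.mem_product, hm, hIdef]
        · intro pr hpr
          simp only [Finset.mem_filter, Finset.mem_product] at hpr
          exact Prod.ext rfl hpr.2
        · intro m _; rfl
        · intro pr _; rfl
      linarith
    have hltle : ∑ pr ∈ (I ×ˢ I).filter (fun pr => pr.1 < pr.2), F pr
        ≤ (K : ℝ) + ((K : ℝ) * CΦ) * A N := by
      rw [← Finset.sum_filter_add_sum_filter_not
        ((I ×ˢ I).filter (fun pr => pr.1 < pr.2)) (fun pr => q pr.2 ≤ q pr.1) F]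
      have hex : ∑ pr ∈ ((I ×ˢ I).filter (fun pr => pr.1 < pr.2)).filter
          (fun pr => q pr.2 ≤ q pr.1), F pr ≤ (K : ℝ) := by
        have hc : (((I ×ˢ I).filter (fun pr => pr.1 < pr.2)).filter
            (fun pr => q pr.2 ≤ q pr.1)).card ≤ K := by
          have hsub : (((I ×ˢ I).filter (fun pr => pr.1 < pr.2)).filter
              (fun pr => q pr.2 ≤ q pr.1)) ⊆ hq2.1.toFinset := by
            intro pr hpr
            simp only [Finset.mem_filter, Finset.mem_product] at hpr
            simp only [Set.Finite.mem_toFinset, Set.mem_setOf_eq]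
            exact ⟨hpr.1.2, hpr.2⟩
          calc _ ≤ hq2.1.toFinset.card := Finset.card_le_card hsub
            _ ≤ K := by rw [← Set.ncard_eq_toFinset_card _ hq2.1]; exact hq2.2
        calc ∑ pr ∈ ((I ×ˢ I).filter (fun pr => pr.1 < pr.2)).filter
              (fun pr => q pr.2 ≤ q pr.1), F pr
            ≤ (((I ×ˢ I).filter (fun pr => pr.1 < pr.2)).filter
              (fun pr => q pr.2 ≤ q pr.1)).card • (1:ℝ) := by
              refine Finset.sum_le_card_nsmul _ _ _ fun pr _ => ?_
              rw [hFdef]; dsimp only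
              nlinarith [hp1 pr.1 pr.2, ha0 pr.1, ha0 pr.2]
          _ ≤ (K : ℝ) := by
              rw [nsmul_eq_mul, mul_one]
              exact_mod_cast hc
      have hgd : ∑ pr ∈ ((I ×ˢ I).filter (fun pr => pr.1 < pr.2)).filter
          (fun pr => ¬ q pr.2 ≤ q pr.1), F pr ≤ ((K : ℝ) * CΦ) * A N := by
        rw [Finset.filter_filter]
        have hFle : ∀ pr ∈ (I ×ˢ I).filter (fun pr => pr.1 < pr.2 ∧ ¬ q pr.2 ≤ q pr.1),
            F pr ≤ a pr.1 * Φ (q pr.2 - q pr.1) := by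
          intro pr hpr
          simp only [Finset.mem_filter, Finset.mem_product] at hpr
          have hp := hpair pr.1 pr.2 hpr.2.1 (by omega)
          rw [hFdef]; dsimp only
          rw [hpdef]; dsimp only
          nlinarith [ha0 pr.1]
        calc ∑ pr ∈ (I ×ˢ I).filter (fun pr => pr.1 < pr.2 ∧ ¬ q pr.2 ≤ q pr.1), F pr
            ≤ ∑ pr ∈ (I ×ˢ I).filter (fun pr => pr.1 < pr.2 ∧ ¬ q pr.2 ≤ q pr.1),
              a pr.1 * Φ (q pr.2 - q pr.1) := Finset.sum_le_sum hFle
          _ = ∑ m ∈ I, ∑ n ∈ I, (if m < n ∧ ¬ q n ≤ q m then a m * Φ (q n - q m) else 0) := by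
              rw [Finset.sum_filter]
              exact Finset.sum_product' I I
                (fun m n => if m < n ∧ ¬ q n ≤ q m then a m * Φ (q n - q m) else 0)
          _ = ∑ m ∈ I, ∑ n ∈ I.filter (fun n => m < n ∧ ¬ q n ≤ q m),
              a m * Φ (q n - q m) := by
              refine Finset.sum_congr rfl fun m _ => ?_
              rw [Finset.sum_filter]
          _ ≤ ∑ m ∈ I, a m * ((K : ℝ) * CΦ) := by
              refine Finset.sum_le_sum fun m _ => ?_
              rw [← Finset.mul_sum]
              refine mul_le_mul_of_nonneg_left ?_ (ha0 m)
              refine hsumΦ m _ fun n hn => ?_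
              simp only [Finset.mem_filter] at hn
              omega
          _ = ((K : ℝ) * CΦ) * A N := by
              rw [hAdef]; dsimp only
              rw [← Finset.sum_mul, mul_comm]
      linarith
    calc ∑ m ∈ I, ∑ n ∈ I, (p m n - a m * a n) = ∑ pr ∈ I ×ˢ I, F pr := hsum1
      _ = _ := hsplit
      _ ≤ ((K : ℝ) + ((K : ℝ) * CΦ) * A N) + (((K : ℝ) + ((K : ℝ) * CΦ) * A N) + A N) := by
          rw [hswap]
          have := hltle
          have := hdiagle
          linarith
      _ ≤ C1 * A N + C2 := by
          rw [hC1def, hC2def]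
          have := hA0 N
          nlinarith [hCΦ0, Nat.cast_nonneg (α := ℝ) K]
  -- integral identities
  have haE : ∀ n, (μ (E n)).toReal = a n := fun n => by
    rw [hadef]; dsimp only; rw [hmuE]
  have hIndInt : ∀ s : Set (ℤ → 𝒜), MeasurableSet s →
      Integrable (s.indicator fun _ => (1:ℝ)) μ := by
    intro s hs
    rw [integrable_indicator_iff hs]
    exact integrableOn_const (measure_ne_top μ s) (by simp)
  have hIndInt' : ∀ s : Set (ℤ → 𝒜), MeasurableSet s →
      ∫ ω, s.indicator (fun _ => (1:ℝ)) ω ∂μ = (μ s).toReal := by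
    intro s hs
    rw [integral_indicator_const (1:ℝ) hs]; simp; rfl
  have hYint : ∀ n, Integrable (Y n) μ := fun n => by
    rw [hYdef]; exact hIndInt _ (hEmeas n)
  set g : ℕ → ℕ → (ℤ → 𝒜) → ℝ := fun m n ω => (Y m ω - a m) * (Y n ω - a n) with hgdef
  have hgeq : ∀ m n, g m n = fun ω =>
      (E m ∩ E n).indicator (fun _ => (1:ℝ)) ω - a m * Y n ω - a n * Y m ω + a m * a n := by
    intro m n
    funext ω
    rw [hgdef]; dsimp only
    have hmul : (E m ∩ E n).indicator (fun _ => (1:ℝ)) ω = Y m ω * Y n ω := by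
      rw [hYdef]; dsimp only
      have h := Set.inter_indicator_mul (s := E m) (t := E n)
        (fun _ : (ℤ → 𝒜) => (1:ℝ)) (fun _ => (1:ℝ)) ω
      simpa using h
    rw [hmul]; ring
  have hgint : ∀ m n, Integrable (g m n) μ := by
    intro m n
    rw [hgeq]
    exact ((((hIndInt _ ((hEmeas m).inter (hEmeas n))).sub
      ((hYint n).const_mul (a m))).sub
      ((hYint m).const_mul (a n))).add (integrable_const _))
  have hgint' : ∀ m n, ∫ ω, g m n ω ∂μ = p m n - a m * a n := by
    intro m n
    have intA := hIndInt _ ((hEmeas m).inter (hEmeas n))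
    have intB := (hYint n).const_mul (a m)
    have intC := (hYint m).const_mul (a n)
    rw [hgeq]
    dsimp only
    have int2 : Integrable (fun ω => (E m ∩ E n).indicator (fun _ => (1:ℝ)) ω
        - a m * Y n ω) μ := intA.sub intB
    have int1 : Integrable (fun ω => (E m ∩ E n).indicator (fun _ => (1:ℝ)) ω
        - a m * Y n ω - a n * Y m ω) μ := int2.sub intC
    rw [integral_add int1 (integrable_const _),
      integral_sub int2 intC, integral_sub intA intB,
      hIndInt' _ ((hEmeas m).inter (hEmeas n)), integral_const_mul, integral_const_mul,
      integral_const]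
    have hYn : ∫ ω, Y n ω ∂μ = a n := by
      rw [hYdef]; dsimp only; rw [hIndInt' _ (hEmeas n), haE]
    have hYm : ∫ ω, Y m ω ∂μ = a m := by
      rw [hYdef]; dsimp only; rw [hIndInt' _ (hEmeas m), haE]
    rw [hYn, hYm]
    rw [hpdef]; dsimp only
    simp only [probReal_univ, smul_eq_mul, one_mul]
    ring
  have hZsq : ∀ N ω, (S N ω - A N)^2
      = ∑ m ∈ Finset.Icc 1 N, ∑ n ∈ Finset.Icc 1 N, g m n ω := by
    intro N ω
    have h1 : S N ω - A N = ∑ n ∈ Finset.Icc 1 N, (Y n ω - a n) := by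
      rw [hSdef, hAdef]; dsimp only; rw [Finset.sum_sub_distrib]
    rw [h1, sq, Finset.sum_mul_sum]
  have hZint : ∀ N, Integrable (fun ω => (S N ω - A N)^2) μ := by
    intro N
    have : (fun ω => (S N ω - A N)^2)
        = fun ω => ∑ m ∈ Finset.Icc 1 N, ∑ n ∈ Finset.Icc 1 N, g m n ω := by
      funext ω; exact hZsq N ω
    rw [this]
    exact integrable_finset_sum _ (fun m _ => integrable_finset_sum _ (fun n _ => hgint m n))
  have hZvar : ∀ N, ∫ ω, (S N ω - A N)^2 ∂μ
      = ∑ m ∈ Finset.Icc 1 N, ∑ n ∈ Finset.Icc 1 N, (p m n - a m * a n) := by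
    intro N
    have h0 : (fun ω => (S N ω - A N)^2)
        = fun ω => ∑ m ∈ Finset.Icc 1 N, ∑ n ∈ Finset.Icc 1 N, g m n ω := by
      funext ω; exact hZsq N ω
    rw [h0, integral_finset_sum _ (fun m _ => integrable_finset_sum _ (fun n _ => hgint m n))]
    refine Finset.sum_congr rfl fun m _ => ?_
    rw [integral_finset_sum _ (fun n _ => hgint m n)]
    exact Finset.sum_congr rfl fun n _ => hgint' m n
  -- Chebyshev
  have hcheb : ∀ (N : ℕ) (ε : ℝ), 0 < ε →
      (μ {ω | ε ≤ |S N ω - A N|}).toReal ≤ (C1 * A N + C2) / ε^2 := by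
    intro N ε hε
    have hsub : {ω : (ℤ → 𝒜) | ε ≤ |S N ω - A N|} ⊆ {ω | ε^2 ≤ (S N ω - A N)^2} := by
      intro ω hω
      simp only [Set.mem_setOf_eq] at hω ⊢
      calc ε^2 ≤ |S N ω - A N|^2 := by nlinarith [abs_nonneg (S N ω - A N)]
        _ = (S N ω - A N)^2 := sq_abs _
    have h1 := mul_meas_ge_le_integral_of_nonneg
      (Eventually.of_forall (fun ω => sq_nonneg (S N ω - A N))) (hZint N) (ε^2)
    have h2 : (μ {ω | ε ≤ |S N ω - A N|}).toReal
        ≤ (μ {ω | ε^2 ≤ (S N ω - A N)^2}).toReal :=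
      ENNReal.toReal_mono (measure_ne_top _ _) (measure_mono hsub)
    have h3 : ε^2 * (μ {ω | ε^2 ≤ (S N ω - A N)^2}).toReal ≤ C1 * A N + C2 := by
      refine le_trans h1 ?_
      rw [hZvar N]
      exact hVbound N
    rw [le_div_iff₀ (by positivity)]
    nlinarith [ENNReal.toReal_nonneg (a := μ {ω | ε^2 ≤ (S N ω - A N)^2})]
  -- monotonicity facts
  have hAmono : Monotone A := by
    intro N N' h
    rw [hAdef]; dsimp only
    exact Finset.sum_le_sum_of_subset_of_nonneg
      (Finset.Icc_subset_Icc_right h) (fun i _ _ => ha0 i)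
  have hSmono : ∀ ω, Monotone (fun N => S N ω) := by
    intro ω N N' h
    rw [hSdef]; dsimp only
    exact Finset.sum_le_sum_of_subset_of_nonneg
      (Finset.Icc_subset_Icc_right h) (fun i _ _ => hY0 i ω)
  have hS0 : ∀ N ω, 0 ≤ S N ω := by
    intro N ω
    rw [hSdef]; dsimp only
    exact Finset.sum_nonneg fun n _ => hY0 n ω
  have hAleN : ∀ N : ℕ, A N ≤ N := by
    intro N
    rw [hAdef]; dsimp only
    calc ∑ n ∈ Finset.Icc 1 N, a n ≤ (Finset.Icc 1 N).card • (1:ℝ) :=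
          Finset.sum_le_card_nsmul _ _ _ (fun n _ => ha1 n)
      _ = N := by simp [Nat.card_Icc]
  -- the subsequence N_k
  have hex : ∀ k : ℕ, ∃ N, (k:ℝ)^2 ≤ A N := fun k =>
    (hdivA.eventually_ge_atTop ((k:ℝ)^2)).exists
  set Nk : ℕ → ℕ := fun k => Nat.find (hex k) with hNkdef
  have hNkspec : ∀ k : ℕ, (k:ℝ)^2 ≤ A (Nk k) := fun k => Nat.find_spec (hex k)
  have hNkmin : ∀ k M : ℕ, M < Nk k → A M < (k:ℝ)^2 := by
    intro k M hM
    have := Nat.find_min (hex k) hM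
    exact lt_of_not_ge this
  have hA_zero : A 0 = 0 := by rw [hAdef]; simp
  have hNk_ub : ∀ k : ℕ, 1 ≤ k → A (Nk k) ≤ (k:ℝ)^2 + 1 := by
    intro k hk
    have hkpos : (1:ℝ) ≤ (k:ℝ)^2 := by
      have : (1:ℝ) ≤ (k:ℝ) := by exact_mod_cast hk
      nlinarith
    have hne : Nk k ≠ 0 := by
      intro h0
      have := hNkspec k
      rw [h0, hA_zero] at this
      linarith
    obtain ⟨M, hM⟩ := Nat.exists_eq_succ_of_ne_zero hne
    have h1 : A M < (k:ℝ)^2 := hNkmin k M (by omega)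
    have h2 : A (M+1) = A M + a (M+1) := by
      rw [hAdef]; dsimp only
      rw [Finset.sum_Icc_succ_top (by omega)]
    rw [hM]
    have := ha1 (M+1)
    rw [Nat.succ_eq_add_one, h2]
    linarith
  have hNk_ge : ∀ k : ℕ, 1 ≤ k → k ≤ Nk k := by
    intro k hk
    have h1 : ((k:ℝ))^2 ≤ (Nk k : ℝ) := le_trans (hNkspec k) (hAleN (Nk k))
    have h2 : (k:ℝ) ≤ (k:ℝ)^2 := by
      have : (1:ℝ) ≤ (k:ℝ) := by exact_mod_cast hk
      nlinarith
    exact_mod_cast le_trans h2 h1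
  have hNk0 : Nk 0 = 0 := by
    rw [hNkdef]
    rw [Nat.find_eq_zero]
    rw [hA_zero]
    norm_num
  set kN : ℕ → ℕ := fun N => Nat.findGreatest (fun k => Nk k ≤ N) N with hkNdef
  have hkN1 : ∀ N, Nk (kN N) ≤ N := by
    intro N
    have h0 : Nk 0 ≤ N := by rw [hNk0]; exact Nat.zero_le N
    rw [hkNdef]
    exact Nat.findGreatest_spec (P := fun k => Nk k ≤ N) (Nat.zero_le N) h0
  have hkN2 : ∀ N, N < Nk (kN N + 1) := by
    intro N
    by_contra h
    push_neg at h
    have h2 : kN N + 1 ≤ N := le_trans (hNk_ge (kN N + 1) (by omega)) h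
    exact Nat.findGreatest_is_greatest (Nat.lt_succ_self _) h2 h
  have hkN3 : Tendsto kN atTop atTop := by
    rw [tendsto_atTop_atTop]
    intro k
    refine ⟨max (Nk k) k, fun N hN => ?_⟩
    rw [hkNdef]
    exact Nat.le_findGreatest (le_trans (le_max_right _ _) hN)
      (le_trans (le_max_left _ _) hN)
  -- Borel–Cantelli
  have hBC : ∀ j : ℕ, ∀ᵐ ω ∂μ, ∀ᶠ k in atTop,
      ω ∉ {ω' | A (Nk (k+1)) / ((j:ℝ)+1) ≤ |S (Nk (k+1)) ω' - A (Nk (k+1))|} := by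
    intro j
    apply ae_eventually_notMem
    have hb : ∀ k : ℕ, μ {ω' | A (Nk (k+1)) / ((j:ℝ)+1) ≤ |S (Nk (k+1)) ω' - A (Nk (k+1))|}
        ≤ ENNReal.ofReal ((2*(C1+C2+1)*((j:ℝ)+1)^2) * (1/((k:ℝ)+1)^2)) := by
      intro k
      have hApos : ((k:ℝ)+1)^2 ≤ A (Nk (k+1)) := by
        have := hNkspec (k+1)
        push_cast at this ⊢
        linarith
      have hANpos : 0 < A (Nk (k+1)) := lt_of_lt_of_le (by positivity) hApos
      have hεpos : 0 < A (Nk (k+1)) / ((j:ℝ)+1) := by positivity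
      have hch := hcheb (Nk (k+1)) (A (Nk (k+1)) / ((j:ℝ)+1)) hεpos
      have hbd : (C1 * A (Nk (k+1)) + C2) / (A (Nk (k+1)) / ((j:ℝ)+1))^2
          ≤ (2*(C1+C2+1)*((j:ℝ)+1)^2) * (1/((k:ℝ)+1)^2) := by
        rw [div_le_iff₀ (by positivity)]
        have hjne : ((j:ℝ)+1) ≠ 0 := by positivity
        have hkne : ((k:ℝ)+1) ≠ 0 := by positivity
        have hkpos : (0:ℝ) < ((k:ℝ)+1)^2 := by positivity
        have hA1 : (1:ℝ) ≤ A (Nk (k+1)) := le_trans (by nlinarith [Nat.cast_nonneg (α := ℝ) k]) hApos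
        -- target: C1 * A + C2 ≤ 2(C1+C2+1)(j+1)^2 * (1/(k+1)^2) * (A^2/(j+1)^2)
        have hkey : C1 * A (Nk (k+1)) + C2 ≤ 2*(C1+C2+1) * (A (Nk (k+1))^2 / ((k:ℝ)+1)^2) := by
          have hq : A (Nk (k+1)) ≤ A (Nk (k+1))^2 / ((k:ℝ)+1)^2 := by
            rw [le_div_iff₀ hkpos]
            nlinarith [hApos, hANpos]
          nlinarith [hC10, hC20, hANpos, hA1]
        have heq : (2*(C1+C2+1)*((j:ℝ)+1)^2) * (1/((k:ℝ)+1)^2) * (A (Nk (k+1)) / ((j:ℝ)+1))^2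
            = 2*(C1+C2+1) * (A (Nk (k+1))^2 / ((k:ℝ)+1)^2) := by
          field_simp
        rw [heq]
        exact hkey
      calc μ {ω' | A (Nk (k+1)) / ((j:ℝ)+1) ≤ |S (Nk (k+1)) ω' - A (Nk (k+1))|}
          = ENNReal.ofReal ((μ {ω' | A (Nk (k+1)) / ((j:ℝ)+1)
              ≤ |S (Nk (k+1)) ω' - A (Nk (k+1))|}).toReal) :=
            (ENNReal.ofReal_toReal (measure_ne_top _ _)).symm
        _ ≤ ENNReal.ofReal ((2*(C1+C2+1)*((j:ℝ)+1)^2) * (1/((k:ℝ)+1)^2)) :=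
            ENNReal.ofReal_le_ofReal (le_trans hch hbd)
    have hsumb : Summable (fun k : ℕ => (2*(C1+C2+1)*((j:ℝ)+1)^2) * (1/((k:ℝ)+1)^2)) := by
      apply Summable.mul_left
      have h2 : Summable (fun k : ℕ => 1/((k:ℝ))^2) := by
        rw [Real.summable_one_div_nat_pow]
        omega
      have h3 := (summable_nat_add_iff 1).2 h2
      refine h3.congr fun k => ?_
      push_cast
      ring
    refine ne_top_of_le_ne_top ?_ (ENNReal.tsum_le_tsum hb)
    rw [← ENNReal.ofReal_tsum_of_nonneg (fun k => by positivity) hsumb]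
    exact ENNReal.ofReal_ne_top
  -- conclusion
  filter_upwards [ae_all_iff.2 hBC] with ω hω
  rw [Metric.tendsto_atTop]
  intro ε hε
  obtain ⟨j, hjε⟩ := exists_nat_one_div_lt (show (0:ℝ) < ε/4 by linarith)
  set x : ℝ := 1/((j:ℝ)+1) with hxdef
  have hx0 : 0 < x := by rw [hxdef]; positivity
  have hx1 : x ≤ 1 := by
    rw [hxdef, div_le_one (by positivity)]
    linarith [Nat.cast_nonneg (α := ℝ) j]
  have hx3 : 3 * x < ε := by
    have hxε : x < ε/4 := hjε
    linarith
  obtain ⟨k₀, hk₀⟩ := eventually_atTop.1 (hω j)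
  set k₂ : ℕ := max (⌈(4:ℝ)/x⌉₊ + 1) 1 with hk₂def
  have hk₂ : ∀ k : ℕ, k₂ ≤ k → ((k:ℝ)+1)^2 + 1 ≤ (1+x) * (k:ℝ)^2 := by
    intro k hk
    have hc1 : ⌈(4:ℝ)/x⌉₊ + 1 ≤ k := le_trans (le_max_left _ _) hk
    have h1 : (⌈(4:ℝ)/x⌉₊ : ℝ) ≤ (k:ℝ) := by exact_mod_cast (by omega : ⌈(4:ℝ)/x⌉₊ ≤ k)
    have h2 : (4:ℝ)/x ≤ (k:ℝ) := le_trans (Nat.le_ceil _) h1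
    have h3 : (1:ℝ) ≤ (k:ℝ) := by exact_mod_cast (by omega : 1 ≤ k)
    have h4 : 4 ≤ x * (k:ℝ) := by
      rw [div_le_iff₀ hx0] at h2
      linarith
    nlinarith
  obtain ⟨N₀, hN₀⟩ := eventually_atTop.1 (hkN3.eventually_ge_atTop (max (k₀+1) (k₂+1)))
  refine ⟨N₀, fun N hN => ?_⟩
  have hkK : max (k₀+1) (k₂+1) ≤ kN N := hN₀ N hN
  set k := kN N with hkdef
  have hk01 : k₀ + 1 ≤ k := le_trans (le_max_left _ _) hkK
  have hk21 : k₂ + 1 ≤ k := le_trans (le_max_right _ _) hkK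
  have hk1 : 1 ≤ k := by
    have : 1 ≤ k₂ := le_max_right _ _
    omega
  have hbad1 : ¬ (A (Nk k) / ((j:ℝ)+1) ≤ |S (Nk k) ω - A (Nk k)|) := by
    have h := hk₀ (k-1) (by omega)
    rw [show k - 1 + 1 = k from by omega] at h
    exact h
  have hbad2 : ¬ (A (Nk (k+1)) / ((j:ℝ)+1) ≤ |S (Nk (k+1)) ω - A (Nk (k+1))|) :=
    hk₀ k (by omega)
  push_neg at hbad1 hbad2
  have hAk := hNkspec k
  have hAk1ub : A (Nk (k+1)) ≤ ((k:ℝ)+1)^2 + 1 := by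
    have := hNk_ub (k+1) (by omega)
    push_cast at this ⊢
    linarith
  have hkR : (1:ℝ) ≤ (k:ℝ) := by exact_mod_cast hk1
  have hAkpos : 0 < A (Nk k) := lt_of_lt_of_le (by nlinarith) hAk
  have hAN_lb : A (Nk k) ≤ A N := hAmono (hkN1 N)
  have hAN_ub : A N ≤ A (Nk (k+1)) := hAmono (le_of_lt (hkN2 N))
  have hSN_lb : S (Nk k) ω ≤ S N ω := hSmono ω (hkN1 N)
  have hSN_ub : S N ω ≤ S (Nk (k+1)) ω := hSmono ω (le_of_lt (hkN2 N))
  have hANpos : 0 < A N := lt_of_lt_of_le hAkpos hAN_lb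
  have hxx : A (Nk k) / ((j:ℝ)+1) = x * A (Nk k) := by rw [hxdef]; ring
  have hxx1 : A (Nk (k+1)) / ((j:ℝ)+1) = x * A (Nk (k+1)) := by rw [hxdef]; ring
  rw [hxx] at hbad1
  rw [hxx1] at hbad2
  have h7 : S (Nk (k+1)) ω ≤ (1+x) * A (Nk (k+1)) := by
    have := (abs_lt.1 hbad2).2
    linarith
  have h8 : (1-x) * A (Nk k) ≤ S (Nk k) ω := by
    have := (abs_lt.1 hbad1).1
    linarith
  have hAA : A (Nk (k+1)) ≤ (1+x) * A (Nk k) := by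
    have h6 := hk₂ k (by omega)
    calc A (Nk (k+1)) ≤ ((k:ℝ)+1)^2 + 1 := hAk1ub
      _ ≤ (1+x) * (k:ℝ)^2 := h6
      _ ≤ (1+x) * A (Nk k) := mul_le_mul_of_nonneg_left hAk (by linarith)
  have hup : S N ω ≤ (1+3*x) * A N := by
    have e1 : S N ω ≤ (1+x) * A (Nk (k+1)) := le_trans hSN_ub h7
    have e2 : (1+x) * A (Nk (k+1)) ≤ (1+x) * ((1+x) * A (Nk k)) :=
      mul_le_mul_of_nonneg_left hAA (by linarith)
    have e4 : (1+x) * ((1+x) * A (Nk k)) ≤ (1+x) * ((1+x) * A N) :=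
      mul_le_mul_of_nonneg_left (mul_le_mul_of_nonneg_left hAN_lb (by linarith)) (by linarith)
    have prod : 0 ≤ (x*(1-x)) * A N :=
      mul_nonneg (mul_nonneg hx0.le (by linarith)) hANpos.le
    nlinarith [prod]
  have hlo : (1-3*x) * A N ≤ S N ω := by
    rcases le_or_gt (1-3*x) 0 with hc | hc
    · have hz : (1-3*x) * A N ≤ 0 * A N := mul_le_mul_of_nonneg_right hc hANpos.le
      rw [zero_mul] at hz
      exact le_trans hz (hS0 N ω)
    · have f1 : A N ≤ (1+x) * A (Nk k) := le_trans hAN_ub hAA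
      have prod2 : 0 ≤ (x + 3*x^2) * A (Nk k) := by positivity
      have f2 : (1-3*x) * ((1+x) * A (Nk k)) ≤ (1-x) * A (Nk k) := by nlinarith [prod2]
      have f3 : (1-3*x) * A N ≤ (1-3*x) * ((1+x) * A (Nk k)) :=
        mul_le_mul_of_nonneg_left f1 hc.le
      linarith [h8, hSN_lb]
  have habs : |S N ω / A N - 1| ≤ 3 * x := by
    rw [abs_le]
    constructor
    · have h9 : (1-3*x) ≤ S N ω / A N := (le_div_iff₀ hANpos).2 (by linarith)
      linarith
    · have h9 : S N ω / A N ≤ (1+3*x) := (div_le_iff₀ hANpos).2 (by linarith)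
      linarith
  rw [Real.dist_eq]
  linarith
end

section
/- Let (Ω, F, P) be a probability space with σ-algebras F_{m,n} and suppose ψ(G, H)-dependence between F_{−∞,m} and F_{m+k,∞} satisfies ψ(k) < 2^{1/ℓ} − 1 for some k. Then for any events A = ⋂_{i=1}^ℓ A_i and B = ⋂_{i=1}^ℓ B_i whose generating time intervals interleave with all consecutive gaps at least k, |P(A ∩ B) − P(A)P(B)| ≤ 2^{2ℓ+2} ψ(k) (2 − (1 + ψ(k))^ℓ)^{−2} P(A) P(B). -/
open MeasureTheory

set_option maxHeartbeats 1000000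

private lemma pow_aux19 (ε : ℝ) (hε : 0 ≤ ε) :
    ∀ m : ℕ, (1 + ε) ^ m - 1 ≤ m * ε * (1 + ε) ^ m := by
  intro m
  induction m with
  | zero => simp
  | succ m ih =>
    have h1 : (1 : ℝ) ≤ (1 + ε) ^ (m + 1) := one_le_pow₀ (by linarith)
    have h3 : (1 + ε) ^ (m + 1) = (1 + ε) ^ m * (1 + ε) := pow_succ _ _
    have h4 := mul_le_mul_of_nonneg_left ih (by linarith : (0 : ℝ) ≤ 1 + ε)
    push_cast
    nlinarith [mul_le_mul_of_nonneg_left h1 hε]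

private lemma nat_aux19 : ∀ ℓ : ℕ, 1 ≤ ℓ → 16 * ℓ ≤ 2 ^ (2 * ℓ + 2) := by
  intro ℓ hℓ
  induction ℓ with
  | zero => omega
  | succ n ih =>
    by_cases hn : n = 0
    · subst hn; norm_num
    · have h1 := ih (by omega)
      have h2 : 2 ^ (2 * (n + 1) + 2) = 4 * 2 ^ (2 * n + 2) := by ring
      omega

private lemma key19 {Ω : Type*} [m0 : MeasurableSpace Ω] (μ : Measure Ω)
    [IsProbabilityMeasure μ]
    (F : ℤ → ℤ → MeasurableSpace Ω)
    (hFmono : ∀ m m' n n' : ℤ, m' ≤ m → n ≤ n' → F m n ≤ F m' n')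
    (k : ℤ) (ψk : ℝ) (hψk0 : 0 ≤ ψk)
    (hmix : ∀ (m : ℤ) (A B : Set Ω),
      MeasurableSet[⨆ l : ℤ, F l m] A → MeasurableSet[⨆ r : ℤ, F (m + k) r] B →
      μ A ≠ 0 → μ B ≠ 0 →
      |(μ (A ∩ B)).toReal / ((μ A).toReal * (μ B).toReal) - 1| ≤ ψk)
    {ι : Type*} [DecidableEq ι] (C : ι → Set Ω) (u v : ι → ℤ)
    (hC : ∀ i, MeasurableSet[F (u i) (v i)] (C i))
    (hsep : ∀ i j, i ≠ j → v i + k ≤ u j ∨ v j + k ≤ u i) :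
    ∀ (n : ℕ) (s : Finset ι), s.card = n →
      |(μ (⋂ i ∈ s, C i)).toReal - ∏ i ∈ s, (μ (C i)).toReal| ≤
        ((1 + ψk) ^ (n - 1) - 1) * ∏ i ∈ s, (μ (C i)).toReal := by
  intro n
  induction n with
  | zero =>
    intro s hs
    rw [Finset.card_eq_zero] at hs
    subst hs
    simp
  | succ n ih =>
    intro s hs
    by_cases hn0 : n = 0
    · subst hn0
      obtain ⟨a, rfl⟩ := Finset.card_eq_one.mp hs
      simp
    have hne : s.Nonempty := Finset.card_pos.mp (by omega)
    obtain ⟨j, hjs, hj⟩ : ∃ j ∈ s, ∀ i ∈ s, i ≠ j → v i + k ≤ u j := by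
      obtain ⟨j₀, hj₀s, hj₀⟩ := s.exists_max_image u hne
      by_cases h : ∀ i ∈ s, i ≠ j₀ → v i + k ≤ u j₀
      · exact ⟨j₀, hj₀s, h⟩
      · push_neg at h
        obtain ⟨i, his, hij, hvi⟩ := h
        refine ⟨i, his, fun i' hi's hne' => ?_⟩
        have hnle : ¬ v i + k ≤ u i' := fun hle => absurd hvi (not_lt.mpr (hle.trans (hj₀ i' hi's)))
        exact (hsep i i' (Ne.symm hne')).resolve_left hnle
    set t := s.erase j with ht
    have hts : insert j t = s := Finset.insert_erase hjs
    have htc : t.card = n := by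
      rw [ht, Finset.card_erase_of_mem hjs, hs]
      omega
    have hsplit : (⋂ i ∈ s, C i) = C j ∩ ⋂ i ∈ t, C i := by
      rw [← hts, Finset.set_biInter_insert]
    have hprod : (∏ i ∈ s, (μ (C i)).toReal) = (μ (C j)).toReal * ∏ i ∈ t, (μ (C i)).toReal := by
      rw [← hts, Finset.prod_insert (Finset.notMem_erase j s)]
    set p := (μ (C j)).toReal with hp
    set P := ∏ i ∈ t, (μ (C i)).toReal with hPdef
    set D := ⋂ i ∈ t, C i with hD
    set d := (μ D).toReal with hd
    have hP0 : 0 ≤ P := Finset.prod_nonneg fun i _ => ENNReal.toReal_nonneg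
    have hp0 : 0 ≤ p := ENNReal.toReal_nonneg
    have ihD : |d - P| ≤ ((1 + ψk) ^ (n - 1) - 1) * P := ih t htc
    have hone : (1 : ℝ) ≤ 1 + ψk := by linarith
    have hmono : (1 + ψk) ^ (n - 1) ≤ (1 + ψk) ^ n := pow_le_pow_right₀ hone (by omega)
    have h1q : (1 : ℝ) ≤ (1 + ψk) ^ (n - 1) := one_le_pow₀ hone
    have hnn : n - 1 + 1 = n := by omega
    rw [hsplit, hprod]
    simp only [Nat.add_sub_cancel]
    by_cases hpj : μ (C j) = 0
    · have hr : μ (C j ∩ D) = 0 := measure_mono_null Set.inter_subset_left hpj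
      have hpz : p = 0 := by rw [hp, hpj]; simp
      rw [hr, hpz]
      simp
    by_cases hdj : μ D = 0
    · have hr : μ (C j ∩ D) = 0 := measure_mono_null Set.inter_subset_right hdj
      have hd0 : d = 0 := by rw [hd, hdj]; simp
      have hP' : P ≤ ((1 + ψk) ^ (n - 1) - 1) * P := by
        have h := ihD
        rw [hd0, zero_sub, abs_neg, abs_of_nonneg hP0] at h
        exact h
      rw [hr]
      simp only [ENNReal.toReal_zero, zero_sub, abs_neg,
        abs_of_nonneg (mul_nonneg hp0 hP0)]
      calc p * P ≤ p * (((1 + ψk) ^ (n - 1) - 1) * P) :=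
            mul_le_mul_of_nonneg_left hP' hp0
        _ = ((1 + ψk) ^ (n - 1) - 1) * (p * P) := by ring
        _ ≤ ((1 + ψk) ^ n - 1) * (p * P) :=
            mul_le_mul_of_nonneg_right (by linarith) (mul_nonneg hp0 hP0)
    · have hm : MeasurableSet[⨆ l : ℤ, F l (u j - k)] D := by
        refine Finset.measurableSet_biInter _ fun i hi => ?_
        have hik : v i + k ≤ u j := hj i (Finset.mem_of_mem_erase hi) (Finset.ne_of_mem_erase hi)
        exact (le_iSup (fun l => F l (u j - k)) (u i)) _
          ((hFmono _ _ _ _ le_rfl (by omega)) _ (hC i))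
      have hmB : MeasurableSet[⨆ r : ℤ, F (u j - k + k) r] (C j) := by
        have he : u j - k + k = u j := by ring
        rw [he]
        exact (le_iSup (fun r => F (u j) r) (v j)) _ (hC j)
      have hmix' := hmix (u j - k) D (C j) hm hmB hdj hpj
      have hd0 : 0 < d := ENNReal.toReal_pos hdj (measure_ne_top μ D)
      have hp0' : 0 < p := ENNReal.toReal_pos hpj (measure_ne_top μ _)
      have hdp : 0 < d * p := mul_pos hd0 hp0'
      set r := (μ (D ∩ C j)).toReal with hrdef
      have hrr : (μ (C j ∩ D)).toReal = r := by rw [Set.inter_comm]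
      have habs : |r - d * p| ≤ ψk * (d * p) := by
        have heq : r - d * p = ((μ (D ∩ C j)).toReal / (d * p) - 1) * (d * p) := by
          field_simp
          rfl
        rw [heq, abs_mul, abs_of_pos hdp]
        exact mul_le_mul_of_nonneg_right hmix' hdp.le
      have hdle : d ≤ (1 + ψk) ^ (n - 1) * P := by
        have h1 : d - P ≤ ((1 + ψk) ^ (n - 1) - 1) * P := (abs_le.mp ihD).2
        linarith
      have htri : |r - p * P| ≤ |r - d * p| + p * |d - P| := by
        have he : r - p * P = (r - d * p) + p * (d - P) := by ring
        rw [he]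
        refine (abs_add_le _ _).trans ?_
        rw [abs_mul, abs_of_nonneg hp0]
      rw [hrr]
      calc |r - p * P| ≤ ψk * (d * p) + p * (((1 + ψk) ^ (n - 1) - 1) * P) :=
            htri.trans (add_le_add habs (mul_le_mul_of_nonneg_left ihD hp0))
        _ ≤ ψk * (((1 + ψk) ^ (n - 1) * P) * p) + p * (((1 + ψk) ^ (n - 1) - 1) * P) := by
            have := mul_le_mul_of_nonneg_right hdle hp0
            nlinarith
        _ = ((1 + ψk) ^ (n - 1) * (1 + ψk) - 1) * (p * P) := by ring
        _ = ((1 + ψk) ^ n - 1) * (p * P) := by rw [← pow_succ, hnn]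

/-- if `ψ(k) < 2^{1/ℓ} − 1`, then for `A = ⋂ A_i`, `B = ⋂ B_i` whose
generating time intervals are pairwise separated by gaps of size at least `k`,
`|P(A ∩ B) − P(A)P(B)| ≤ 2^{2ℓ+2} ψ(k) (2 − (1+ψ(k))^ℓ)^{−2} P(A)P(B)`. -/
theorem stmt19 {Ω : Type*} [m0 : MeasurableSpace Ω] (μ : Measure Ω) [IsProbabilityMeasure μ]
    (F : ℤ → ℤ → MeasurableSpace Ω)
    (hFle : ∀ m n : ℤ, F m n ≤ m0)
    (hFmono : ∀ m m' n n' : ℤ, m' ≤ m → n ≤ n' → F m n ≤ F m' n')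
    (k : ℤ) (ψk : ℝ) (hψk0 : 0 ≤ ψk)
    (ℓ : ℕ) (hℓ : 1 ≤ ℓ)
    (hψksmall : ψk < (2 : ℝ) ^ ((1 : ℝ) / ℓ) - 1)
    (hmix : ∀ (m : ℤ) (A B : Set Ω),
      MeasurableSet[⨆ l : ℤ, F l m] A → MeasurableSet[⨆ r : ℤ, F (m + k) r] B →
      μ A ≠ 0 → μ B ≠ 0 →
      |(μ (A ∩ B)).toReal / ((μ A).toReal * (μ B).toReal) - 1| ≤ ψk)
    (A B : Fin ℓ → Set Ω) (s t s' t' : Fin ℓ → ℤ)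
    (hst : ∀ i, s i ≤ t i) (hst' : ∀ i, s' i ≤ t' i)
    (hA : ∀ i, MeasurableSet[F (s i) (t i)] (A i))
    (hB : ∀ i, MeasurableSet[F (s' i) (t' i)] (B i))
    (hsepAA : ∀ i j : Fin ℓ, i ≠ j → t i + k ≤ s j ∨ t j + k ≤ s i)
    (hsepAB : ∀ i j : Fin ℓ, t i + k ≤ s' j ∨ t' j + k ≤ s i)
    (hsepBB : ∀ i j : Fin ℓ, i ≠ j → t' i + k ≤ s' j ∨ t' j + k ≤ s' i) :
    |(μ ((⋂ i, A i) ∩ ⋂ i, B i)).toReal -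
        (μ (⋂ i, A i)).toReal * (μ (⋂ i, B i)).toReal| ≤
      (2 : ℝ) ^ (2 * ℓ + 2) * ψk * ((2 - (1 + ψk) ^ ℓ)⁻¹) ^ 2 *
        (μ (⋂ i, A i)).toReal * (μ (⋂ i, B i)).toReal := by
  classical
  -- abbreviations
  set a := (μ (⋂ i, A i)).toReal with hadef
  set b := (μ (⋂ i, B i)).toReal with hbdef
  set PA := ∏ i, (μ (A i)).toReal with hPAdef
  set PB := ∏ i, (μ (B i)).toReal with hPBdef
  have hone : (1 : ℝ) ≤ 1 + ψk := by linarith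
  -- (1+ψk)^ℓ < 2
  have hℓR : ((ℓ : ℝ)) ≠ 0 := by positivity
  have he2 : (1 + ψk) ^ ℓ < 2 := by
    have h1 : 1 + ψk < (2 : ℝ) ^ ((1 : ℝ) / ℓ) := by linarith
    have h2 := pow_lt_pow_left₀ h1 (by linarith : (0 : ℝ) ≤ 1 + ψk) (by omega : ℓ ≠ 0)
    have h3 : ((2 : ℝ) ^ ((1 : ℝ) / ℓ)) ^ ℓ = 2 := by
      rw [← Real.rpow_natCast ((2 : ℝ) ^ ((1 : ℝ) / ℓ)) ℓ, ← Real.rpow_mul (by norm_num)]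
      rw [one_div, inv_mul_cancel₀ hℓR, Real.rpow_one]
    rwa [h3] at h2
  -- key lemma for A family
  have hkeyA := key19 μ F hFmono k ψk hψk0 hmix A s t hA hsepAA ℓ Finset.univ (by simp)
  have hkeyB := key19 μ F hFmono k ψk hψk0 hmix B s' t' hB hsepBB ℓ Finset.univ (by simp)
  have hIA : (⋂ i ∈ Finset.univ, A i) = ⋂ i, A i := by simp
  have hIB : (⋂ i ∈ Finset.univ, B i) = ⋂ i, B i := by simp
  rw [hIA] at hkeyA
  rw [hIB] at hkeyB
  -- key lemma for combined family
  set C : Fin ℓ ⊕ Fin ℓ → Set Ω := Sum.elim A B with hCdef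
  set uu : Fin ℓ ⊕ Fin ℓ → ℤ := Sum.elim s s' with huu
  set vv : Fin ℓ ⊕ Fin ℓ → ℤ := Sum.elim t t' with hvv
  have hCmeas : ∀ i, MeasurableSet[F (uu i) (vv i)] (C i) := by
    rintro (i | i)
    · exact hA i
    · exact hB i
  have hCsep : ∀ i j, i ≠ j → vv i + k ≤ uu j ∨ vv j + k ≤ uu i := by
    rintro (i | i) (j | j) hij
    · exact hsepAA i j (by simpa using hij)
    · exact hsepAB i j
    · exact (hsepAB j i).symm
    · exact hsepBB i j (by simpa using hij)
  have hkeyAB := key19 μ F hFmono k ψk hψk0 hmix C uu vv hCmeas hCsep (ℓ + ℓ)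
    Finset.univ (by simp)
  have hICC : (⋂ i ∈ Finset.univ, C i) = (⋂ i, A i) ∩ ⋂ i, B i := by
    rw [hCdef]
    ext x
    simp [Sum.forall]
  have hPCC : (∏ i ∈ Finset.univ, (μ (C i)).toReal) = PA * PB := by
    rw [hCdef, hPAdef, hPBdef]
    simp [Fintype.prod_sum_type]
  rw [hICC, hPCC] at hkeyAB
  set μAB := (μ ((⋂ i, A i) ∩ ⋂ i, B i)).toReal with hμAB
  set q := (1 + ψk) ^ (ℓ - 1) with hq
  set Q := (1 + ψk) ^ (ℓ + ℓ - 1) with hQ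
  have hq1 : (1 : ℝ) ≤ q := one_le_pow₀ hone
  have hQ1 : (1 : ℝ) ≤ Q := one_le_pow₀ hone
  have hqe : q ≤ (1 + ψk) ^ ℓ := pow_le_pow_right₀ hone (by omega)
  have hQ4 : Q ≤ 4 := by
    have h1 : Q ≤ (1 + ψk) ^ (ℓ + ℓ) := pow_le_pow_right₀ hone (by omega)
    have h2 : (1 + ψk) ^ (ℓ + ℓ) = (1 + ψk) ^ ℓ * (1 + ψk) ^ ℓ := by rw [pow_add]
    nlinarith [one_le_pow₀ hone (n := ℓ)]
  have hq2Q : q * q ≤ Q := by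
    rw [hq, hQ, ← pow_add]
    exact pow_le_pow_right₀ hone (by omega)
  -- nonnegativity
  have hPA0 : 0 ≤ PA := Finset.prod_nonneg fun i _ => ENNReal.toReal_nonneg
  have hPB0 : 0 ≤ PB := Finset.prod_nonneg fun i _ => ENNReal.toReal_nonneg
  have ha0 : 0 ≤ a := ENNReal.toReal_nonneg
  have hb0 : 0 ≤ b := ENNReal.toReal_nonneg
  -- lower bounds on a, b
  have hd0 : (0 : ℝ) < 2 - (1 + ψk) ^ ℓ := by linarith
  have hPAa : PA ≤ (2 - (1 + ψk) ^ ℓ)⁻¹ * a := by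
    have h1 : PA - a ≤ (q - 1) * PA := by
      have := (abs_le.mp hkeyA).1
      linarith
    have h2 : (2 - (1 + ψk) ^ ℓ) * PA ≤ a := by nlinarith
    rw [← div_eq_inv_mul, le_div_iff₀ hd0]
    linarith
  have hPBb : PB ≤ (2 - (1 + ψk) ^ ℓ)⁻¹ * b := by
    have h1 : PB - b ≤ (q - 1) * PB := by
      have := (abs_le.mp hkeyB).1
      linarith
    have h2 : (2 - (1 + ψk) ^ ℓ) * PB ≤ b := by nlinarith
    rw [← div_eq_inv_mul, le_div_iff₀ hd0]
    linarith
  -- b ≤ q * PB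
  have hbq : b ≤ q * PB := by
    have := (abs_le.mp hkeyB).2
    linarith
  -- two-sided bounds
  have hA2 : |a - PA| ≤ (q - 1) * PA := hkeyA
  have hB2 : |b - PB| ≤ (q - 1) * PB := hkeyB
  have hAB2 : |μAB - PA * PB| ≤ (Q - 1) * (PA * PB) := hkeyAB
  -- step 1 : |PA*PB - a*b| ≤ (q*q - 1)*(PA*PB)
  have hstep1 : |PA * PB - a * b| ≤ (q * q - 1) * (PA * PB) := by
    have he : PA * PB - a * b = PA * (PB - b) + (PA - a) * b := by ring
    calc |PA * PB - a * b| = |PA * (PB - b) + (PA - a) * b| := by rw [he]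
      _ ≤ |PA * (PB - b)| + |(PA - a) * b| := abs_add_le _ _
      _ = PA * |PB - b| + |PA - a| * b := by
          rw [abs_mul, abs_mul, abs_of_nonneg hPA0, abs_of_nonneg hb0]
      _ ≤ PA * ((q - 1) * PB) + ((q - 1) * PA) * b := by
          rw [abs_sub_comm] at hA2
          rw [abs_sub_comm] at hB2
          exact add_le_add (mul_le_mul_of_nonneg_left hB2 hPA0)
            (mul_le_mul_of_nonneg_right hA2 hb0)
      _ ≤ (q * q - 1) * (PA * PB) := by
          have h1 : ((q - 1) * PA) * b ≤ ((q - 1) * PA) * (q * PB) :=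
            mul_le_mul_of_nonneg_left hbq (mul_nonneg (by linarith) hPA0)
          nlinarith
  -- step 2 : main triangle
  have hstep2 : |μAB - a * b| ≤ 2 * (Q - 1) * (PA * PB) := by
    calc |μAB - a * b| ≤ |μAB - PA * PB| + |PA * PB - a * b| := abs_sub_le _ _ _
      _ ≤ (Q - 1) * (PA * PB) + (q * q - 1) * (PA * PB) :=
          add_le_add hAB2 hstep1
      _ ≤ 2 * (Q - 1) * (PA * PB) := by nlinarith [mul_nonneg hPA0 hPB0]
  -- step 3 : Q - 1 ≤ (ℓ+ℓ-1) ε Q ≤ 8ℓ ε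
  have hQsub : Q - 1 ≤ (ℓ + ℓ - 1 : ℕ) * ψk * Q := pow_aux19 ψk hψk0 (ℓ + ℓ - 1)
  have hcast : ((ℓ + ℓ - 1 : ℕ) : ℝ) ≤ 2 * ℓ := by
    push_cast [Nat.cast_sub (by omega : 1 ≤ ℓ + ℓ)]
    linarith
  have hQ8 : Q - 1 ≤ 8 * ℓ * ψk := by
    have h1 : (ℓ + ℓ - 1 : ℕ) * ψk * Q ≤ (2 * ℓ) * ψk * Q := by
      have := mul_le_mul_of_nonneg_right (mul_le_mul_of_nonneg_right hcast hψk0) (by linarith : (0:ℝ) ≤ Q)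
      linarith
    have h2 : (2 * (ℓ:ℝ)) * ψk * Q ≤ (2 * ℓ) * ψk * 4 := by
      have hl0 : (0:ℝ) ≤ 2 * (ℓ:ℝ) * ψk := by positivity
      nlinarith
    linarith
  -- combine: |μAB - a*b| ≤ 16 ℓ ψk (PA*PB)
  have hmain : |μAB - a * b| ≤ 16 * ℓ * ψk * (PA * PB) := by
    have h1 : 2 * (Q - 1) * (PA * PB) ≤ 2 * (8 * ℓ * ψk) * (PA * PB) := by
      have := mul_le_mul_of_nonneg_right hQ8 (mul_nonneg hPA0 hPB0)
      nlinarith [mul_nonneg hPA0 hPB0]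
    calc |μAB - a * b| ≤ 2 * (Q - 1) * (PA * PB) := hstep2
      _ ≤ 2 * (8 * ℓ * ψk) * (PA * PB) := h1
      _ = 16 * ℓ * ψk * (PA * PB) := by ring
  -- P ≤ c² a b
  set c := (2 - (1 + ψk) ^ ℓ)⁻¹ with hc
  have hc0 : 0 ≤ c := by positivity
  have hP : PA * PB ≤ c ^ 2 * a * b := by
    have := mul_le_mul hPAa hPBb hPB0 (by positivity)
    nlinarith
  -- 16 ℓ ≤ 2^(2ℓ+2)
  have h16 : (16 : ℝ) * ℓ ≤ 2 ^ (2 * ℓ + 2) := by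
    have := nat_aux19 ℓ hℓ
    calc (16 : ℝ) * ℓ = ((16 * ℓ : ℕ) : ℝ) := by push_cast; ring
      _ ≤ ((2 ^ (2 * ℓ + 2) : ℕ) : ℝ) := Nat.cast_le.mpr this
      _ = 2 ^ (2 * ℓ + 2) := by push_cast; ring
  calc |μAB - a * b| ≤ 16 * ℓ * ψk * (PA * PB) := hmain
    _ ≤ 16 * ℓ * ψk * (c ^ 2 * a * b) := by
        refine mul_le_mul_of_nonneg_left hP ?_
        positivity
    _ ≤ 2 ^ (2 * ℓ + 2) * ψk * (c ^ 2 * a * b) := by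
        have h0 : 0 ≤ ψk * (c ^ 2 * a * b) := by positivity
        nlinarith
    _ = 2 ^ (2 * ℓ + 2) * ψk * c ^ 2 * a * b := by ring
end
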